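/- arXiv:1203.1678 — 2 statements merged into one kernel-verified Lean document; each statement's English description precedes it below -/
import Mathlib

section
/- Let (X,S) be an association scheme whose thin residue T = O^θ(S) is the elementary abelian group C_p × C_p (p prime) and such that S//T is cyclic of prime order q. Then the following are equivalent: (i) (X,S) is commutative (the adjacency algebra ℂS is commutative); (ii) for each nonprincipal irreducible character φ of T, the support of the induced module ℂe_φ ⊗_{ℂT} ℂS is {1_X^T}; (iii) |TsT| = 1 for every s ∈ S \ T. -/
set_option linter.unusedSectionVars false
set_option linter.unusedVariables false


open scoped Classical

/-- The diagonal relation `1_X`. -/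
def diagRel (X : Type*) : Set (X × X) := {p | p.1 = p.2}

/-- The converse relation `s*`. -/
def conv {X : Type*} (s : Set (X × X)) : Set (X × X) := {p | (p.2, p.1) ∈ s}

/-- The intersection number `c_{st}^u`, well-defined for association schemes. -/
noncomputable def inum {X : Type*} (s t u : Set (X × X)) : ℕ :=
  sSup {n | ∃ p ∈ u, n = Nat.card {z : X | (p.1, z) ∈ s ∧ (z, p.2) ∈ t}}

/-- `(X, S)` is an association scheme. -/
def IsScheme {X : Type*} (S : Set (Set (X × X))) : Prop :=
  (∀ x y : X, ∃! s, s ∈ S ∧ (x, y) ∈ s) ∧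
  (∀ s ∈ S, s.Nonempty) ∧
  diagRel X ∈ S ∧
  (∀ s ∈ S, conv s ∈ S) ∧
  (∀ s ∈ S, ∀ t ∈ S, ∀ u ∈ S, ∀ p ∈ u, ∀ q ∈ u,
    Nat.card {z : X | (p.1, z) ∈ s ∧ (z, p.2) ∈ t} =
      Nat.card {z : X | (q.1, z) ∈ s ∧ (z, q.2) ∈ t})

/-- The complex product `PQ` of subsets of `S`. -/
noncomputable def cprod {X : Type*} (S P Q : Set (Set (X × X))) : Set (Set (X × X)) :=
  {u ∈ S | ∃ p ∈ P, ∃ q ∈ Q, inum p q u ≠ 0}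

/-- The valency `n_s`. -/
noncomputable def nval {X : Type*} (s : Set (X × X)) : ℕ :=
  sSup {n | ∃ x : X, n = Nat.card {y : X | (x, y) ∈ s}}

/-- `T` is a closed subset of `S`. -/
def IsClosedSub {X : Type*} (S T : Set (Set (X × X))) : Prop :=
  T.Nonempty ∧ T ⊆ S ∧ cprod S T T ⊆ T

/-- `T` is strongly normal in `S`. -/
def IsStronglyNormal {X : Type*} (S T : Set (Set (X × X))) : Prop :=
  IsClosedSub S T ∧ ∀ s ∈ S, cprod S (cprod S {conv s} T) {s} ⊆ T

/-- The thin radical `O_θ(S)`. -/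
noncomputable def thinRadical {X : Type*} (S : Set (Set (X × X))) : Set (Set (X × X)) :=
  {s ∈ S | nval s = 1}

/-- The thin residue `O^θ(S)`. -/
noncomputable def thinResidue {X : Type*} (S : Set (Set (X × X))) : Set (Set (X × X)) :=
  ⋂₀ {T | IsStronglyNormal S T}

/-- `T` is thin: all valencies `1`. -/
def IsThin {X : Type*} (T : Set (Set (X × X))) : Prop := ∀ t ∈ T, nval t = 1

/-- The left stabilizer `L(s) = {t ∈ T | ts = {s}}`. -/
noncomputable def lstab {X : Type*} (S T : Set (Set (X × X))) (s : Set (X × X)) :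
    Set (Set (X × X)) := {t ∈ T | cprod S {t} {s} = {s}}

/-- `e` is an isomorphism from `C_p × C_p` onto the thin closed subset `T`
(with the relational product as group operation). -/
def IsoElemAb {X : Type*} (S T : Set (Set (X × X))) (p : ℕ)
    (e : ZMod p × ZMod p → Set (X × X)) : Prop :=
  (∀ a, e a ∈ T) ∧ Function.Injective e ∧ (∀ t ∈ T, ∃ a, e a = t) ∧
  e 0 = diagRel X ∧ ∀ a b, cprod S {e a} {e b} = {e (a + b)}

/-- The coset `xT`. -/
def coset {X : Type*} (T : Set (Set (X × X))) (x : X) : Set X := {y | ∃ t ∈ T, (x, y) ∈ t}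

/-- The point set `X/T`. -/
def pts {X : Type*} (T : Set (Set (X × X))) : Set (Set X) := {C | ∃ x, C = coset T x}

/-- `L_{ij}` for the cosets of `x` and `y`: the left stabilizer of any relation containing
`(x, y)`. -/
noncomputable def pairStab {X : Type*} (S T : Set (Set (X × X))) (x y : X) :
    Set (Set (X × X)) :=
  {t ∈ T | ∀ s ∈ S, (x, y) ∈ s → cprod S {t} {s} = {s}}

/-- The line `L_i(M)` through the coset of `x` determined by the subgroup `M < T`. -/
noncomputable def lineOf {X : Type*} (S T : Set (Set (X × X))) (x : X)
    (M : Set (Set (X × X))) : Set (Set X) :=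
  insert (coset T x) {C | ∃ y, C = coset T y ∧ coset T y ≠ coset T x ∧ pairStab S T x y = M}

/-- The set of lines of the incidence structure on `X/T`. -/
noncomputable def linesOf {X : Type*} (S T : Set (Set (X × X))) : Set (Set (Set X)) :=
  {ℓ | ∃ x M, IsClosedSub S M ∧ M ⊆ T ∧ M ≠ {diagRel X} ∧ M ≠ T ∧
    ℓ = lineOf S T x M ∧ 2 ≤ Nat.card ℓ}

/-- The adjacency matrix `σ_s`. -/
noncomputable def adjMat {X : Type*} [Fintype X] (s : Set (X × X)) : Matrix X X ℂ :=
  fun x y => if (x, y) ∈ s then 1 else 0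

/-- The central primitive idempotent `e_φ` of `ℂT ≅ ℂ[C_p × C_p]` corresponding to the
irreducible character `φ`, transported by the isomorphism `e`. -/
noncomputable def eIdem {X : Type*} [Fintype X] (p : ℕ) [NeZero p]
    (φ : AddChar (ZMod p × ZMod p) ℂ) (e : ZMod p × ZMod p → Set (X × X)) : Matrix X X ℂ :=
  ((p : ℂ) ^ 2)⁻¹ • ∑ a : ZMod p × ZMod p, φ (-a) • adjMat (e a)



namespace AS

variable {X : Type*} [Fintype X]

/-- relation composition -/
def comp (A B : Set (X × X)) : Set (X × X) := {p | ∃ z, (p.1, z) ∈ A ∧ (z, p.2) ∈ B}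

lemma mem_comp {A B : Set (X × X)} {x y : X} :
    (x, y) ∈ comp A B ↔ ∃ z, (x, z) ∈ A ∧ (z, y) ∈ B := Iff.rfl

lemma comp_assoc (A B C : Set (X × X)) : comp (comp A B) C = comp A (comp B C) := by
  ext ⟨x, y⟩
  constructor
  · rintro ⟨z, ⟨w, hw1, hw2⟩, hz⟩; exact ⟨w, hw1, z, hw2, hz⟩
  · rintro ⟨w, hw, z, hz1, hz2⟩; exact ⟨z, ⟨w, hw, hz1⟩, hz2⟩

lemma comp_mono {A A' B B' : Set (X × X)} (h1 : A ⊆ A') (h2 : B ⊆ B') :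
    comp A B ⊆ comp A' B' := by
  rintro ⟨x, y⟩ ⟨z, hz1, hz2⟩; exact ⟨z, h1 hz1, h2 hz2⟩

@[simp] lemma comp_diag_left (A : Set (X × X)) : comp (diagRel X) A = A := by
  ext ⟨x, y⟩
  constructor
  · rintro ⟨z, hz1, hz2⟩; cases hz1; exact hz2
  · intro h; exact ⟨x, rfl, h⟩

@[simp] lemma comp_diag_right (A : Set (X × X)) : comp A (diagRel X) = A := by
  ext ⟨x, y⟩
  constructor
  · rintro ⟨z, hz1, hz2⟩; cases hz2; exact hz1
  · intro h; exact ⟨y, h, rfl⟩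

@[simp] lemma mem_conv {A : Set (X × X)} {x y : X} : (x, y) ∈ conv A ↔ (y, x) ∈ A := Iff.rfl

@[simp] lemma conv_conv (A : Set (X × X)) : conv (conv A) = A := rfl

@[simp] lemma conv_diag : conv (diagRel X) = diagRel X := by
  ext ⟨x, y⟩; exact ⟨fun h => h.symm, fun h => h.symm⟩

lemma conv_comp (A B : Set (X × X)) : conv (comp A B) = comp (conv B) (conv A) := by
  ext ⟨x, y⟩
  constructor
  · rintro ⟨z, hz1, hz2⟩; exact ⟨z, hz2, hz1⟩
  · rintro ⟨z, hz1, hz2⟩; exact ⟨z, hz2, hz1⟩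

lemma conv_nonempty {A : Set (X × X)} (h : A.Nonempty) : (conv A).Nonempty := by
  obtain ⟨⟨x, y⟩, hxy⟩ := h; exact ⟨(y, x), hxy⟩

/-- the path count -/
noncomputable def cnt (s t : Set (X × X)) (x y : X) : ℕ :=
  Nat.card {z : X | (x, z) ∈ s ∧ (z, y) ∈ t}

lemma cnt_ne_zero_iff {s t : Set (X × X)} {x y : X} :
    cnt s t x y ≠ 0 ↔ (x, y) ∈ comp s t := by
  unfold cnt
  rw [Nat.card_ne_zero]
  constructor
  · rintro ⟨⟨z, hz⟩, -⟩; exact ⟨z, hz⟩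
  · rintro ⟨z, hz⟩; exact ⟨⟨⟨z, hz⟩⟩, Set.toFinite _⟩

section scheme

variable {S : Set (Set (X × X))} (hS : IsScheme S)
include hS

lemma cnt_const {s t u : Set (X × X)} (hs : s ∈ S) (ht : t ∈ S) (hu : u ∈ S)
    {x y x' y' : X} (h : (x, y) ∈ u) (h' : (x', y') ∈ u) :
    cnt s t x y = cnt s t x' y' :=
  hS.2.2.2.2 s hs t ht u hu (x, y) h (x', y') h'

/-- the unique relation containing a pair -/
noncomputable def relOf (x y : X) : Set (X × X) := (hS.1 x y).exists.choose

lemma relOf_mem {x y : X} : relOf hS x y ∈ S := (hS.1 x y).exists.choose_spec.1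

lemma mem_relOf {x y : X} : (x, y) ∈ relOf hS x y := (hS.1 x y).exists.choose_spec.2

lemma eq_relOf {s : Set (X × X)} (hs : s ∈ S) {x y : X} (h : (x, y) ∈ s) :
    s = relOf hS x y := by
  obtain ⟨u, hu, huniq⟩ := hS.1 x y
  rw [huniq s ⟨hs, h⟩, huniq (relOf hS x y) ⟨relOf_mem hS, mem_relOf hS⟩]

lemma rel_eq_of_mem {s u : Set (X × X)} (hs : s ∈ S) (hu : u ∈ S) {x y : X}
    (h1 : (x, y) ∈ s) (h2 : (x, y) ∈ u) : s = u := by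
  rw [eq_relOf hS hs h1, eq_relOf hS hu h2]

lemma relOf_diag {x : X} : relOf hS x x = diagRel X :=
  (eq_relOf hS hS.2.2.1 (show (x,x) ∈ diagRel X from rfl)).symm

lemma inum_eq_cnt {s t u : Set (X × X)} (hs : s ∈ S) (ht : t ∈ S) (hu : u ∈ S)
    {x y : X} (h : (x, y) ∈ u) : inum s t u = cnt s t x y := by
  have : {n | ∃ p ∈ u, n = Nat.card {z : X | (p.1, z) ∈ s ∧ (z, p.2) ∈ t}} = {cnt s t x y} := by
    ext n
    simp only [Set.mem_setOf_eq, Set.mem_singleton_iff]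
    constructor
    · rintro ⟨⟨a, b⟩, hab, rfl⟩
      exact (cnt_const hS hs ht hu hab h)
    · rintro rfl; exact ⟨(x, y), h, (cnt_const hS hs ht hu h h).symm⟩
  rw [inum, this, csSup_singleton]

/-- key transfer: if `u` meets `comp s t` then `u ⊆ comp s t`. -/
lemma subset_comp_of_meets {s t u : Set (X × X)} (hs : s ∈ S) (ht : t ∈ S) (hu : u ∈ S)
    {x y : X} (hxyu : (x, y) ∈ u) (hxy : (x, y) ∈ comp s t) : u ⊆ comp s t := by
  rintro ⟨a, b⟩ hab
  rw [← cnt_ne_zero_iff]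
  rw [← cnt_ne_zero_iff] at hxy
  rwa [cnt_const hS hs ht hu hab hxyu]

lemma mem_cprod_iff {A B : Set (Set (X × X))} (hA : A ⊆ S) (hB : B ⊆ S)
    {u : Set (X × X)} :
    u ∈ cprod S A B ↔ u ∈ S ∧ u ⊆ comp (⋃₀ A) (⋃₀ B) := by
  constructor
  · rintro ⟨huS, p, hp, q, hq, hne⟩
    refine ⟨huS, ?_⟩
    obtain ⟨⟨x, y⟩, hxyu⟩ := hS.2.1 u huS
    have h1 : inum p q u = cnt p q x y := inum_eq_cnt hS (hA hp) (hB hq) huS hxyu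
    rw [h1, cnt_ne_zero_iff] at hne
    exact fun ab hab =>
      comp_mono (Set.subset_sUnion_of_mem hp) (Set.subset_sUnion_of_mem hq)
        (subset_comp_of_meets hS (hA hp) (hB hq) huS hxyu hne hab)
  · rintro ⟨huS, hsub⟩
    obtain ⟨⟨x, y⟩, hxyu⟩ := hS.2.1 u huS
    obtain ⟨z, ⟨p, hp, hxz⟩, ⟨q, hq, hzy⟩⟩ := hsub hxyu
    refine ⟨huS, p, hp, q, hq, ?_⟩
    rw [inum_eq_cnt hS (hA hp) (hB hq) huS hxyu, cnt_ne_zero_iff]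
    exact ⟨z, hxz, hzy⟩

lemma relOf_mem_cprod {A B : Set (Set (X × X))} (hA : A ⊆ S) (hB : B ⊆ S)
    {p q : Set (X × X)} (hp : p ∈ A) (hq : q ∈ B) {x y : X} (h : (x, y) ∈ comp p q) :
    relOf hS x y ∈ cprod S A B := by
  obtain ⟨z, hz1, hz2⟩ := h
  exact ⟨relOf_mem hS, p, hp, q, hq, by
    rw [inum_eq_cnt hS (hA hp) (hB hq) (relOf_mem hS) (mem_relOf hS), cnt_ne_zero_iff]
    exact ⟨z, hz1, hz2⟩⟩

lemma sUnion_cprod {A B : Set (Set (X × X))} (hA : A ⊆ S) (hB : B ⊆ S) :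
    ⋃₀ cprod S A B = comp (⋃₀ A) (⋃₀ B) := by
  apply subset_antisymm
  · rintro ⟨x, y⟩ ⟨u, hu, hxy⟩
    exact ((mem_cprod_iff hS hA hB).1 hu).2 hxy
  · rintro ⟨x, y⟩ ⟨z, ⟨p, hp, hxz⟩, ⟨q, hq, hzy⟩⟩
    exact ⟨relOf hS x y, relOf_mem_cprod hS hA hB hp hq ⟨z, hxz, hzy⟩, mem_relOf hS⟩

omit hS in
lemma cprod_subset {A B : Set (Set (X × X))} : cprod S A B ⊆ S := fun _ h => h.1

omit hS in
lemma cprod_mono {A A' B B' : Set (Set (X × X))} (h1 : A ⊆ A') (h2 : B ⊆ B') :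
    cprod S A B ⊆ cprod S A' B' := by
  rintro u ⟨huS, p, hp, q, hq, h⟩
  exact ⟨huS, p, h1 hp, q, h2 hq, h⟩

omit hS in
lemma exists_of_nonempty_inter {u : Set (X × X)} {W : Set (Set (X × X))}
    (h : u ⊆ ⋃₀ W) (hne : u.Nonempty) : ∃ w ∈ W, (u ∩ w).Nonempty := by
  obtain ⟨a, ha⟩ := hne
  obtain ⟨w, hw, haw⟩ := h ha
  exact ⟨w, hw, a, ha, haw⟩

/-- a relation contained in the union of a set of relations equals one of them -/
lemma eq_of_subset_sUnion {u : Set (X × X)} (hu : u ∈ S) {W : Set (Set (X × X))}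
    (hW : W ⊆ S) (h : u ⊆ ⋃₀ W) : u ∈ W := by
  obtain ⟨⟨x, y⟩, hxy⟩ := hS.2.1 u hu
  obtain ⟨w, hw, hxyw⟩ := h hxy
  rwa [rel_eq_of_mem hS hu (hW hw) hxy hxyw]

/-- existence of successors -/
lemma exists_succ {s : Set (X × X)} (hs : s ∈ S) (x : X) : ∃ y, (x, y) ∈ s := by
  obtain ⟨⟨a, b⟩, hab⟩ := hS.2.1 s hs
  have h1 : (a, a) ∈ comp s (conv s) := ⟨b, hab, hab⟩
  have h2 : (x, x) ∈ comp s (conv s) := by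
    refine subset_comp_of_meets hS hs (hS.2.2.2.1 s hs) hS.2.2.1 ?_ h1 ?_
    · exact rfl
    · exact rfl
  obtain ⟨z, hz, -⟩ := h2
  exact ⟨z, hz⟩

omit hS in
lemma ssub {x : Set (X × X)} (h : x ∈ S) : ({x} : Set (Set (X × X))) ⊆ S :=
  Set.singleton_subset_iff.2 h

lemma exists_pred {s : Set (X × X)} (hs : s ∈ S) (y : X) : ∃ x, (x, y) ∈ s := by
  obtain ⟨z, hz⟩ := exists_succ hS (hS.2.2.2.1 s hs) y
  exact ⟨z, hz⟩

end scheme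

end AS

section scheme2
namespace AS
variable {X : Type*} [Fintype X] {S : Set (Set (X × X))} (hS : IsScheme S)
include hS

/-- iterated-successor sequence for a relation -/
noncomputable def tseq {t : Set (X × X)} (ht : t ∈ S) (x0 : X) : ℕ → X
  | 0 => x0
  | n + 1 => (exists_succ hS ht (tseq ht x0 n)).choose

lemma tseq_succ {t : Set (X × X)} (ht : t ∈ S) (x0 : X) (n : ℕ) :
    (tseq hS ht x0 n, tseq hS ht x0 (n + 1)) ∈ t :=
  (exists_succ hS ht (tseq hS ht x0 n)).choose_spec

lemma closed_chain {V : Set (Set (X × X))} (hV : IsClosedSub S V)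
    {t : Set (X × X)} (ht : t ∈ V) (x0 : X) :
    ∀ k, 1 ≤ k → ∀ i, relOf hS (tseq hS (hV.2.1 ht) x0 i) (tseq hS (hV.2.1 ht) x0 (i + k)) ∈ V := by
  intro k
  induction k with
  | zero => omega
  | succ k ih =>
    intro _ i
    rcases Nat.eq_zero_or_pos k with h1 | h1
    · subst h1
      rw [← eq_relOf hS (hV.2.1 ht) (tseq_succ hS (hV.2.1 ht) x0 i)]
      exact ht
    · have hw := ih h1 i
      have hcomp : (tseq hS (hV.2.1 ht) x0 i, tseq hS (hV.2.1 ht) x0 (i + (k+1))) ∈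
          comp (relOf hS (tseq hS (hV.2.1 ht) x0 i) (tseq hS (hV.2.1 ht) x0 (i + k))) t := by
        refine ⟨tseq hS (hV.2.1 ht) x0 (i + k), mem_relOf hS, ?_⟩
        exact tseq_succ hS (hV.2.1 ht) x0 (i + k)
      have := relOf_mem_cprod hS hV.2.1 hV.2.1 hw ht hcomp
      exact hV.2.2 this

lemma exists_rep {V : Set (Set (X × X))} (hV : IsClosedSub S V)
    {t : Set (X × X)} (ht : t ∈ V) (a : X) :
    ∃ i j : ℕ, i < j ∧ tseq hS (hV.2.1 ht) a i = tseq hS (hV.2.1 ht) a j := by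
  obtain ⟨i, j, hne, hij⟩ := Finite.exists_ne_map_eq_of_infinite (tseq hS (hV.2.1 ht) a)
  rcases Nat.lt_or_ge i j with h | h
  · exact ⟨i, j, h, hij⟩
  · exact ⟨j, i, by omega, hij.symm⟩

lemma diag_mem_closed {V : Set (Set (X × X))} (hV : IsClosedSub S V) : diagRel X ∈ V := by
  obtain ⟨t, ht⟩ := hV.1
  obtain ⟨⟨a, b⟩, hab⟩ := hS.2.1 t (hV.2.1 ht)
  obtain ⟨i, j, hlt, hij⟩ := exists_rep hS hV ht a
  have hk := closed_chain hS hV ht a (j - i) (by omega) i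
  rw [show i + (j - i) = j by omega, ← hij, relOf_diag hS] at hk
  exact hk

lemma conv_mem_closed {V : Set (Set (X × X))} (hV : IsClosedSub S V)
    {t : Set (X × X)} (ht : t ∈ V) : conv t ∈ V := by
  obtain ⟨⟨a, b⟩, hab⟩ := hS.2.1 t (hV.2.1 ht)
  obtain ⟨i, j, hlt, hij⟩ := exists_rep hS hV ht a
  rcases Nat.eq_or_lt_of_le hlt with h1 | h1
  · have h2 : tseq hS (hV.2.1 ht) a (i+1) = tseq hS (hV.2.1 ht) a i := by
      rw [show i+1 = j from h1, ← hij]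
    have hd : (tseq hS (hV.2.1 ht) a i, tseq hS (hV.2.1 ht) a i) ∈ t := by
      have := tseq_succ hS (hV.2.1 ht) a i
      rwa [h2] at this
    have heq : t = diagRel X := by
      rw [eq_relOf hS (hV.2.1 ht) hd, relOf_diag hS]
    rw [heq, conv_diag]
    rwa [heq] at ht
  · have hw := closed_chain hS hV ht a (j - (i+1)) (by omega) (i + 1)
    rw [show i + 1 + (j - (i+1)) = j by omega] at hw
    have hmem : (tseq hS (hV.2.1 ht) a (i+1), tseq hS (hV.2.1 ht) a j) ∈ conv t := by
      show (tseq hS (hV.2.1 ht) a j, tseq hS (hV.2.1 ht) a (i+1)) ∈ t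
      rw [← hij]
      exact tseq_succ hS (hV.2.1 ht) a i
    rwa [← eq_relOf hS (hS.2.2.2.1 t (hV.2.1 ht)) hmem] at hw

lemma scheme_SN_self : IsStronglyNormal S S :=
  ⟨⟨⟨diagRel X, hS.2.2.1⟩, le_refl _, cprod_subset⟩, fun _ _ => cprod_subset⟩

lemma thinResidue_sub : thinResidue S ⊆ S := fun u hu =>
  Set.mem_sInter.1 hu S (scheme_SN_self hS)

lemma thinResidue_SN : IsStronglyNormal S (thinResidue S) := by
  constructor
  · refine ⟨⟨diagRel X, Set.mem_sInter.2 fun V hV => diag_mem_closed hS hV.1⟩,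
      thinResidue_sub hS, ?_⟩
    intro u hu
    refine Set.mem_sInter.2 fun V hV => ?_
    exact hV.1.2.2 (cprod_mono (fun w hw => Set.mem_sInter.1 hw V hV)
      (fun w hw => Set.mem_sInter.1 hw V hV) hu)
  · intro s hs u hu
    refine Set.mem_sInter.2 fun V hV => ?_
    exact hV.2 s hs (cprod_mono (cprod_mono (le_refl _)
      (fun w hw => Set.mem_sInter.1 hw V hV)) (le_refl _) hu)

end AS
end scheme2

section Tfacts
namespace AS
variable {X : Type*} [Fintype X] {S T : Set (Set (X × X))} {p : ℕ} [NeZero p]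
  {e : ZMod p × ZMod p → Set (X × X)}
  (hS : IsScheme S) (hT : thinResidue S = T) (he : IsoElemAb S T p e)
include hS hT

lemma T_SN : IsStronglyNormal S T := hT ▸ thinResidue_SN hS

lemma T_closed : IsClosedSub S T := (T_SN hS hT).1

lemma T_sub : T ⊆ S := (T_closed hS hT).2.1

lemma diag_mem_T : diagRel X ∈ T := diag_mem_closed hS (T_closed hS hT)

lemma conv_mem_T {t : Set (X × X)} (ht : t ∈ T) : conv t ∈ T :=
  conv_mem_closed hS (T_closed hS hT) ht

/-- the union of all relations in T -/

lemma UT_comp : comp (⋃₀ T) (⋃₀ T) = (⋃₀ T : Set (X × X)) := by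
  apply subset_antisymm
  · rintro ⟨x, y⟩ ⟨z, ⟨t1, ht1, hxz⟩, ⟨t2, ht2, hzy⟩⟩
    exact ⟨relOf hS x y,
      (T_closed hS hT).2.2 (relOf_mem_cprod hS (T_sub hS hT) (T_sub hS hT) ht1 ht2 ⟨z, hxz, hzy⟩),
      mem_relOf hS⟩
  · rintro ⟨x, y⟩ hxy
    exact ⟨x, ⟨diagRel X, diag_mem_T hS hT, rfl⟩, hxy⟩

lemma diag_sub_UT : diagRel X ⊆ (⋃₀ T : Set (X × X)) :=
  Set.subset_sUnion_of_mem (diag_mem_T hS hT)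

lemma conv_UT : conv (⋃₀ T) = (⋃₀ T : Set (X × X)) := by
  ext ⟨x, y⟩
  constructor
  · rintro ⟨t, ht, hxy⟩
    exact ⟨conv t, conv_mem_T hS hT ht, hxy⟩
  · rintro ⟨t, ht, hxy⟩
    exact ⟨conv t, conv_mem_T hS hT ht, hxy⟩

lemma mem_T_of_sub_UT {u : Set (X × X)} (hu : u ∈ S) (h : u ⊆ ⋃₀ T) : u ∈ T :=
  eq_of_subset_sUnion hS hu (T_sub hS hT) h

lemma cprod_conv_self_sub_T {s : Set (X × X)} (hs : s ∈ S) :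
    cprod S {conv s} {s} ⊆ T := by
  have h1 : conv s ∈ cprod S {conv s} T := by
    rw [mem_cprod_iff hS (ssub (hS.2.2.2.1 s hs)) (T_sub hS hT)]
    refine ⟨hS.2.2.2.1 s hs, ?_⟩
    rintro ⟨x, y⟩ hxy
    rw [Set.sUnion_singleton]
    exact ⟨y, hxy, diag_sub_UT hS hT rfl⟩
  intro u hu
  exact (T_SN hS hT).2 s hs (cprod_mono (by simpa using h1) (le_refl _) hu)

lemma comp_conv_self_sub_UT {s : Set (X × X)} (hs : s ∈ S) :
    comp (conv s) s ⊆ (⋃₀ T : Set (X × X)) := by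
  rintro ⟨x, y⟩ hxy
  exact ⟨relOf hS x y, cprod_conv_self_sub_T hS hT hs
    (relOf_mem_cprod hS (ssub (hS.2.2.2.1 s hs)) (ssub hs) rfl rfl hxy),
    mem_relOf hS⟩

lemma comp_self_conv_sub_UT {s : Set (X × X)} (hs : s ∈ S) :
    comp s (conv s) ⊆ (⋃₀ T : Set (X × X)) := by
  have := comp_conv_self_sub_UT hS hT (hS.2.2.2.1 s hs)
  rwa [conv_conv] at this

lemma comp_UT_sub {s : Set (X × X)} (hs : s ∈ S) :
    comp (⋃₀ T) s ⊆ comp s (⋃₀ T) := by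
  rintro ⟨x, y⟩ ⟨z, hxz, hzy⟩
  obtain ⟨w, hw⟩ := exists_succ hS hs x
  refine ⟨w, hw, ?_⟩
  -- (w, y) ∈ conv s ∘ UT ∘ s ⊆ UT by strong normality
  obtain ⟨t1, ht1, hxz'⟩ := hxz
  have h1 : (w, z) ∈ comp (conv s) t1 := ⟨x, hw, hxz'⟩
  have hp : relOf hS w z ∈ cprod S {conv s} T :=
    relOf_mem_cprod hS (ssub (hS.2.2.2.1 s hs)) (T_sub hS hT) rfl ht1 h1
  have h2 : (w, y) ∈ comp (relOf hS w z) s := ⟨z, mem_relOf hS, hzy⟩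
  have h3 : relOf hS w y ∈ cprod S (cprod S {conv s} T) {s} :=
    relOf_mem_cprod hS cprod_subset (ssub hs) hp rfl h2
  exact ⟨relOf hS w y, (T_SN hS hT).2 s hs h3, mem_relOf hS⟩

lemma comp_UT_sub' {s : Set (X × X)} (hs : s ∈ S) :
    comp s (⋃₀ T) ⊆ comp (⋃₀ T) s := by
  rintro ⟨x, y⟩ ⟨z, hxz, hzy⟩
  obtain ⟨t, ht, hzy'⟩ := hzy
  have h1 : ((y, x) : X × X) ∈ comp (⋃₀ T) (conv s) :=
    ⟨z, ⟨conv t, conv_mem_T hS hT ht, hzy'⟩, hxz⟩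
  obtain ⟨m, hym, hmx⟩ := comp_UT_sub hS hT (hS.2.2.2.1 s hs) h1
  obtain ⟨t2, ht2, hmx'⟩ := hmx
  exact ⟨m, ⟨conv t2, conv_mem_T hS hT ht2, hmx'⟩, hym⟩

section ethin
include he

lemma e_mem_T (a : ZMod p × ZMod p) : e a ∈ T := he.1 a

lemma e_mem_S (a : ZMod p × ZMod p) : e a ∈ S := T_sub hS hT (he.1 a)

lemma comp_e (a b : ZMod p × ZMod p) : comp (e a) (e b) = e (a + b) := by
  have h := sUnion_cprod hS (ssub (e_mem_S hS hT he a))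
    (ssub (e_mem_S hS hT he b))
  rw [he.2.2.2.2 a b] at h
  simpa using h.symm

lemma conv_e (a : ZMod p × ZMod p) : conv (e a) = e (-a) := by
  have hsub : conv (e a) ⊆ e (-a) := by
    rintro ⟨y, x⟩ hxy
    obtain ⟨z, hz⟩ := exists_succ hS (e_mem_S hS hT he (-a)) y
    have : (x, z) ∈ comp (e a) (e (-a)) := ⟨y, hxy, hz⟩
    rw [comp_e hS hT he, add_neg_cancel, he.2.2.2.1] at this
    cases this
    exact hz
  obtain ⟨⟨x, y⟩, hxy⟩ := hS.2.1 (e a) (e_mem_S hS hT he a)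
  exact rel_eq_of_mem hS (hS.2.2.2.1 _ (e_mem_S hS hT he a)) (e_mem_S hS hT he (-a))
    (show ((y, x) : X × X) ∈ conv (e a) from hxy) (hsub (show ((y,x) : X × X) ∈ conv (e a) from hxy))

lemma e_succ_unique {a : ZMod p × ZMod p} {x y y' : X}
    (h1 : (x, y) ∈ e a) (h2 : (x, y') ∈ e a) : y = y' := by
  have hyx : (y, x) ∈ e (-a) := by rw [← conv_e hS hT he]; exact h1
  have : (y, y') ∈ comp (e (-a)) (e a) := ⟨x, hyx, h2⟩
  rw [comp_e hS hT he, neg_add_cancel, he.2.2.2.1] at this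
  exact this

lemma e_pred_unique {a : ZMod p × ZMod p} {x x' y : X}
    (h1 : (x, y) ∈ e a) (h2 : (x', y) ∈ e a) : x = x' := by
  have h1' : (y, x) ∈ e (-a) := by rw [← conv_e hS hT he]; exact h1
  have h2' : (y, x') ∈ e (-a) := by rw [← conv_e hS hT he]; exact h2
  exact e_succ_unique hS hT he h1' h2'

lemma comp_e_left_mem {s : Set (X × X)} (hs : s ∈ S) (a : ZMod p × ZMod p) :
    comp (e a) s ∈ S ∧ cprod S {e a} {s} = {comp (e a) s} := by
  -- some element of the cprod
  obtain ⟨⟨z, y⟩, hzy⟩ := hS.2.1 s hs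
  obtain ⟨x, hx⟩ := exists_pred hS (e_mem_S hS hT he a) z
  have hne : ((x, y) : X × X) ∈ comp (e a) s := ⟨z, hx, hzy⟩
  have hu' : ∀ u ∈ cprod S {e a} {s}, u = comp (e a) s := by
    intro u hu
    have husub : u ⊆ comp (e a) s := by
      have := (mem_cprod_iff hS (ssub (e_mem_S hS hT he a)) (ssub hs)).1 hu
      simpa using this.2
    apply subset_antisymm husub
    -- comp (e a) s ⊆ u via constancy
    obtain ⟨⟨x', y'⟩, hx'y'⟩ := hS.2.1 u hu.1
    obtain ⟨z', hz'1, hz'2⟩ := husub hx'y'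
    rintro ⟨x1, y1⟩ ⟨z1, hz1, hz1'⟩
    -- cnt (e (-a)) u on pairs of s
    have hc1 : ((z', y') : X × X) ∈ comp (e (-a)) u :=
      ⟨x', by rw [← conv_e hS hT he]; exact hz'1, hx'y'⟩
    have hc2 : ((z1, y1) : X × X) ∈ comp (e (-a)) u :=
      subset_comp_of_meets hS (e_mem_S hS hT he (-a)) hu.1 hs hz'2 hc1 hz1'
    obtain ⟨w, hw1, hw2⟩ := hc2
    have hwz : (w, z1) ∈ e a := by
      have h := conv_e hS hT he (-a)
      rw [neg_neg] at h
      rw [← h]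
      exact hw1
    have : x1 = w := e_pred_unique hS hT he hz1 hwz
    rwa [this]
  have hmem : relOf hS x y ∈ cprod S {e a} {s} :=
    relOf_mem_cprod hS (ssub (e_mem_S hS hT he a)) (ssub hs) rfl rfl hne
  have heq := hu' _ hmem
  constructor
  · rw [← heq]; exact relOf_mem hS
  · apply subset_antisymm
    · intro u hu; exact hu' u hu
    · intro u hu
      cases hu
      rwa [heq] at hmem

lemma comp_e_right_mem {s : Set (X × X)} (hs : s ∈ S) (a : ZMod p × ZMod p) :
    comp s (e a) ∈ S ∧ cprod S {s} {e a} = {comp s (e a)} := by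
  have h1 : comp s (e a) ∈ S := by
    have h2 := (comp_e_left_mem hS hT he (hS.2.2.2.1 s hs) (-a)).1
    have h3 : conv (comp (e (-a)) (conv s)) = comp s (e a) := by
      rw [conv_comp, conv_conv, conv_e hS hT he, neg_neg]
    rw [← h3]
    exact hS.2.2.2.1 _ h2
  refine ⟨h1, ?_⟩
  have hne : (comp s (e a)).Nonempty := by
    obtain ⟨⟨x, z⟩, hxz⟩ := hS.2.1 s hs
    obtain ⟨y, hy⟩ := exists_succ hS (e_mem_S hS hT he a) z
    exact ⟨(x, y), z, hxz, hy⟩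
  apply subset_antisymm
  · intro u hu
    have husub : u ⊆ comp s (e a) := by
      have := (mem_cprod_iff hS (ssub hs) (ssub (e_mem_S hS hT he a))).1 hu
      simpa using this.2
    obtain ⟨⟨x, y⟩, hxy⟩ := hS.2.1 u hu.1
    exact rel_eq_of_mem hS hu.1 h1 hxy (husub hxy)
  · intro u hu
    cases hu
    obtain ⟨⟨x, y⟩, hxy⟩ := hne
    obtain ⟨z, hz1, hz2⟩ := hxy
    have hrel := relOf_mem_cprod hS (ssub hs) (ssub (e_mem_S hS hT he a)) rfl rfl
      (⟨z, hz1, hz2⟩ : ((x, y) : X × X) ∈ comp s (e a))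
    rwa [← rel_eq_of_mem hS h1 (relOf_mem hS)
      (⟨z, hz1, hz2⟩ : ((x, y) : X × X) ∈ comp s (e a)) (mem_relOf hS)] at hrel

end ethin
end AS
end Tfacts

section dcg
namespace AS
variable {X : Type*} [Fintype X] {S T : Set (Set (X × X))}

/-- double coset TsT -/
noncomputable def dc (S T : Set (Set (X × X))) (s : Set (X × X)) : Set (Set (X × X)) :=
  cprod S (cprod S T {s}) T

variable (hS : IsScheme S) (hT : thinResidue S = T)
include hS hT

lemma dc_char {s : Set (X × X)} (hs : s ∈ S) {u : Set (X × X)} :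
    u ∈ dc S T s ↔ u ∈ S ∧ u ⊆ comp (⋃₀ T) (comp s (⋃₀ T)) := by
  unfold dc
  rw [mem_cprod_iff hS cprod_subset (T_sub hS hT)]
  rw [sUnion_cprod hS (T_sub hS hT) (ssub hs), Set.sUnion_singleton, comp_assoc]

lemma mem_dc_self {s : Set (X × X)} (hs : s ∈ S) : s ∈ dc S T s := by
  rw [dc_char hS hT hs]
  refine ⟨hs, ?_⟩
  rintro ⟨x, y⟩ hxy
  exact ⟨x, diag_sub_UT hS hT rfl, y, hxy, diag_sub_UT hS hT rfl⟩

lemma dc_sub_S {s : Set (X × X)} : dc S T s ⊆ S := cprod_subset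

lemma dc_T {t : Set (X × X)} (ht : t ∈ T) : dc S T t = T := by
  apply subset_antisymm
  · intro u hu
    rw [dc_char hS hT (T_sub hS hT ht)] at hu
    refine mem_T_of_sub_UT hS hT hu.1 ?_
    intro q hq
    have h1 : comp (⋃₀ T) (comp t (⋃₀ T)) ⊆ (⋃₀ T : Set (X × X)) := by
      have : comp t (⋃₀ T) ⊆ comp (⋃₀ T) (⋃₀ T) :=
        comp_mono (Set.subset_sUnion_of_mem ht) (le_refl _)
      rw [UT_comp hS hT] at this
      have h2 : comp (⋃₀ T) (comp t (⋃₀ T)) ⊆ comp (⋃₀ T) (⋃₀ T) :=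
        comp_mono (le_refl _) this
      rwa [UT_comp hS hT] at h2
    exact h1 (hu.2 hq)
  · intro t' ht'
    rw [dc_char hS hT (T_sub hS hT ht)]
    refine ⟨T_sub hS hT ht', ?_⟩
    rintro ⟨x, y⟩ hxy
    obtain ⟨z, hz⟩ := exists_succ hS (T_sub hS hT ht) x
    have hzy : ((z, y) : X × X) ∈ comp (conv t) t' := ⟨x, hz, hxy⟩
    refine ⟨x, diag_sub_UT hS hT rfl, z, hz, ?_⟩
    exact ⟨relOf hS z y,
      (T_closed hS hT).2.2 (relOf_mem_cprod hS (T_sub hS hT) (T_sub hS hT)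
        (conv_mem_T hS hT ht) ht' hzy), mem_relOf hS⟩

lemma dc_of_mem {u v : Set (X × X)} (hu : u ∈ S) (hv : v ∈ dc S T u) :
    dc S T v = dc S T u := by
  have hvS : v ∈ S := dc_sub_S hS hT hv
  have hvsub : v ⊆ comp (⋃₀ T) (comp u (⋃₀ T)) := ((dc_char hS hT hu).1 hv).2
  -- u ⊆ N ∘ (v ∘ N)
  have husub : u ⊆ comp (⋃₀ T) (comp v (⋃₀ T)) := by
    obtain ⟨⟨x, y⟩, hxy⟩ := hS.2.1 v hvS
    obtain ⟨m, ⟨t1, ht1, hxm⟩, n, hmn, ⟨t2, ht2, hny⟩⟩ := hvsub hxy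
    have hr : relOf hS x n ⊆ comp v (conv t2) :=
      subset_comp_of_meets hS hvS (hS.2.2.2.1 _ (T_sub hS hT ht2)) (relOf_mem hS)
        (mem_relOf hS) ⟨y, hxy, hny⟩
    have h2 : u ⊆ comp (conv t1) (relOf hS x n) :=
      subset_comp_of_meets hS (hS.2.2.2.1 _ (T_sub hS hT ht1)) (relOf_mem hS) hu
        hmn ⟨x, hxm, mem_relOf hS⟩
    intro q hq
    obtain ⟨m', hm1, hm2⟩ := h2 hq
    obtain ⟨n', hn1, hn2⟩ := hr hm2
    exact ⟨m', ⟨conv t1, conv_mem_T hS hT ht1, hm1⟩, n',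
      hn1, ⟨conv t2, conv_mem_T hS hT ht2, hn2⟩⟩
  have absorb : ∀ b w r : Set (X × X), w ⊆ comp (⋃₀ T) (comp b (⋃₀ T)) →
      r ⊆ comp (⋃₀ T) (comp w (⋃₀ T)) →
      r ⊆ comp (⋃₀ T) (comp b (⋃₀ T)) := by
    intro b w r hw hr
    rintro ⟨x, y⟩ hxy
    obtain ⟨m, hm, n, hmn, hn⟩ := hr hxy
    obtain ⟨m', hm', n', hm'n', hn'⟩ := hw hmn
    refine ⟨m', ?_, n', hm'n', ?_⟩
    · rw [← UT_comp hS hT]; exact ⟨m, hm, hm'⟩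
    · rw [← UT_comp hS hT]; exact ⟨n, hn', hn⟩
  apply subset_antisymm
  · intro w hw
    rw [dc_char hS hT hvS] at hw
    rw [dc_char hS hT hu]
    exact ⟨hw.1, absorb u v w hvsub hw.2⟩
  · intro w hw
    rw [dc_char hS hT hu] at hw
    rw [dc_char hS hT hvS]
    exact ⟨hw.1, absorb v u w husub hw.2⟩

lemma dc_conv_mem {u v : Set (X × X)} (hu : u ∈ S) (hv : v ∈ dc S T u) :
    conv v ∈ dc S T (conv u) := by
  have hvS : v ∈ S := dc_sub_S hS hT hv
  rw [dc_char hS hT (hS.2.2.2.1 u hu)]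
  refine ⟨hS.2.2.2.1 v hvS, ?_⟩
  have hvsub := ((dc_char hS hT hu).1 hv).2
  rintro ⟨y, x⟩ hyx
  obtain ⟨m, ⟨t1, ht1, hxm⟩, n, hmn, ⟨t2, ht2, hny⟩⟩ := hvsub hyx
  exact ⟨n, ⟨conv t2, conv_mem_T hS hT ht2, hny⟩, m, hmn, ⟨conv t1, conv_mem_T hS hT ht1, hxm⟩⟩

/-- all relations in `s ∘ s'` lie in `u ∘ UT` for any `u` in the complex product -/
lemma comp_sub_compU {s s' u : Set (X × X)} (hs : s ∈ S) (hs' : s' ∈ S)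
    (hu : u ∈ cprod S {s} {s'}) : comp s s' ⊆ comp u (⋃₀ T) := by
  have huS : u ∈ S := hu.1
  have husub : u ⊆ comp s s' := by
    have := (mem_cprod_iff hS (ssub hs) (ssub hs')).1 hu
    simpa using this.2
  obtain ⟨⟨x0, y0⟩, hxy0⟩ := hS.2.1 u huS
  obtain ⟨z0, hz0, hz0'⟩ := husub hxy0
  have hrot : s ⊆ comp u (conv s') :=
    subset_comp_of_meets hS huS (hS.2.2.2.1 s' hs') hs hz0 ⟨y0, hxy0, hz0'⟩
  rintro ⟨x, y⟩ ⟨z, hxz, hzy⟩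
  obtain ⟨m, hm1, hm2⟩ := hrot hxz
  refine ⟨m, hm1, comp_conv_self_sub_UT hS hT hs' ⟨z, hm2, hzy⟩⟩

/-- L1: well-definedness of the product of double cosets -/
lemma dc_prod_eq {s s' s2 s2' u u2 : Set (X × X)} (hs : s ∈ S) (hs' : s' ∈ S)
    (hs2 : s2 ∈ dc S T s) (hs2' : s2' ∈ dc S T s') (hu : u ∈ cprod S {s} {s'})
    (hu2 : u2 ∈ cprod S {s2} {s2'}) : dc S T u2 = dc S T u := by
  have hs2S : s2 ∈ S := dc_sub_S hS hT hs2
  have hs2S' : s2' ∈ S := dc_sub_S hS hT hs2'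
  apply dc_of_mem hS hT hu.1
  rw [dc_char hS hT hu.1]
  refine ⟨hu2.1, ?_⟩
  have hu2sub : u2 ⊆ comp s2 s2' := by
    have := (mem_cprod_iff hS (ssub hs2S) (ssub hs2S')).1 hu2
    simpa using this.2
  rintro ⟨x, y⟩ hxy
  obtain ⟨z, hxz, hzy⟩ := hu2sub hxy
  obtain ⟨a, ha0, b, hab0, hbz0⟩ := ((dc_char hS hT hs).1 hs2).2 hxz
  obtain ⟨c, hzc0, d, hcd0, hdy0⟩ := ((dc_char hS hT hs').1 hs2').2 hzy
  have ha : ((x, a) : X × X) ∈ (⋃₀ T : Set (X × X)) := ha0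
  have hab : ((a, b) : X × X) ∈ s := hab0
  have hbz : ((b, z) : X × X) ∈ (⋃₀ T : Set (X × X)) := hbz0
  have hzc : ((z, c) : X × X) ∈ (⋃₀ T : Set (X × X)) := hzc0
  have hcd : ((c, d) : X × X) ∈ s' := hcd0
  have hdy : ((d, y) : X × X) ∈ (⋃₀ T : Set (X × X)) := hdy0
  -- (b, c) ∈ UT
  have hbc : ((b, c) : X × X) ∈ (⋃₀ T : Set (X × X)) := by
    rw [← UT_comp hS hT]; exact ⟨z, hbz, hzc⟩
  -- (b, d) ∈ UT ∘ s' ⊆ s' ∘ UT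
  have hbd : ((b, d) : X × X) ∈ comp s' (⋃₀ T) :=
    comp_UT_sub hS hT hs' ⟨c, hbc, hcd⟩
  obtain ⟨d'0, hbd'0, hd'd0⟩ := hbd
  set d' := d'0 with hd'def
  have hbd' : ((b, d') : X × X) ∈ s' := hbd'0
  have hd'd : ((d', d) : X × X) ∈ (⋃₀ T : Set (X × X)) := hd'd0
  -- (a, d') ∈ s ∘ s' ⊆ u ∘ UT
  obtain ⟨m0, ham0, hmd'0⟩ := comp_sub_compU hS hT hs hs' hu (⟨b, hab, hbd'⟩ : ((a, d') : X × X) ∈ comp s s')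
  have ham : ((a, m0) : X × X) ∈ u := ham0
  have hmd' : ((m0, d') : X × X) ∈ (⋃₀ T : Set (X × X)) := hmd'0
  refine ⟨a, ha, m0, ham, ?_⟩
  rw [← UT_comp hS hT]
  refine ⟨d', hmd', ?_⟩
  rw [← UT_comp hS hT]
  exact ⟨d, hd'd, hdy⟩

omit hT in
lemma cprod_single_ne {s s' : Set (X × X)} (hs : s ∈ S) (hs' : s' ∈ S) :
    (cprod S {s} {s'}).Nonempty := by
  obtain ⟨⟨x, z⟩, hxz⟩ := hS.2.1 s hs
  obtain ⟨y, hy⟩ := exists_succ hS hs' z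
  exact ⟨relOf hS x y, relOf_mem_cprod hS (ssub hs) (ssub hs') rfl rfl ⟨z, hxz, hy⟩⟩

end AS
end dcg

section qgroup
namespace AS
variable {X : Type*} [Fintype X]

/-- the quotient type: the set of double cosets -/
def QT (S T : Set (Set (X × X))) : Type _ :=
  {C : Set (Set (X × X)) // ∃ s ∈ S, C = cprod S (cprod S T {s}) T}

variable {S T : Set (Set (X × X))} (hS : IsScheme S) (hT : thinResidue S = T)

noncomputable def qmk {s : Set (X × X)} (_hs : s ∈ S) : QT S T := ⟨dc S T s, s, _hs, rfl⟩

noncomputable def qrep (A : QT S T) : Set (X × X) := A.2.choose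

lemma qrep_mem (A : QT S T) : qrep A ∈ S := A.2.choose_spec.1

lemma qrep_dc (A : QT S T) : A.1 = dc S T (qrep A) := A.2.choose_spec.2

lemma qmk_eq_iff {s s' : Set (X × X)} (hs : s ∈ S) (hs' : s' ∈ S) :
    qmk hs = (qmk hs' : QT S T) ↔ dc S T s = dc S T s' := by
  constructor
  · intro h; exact congrArg Subtype.val h
  · intro h; exact Subtype.ext h

lemma qmk_rep (A : QT S T) : qmk (qrep_mem A) = A := (Subtype.ext (qrep_dc A)).symm

include hS hT

lemma qrep_mem_dc {s : Set (X × X)} (hs : s ∈ S) :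
    qrep (qmk hs : QT S T) ∈ dc S T s := by
  have h := qrep_dc (qmk hs : QT S T)
  have h2 : dc S T (qrep (qmk hs : QT S T)) = dc S T s := h.symm
  rw [← h2]
  exact mem_dc_self hS hT (qrep_mem _)

noncomputable def qmul (A B : QT S T) : QT S T :=
  qmk (cprod_subset (cprod_single_ne hS (qrep_mem A) (qrep_mem B)).choose_spec)

noncomputable def qone : QT S T := qmk hS.2.2.1

noncomputable def qinv (A : QT S T) : QT S T := qmk (hS.2.2.2.1 _ (qrep_mem A))

/-- the key computation rule for `qmul` -/
lemma qmul_mk {s s' u : Set (X × X)} (hs : s ∈ S) (hs' : s' ∈ S)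
    (hu : u ∈ cprod S {s} {s'}) :
    qmul hS (qmk hs) (qmk hs') = (qmk hu.1 : QT S T) := by
  unfold qmul
  rw [qmk_eq_iff]
  exact dc_prod_eq hS hT hs hs' (qrep_mem_dc hS hT hs) (qrep_mem_dc hS hT hs')
    hu (cprod_single_ne hS (qrep_mem _) (qrep_mem _)).choose_spec

lemma qmul_assoc (A B C : QT S T) :
    qmul hS (qmul hS A B) C = qmul hS A (qmul hS B C) := by
  conv_lhs => rw [← qmk_rep A, ← qmk_rep B, ← qmk_rep C]
  conv_rhs => rw [← qmk_rep A, ← qmk_rep B, ← qmk_rep C]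
  obtain ⟨u, hu⟩ := cprod_single_ne hS (qrep_mem A) (qrep_mem B)
  rw [qmul_mk hS hT (qrep_mem A) (qrep_mem B) hu]
  obtain ⟨v, hv⟩ := cprod_single_ne hS hu.1 (qrep_mem C)
  rw [qmul_mk hS hT hu.1 (qrep_mem C) hv]
  have hvsub : v ⊆ comp (qrep A) (comp (qrep B) (qrep C)) := by
    have h1 : v ⊆ comp u (qrep C) := by
      have := (mem_cprod_iff hS (ssub hu.1) (ssub (qrep_mem C))).1 hv
      simpa using this.2
    have h2 : u ⊆ comp (qrep A) (qrep B) := by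
      have := (mem_cprod_iff hS (ssub (qrep_mem A)) (ssub (qrep_mem B))).1 hu
      simpa using this.2
    intro q hq
    have := comp_mono h2 (le_refl (qrep C)) (h1 hq)
    rwa [comp_assoc] at this
  obtain ⟨⟨x, y⟩, hxy⟩ := hS.2.1 v hv.1
  obtain ⟨z, hxz, hzy⟩ := hvsub hxy
  have hw : relOf hS z y ∈ cprod S {qrep B} {qrep C} :=
    relOf_mem_cprod hS (ssub (qrep_mem B)) (ssub (qrep_mem C)) rfl rfl hzy
  rw [qmul_mk hS hT (qrep_mem B) (qrep_mem C) hw]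
  have hv' : v ∈ cprod S {qrep A} {relOf hS z y} := by
    have hcm : ((x, y) : X × X) ∈ comp (qrep A) (relOf hS z y) := ⟨z, hxz, mem_relOf hS⟩
    have h3 := relOf_mem_cprod hS (ssub (qrep_mem A)) (ssub (relOf_mem hS)) rfl rfl hcm
    rwa [← eq_relOf hS hv.1 hxy] at h3
  rw [qmul_mk hS hT (qrep_mem A) (relOf_mem hS) hv']

lemma qone_mul (A : QT S T) : qmul hS (qone hS) A = A := by
  obtain ⟨u, hu⟩ := cprod_single_ne hS hS.2.2.1 (qrep_mem A)
  have h : qmul hS (qone hS) (qmk (qrep_mem A)) = (qmk hu.1 : QT S T) :=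
    qmul_mk hS hT hS.2.2.1 (qrep_mem A) hu
  have husub : u ⊆ qrep A := by
    have := (mem_cprod_iff hS (ssub hS.2.2.1) (ssub (qrep_mem A))).1 hu
    simp only [Set.sUnion_singleton] at this
    intro q hq
    have h2 := this.2 hq
    rwa [comp_diag_left] at h2
  obtain ⟨⟨x, y⟩, hxy⟩ := hS.2.1 u hu.1
  have hueq : u = qrep A := rel_eq_of_mem hS hu.1 (qrep_mem A) hxy (husub hxy)
  have h3 : (qmk hu.1 : QT S T) = qmk (qrep_mem A) :=
    (qmk_eq_iff hu.1 (qrep_mem A)).2 (by rw [hueq])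
  rw [qmk_rep A] at h
  rw [h, h3, qmk_rep A]

lemma qmul_one (A : QT S T) : qmul hS A (qone hS) = A := by
  obtain ⟨u, hu⟩ := cprod_single_ne hS (qrep_mem A) hS.2.2.1
  have h : qmul hS (qmk (qrep_mem A)) (qone hS) = (qmk hu.1 : QT S T) :=
    qmul_mk hS hT (qrep_mem A) hS.2.2.1 hu
  have husub : u ⊆ qrep A := by
    have := (mem_cprod_iff hS (ssub (qrep_mem A)) (ssub hS.2.2.1)).1 hu
    simp only [Set.sUnion_singleton] at this
    intro q hq
    have h2 := this.2 hq
    rwa [comp_diag_right] at h2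
  obtain ⟨⟨x, y⟩, hxy⟩ := hS.2.1 u hu.1
  have hueq : u = qrep A := rel_eq_of_mem hS hu.1 (qrep_mem A) hxy (husub hxy)
  have h3 : (qmk hu.1 : QT S T) = qmk (qrep_mem A) :=
    (qmk_eq_iff hu.1 (qrep_mem A)).2 (by rw [hueq])
  rw [qmk_rep A] at h
  rw [h, h3, qmk_rep A]

lemma qmk_eq_one_iff {s : Set (X × X)} (hs : s ∈ S) :
    (qmk hs : QT S T) = qone hS ↔ s ∈ T := by
  unfold qone
  rw [qmk_eq_iff]
  constructor
  · intro h
    have := mem_dc_self hS hT hs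
    rw [h, dc_T hS hT (diag_mem_T hS hT)] at this
    exact this
  · intro h
    rw [dc_T hS hT h, dc_T hS hT (diag_mem_T hS hT)]

lemma qmul_conv_mk {s : Set (X × X)} (hs : s ∈ S) :
    qmul hS (qmk (hS.2.2.2.1 s hs)) (qmk hs) = (qone hS : QT S T) := by
  obtain ⟨u, hu⟩ := cprod_single_ne hS (hS.2.2.2.1 s hs) hs
  rw [qmul_mk hS hT (hS.2.2.2.1 s hs) hs hu]
  rw [qmk_eq_one_iff hS hT]
  exact cprod_conv_self_sub_T hS hT hs hu

lemma qinv_mul (A : QT S T) : qmul hS (qinv hS A) A = qone hS := by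
  have h : qmul hS (qinv hS A) (qmk (qrep_mem A)) = (qone hS : QT S T) :=
    qmul_conv_mk hS hT (qrep_mem A)
  rwa [qmk_rep A] at h

lemma qinv_mk {s : Set (X × X)} (hs : s ∈ S) :
    qinv hS (qmk hs) = (qmk (hS.2.2.2.1 s hs) : QT S T) := by
  unfold qinv
  rw [qmk_eq_iff]
  have h1 : qrep (qmk hs : QT S T) ∈ dc S T s := qrep_mem_dc hS hT hs
  have h2 := dc_conv_mem hS hT hs h1
  exact dc_of_mem hS hT (hS.2.2.2.1 s hs) h2

/-- the group structure on the set of double cosets -/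
noncomputable def qGroup : Group (QT S T) :=
  letI : Mul (QT S T) := ⟨qmul hS⟩
  letI : One (QT S T) := ⟨qone hS⟩
  letI : Inv (QT S T) := ⟨qinv hS⟩
  Group.ofLeftAxioms (qmul_assoc hS hT) (qone_mul hS hT) (qinv_mul hS hT)

end AS
end qgroup

section mats
namespace AS
variable {X : Type*} [Fintype X] {S T : Set (Set (X × X))} {p : ℕ} [NeZero p]
  {e : ZMod p × ZMod p → Set (X × X)}

lemma natCard_setOf {P : X → Prop} :
    (Nat.card {z | P z} : ℂ) = ∑ z : X, if P z then (1 : ℂ) else 0 := by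
  rw [Finset.sum_boole]
  congr 1
  rw [Nat.card_eq_fintype_card, Fintype.card_subtype]
  congr 1

lemma adj_mul_apply {u v : Set (X × X)} (x y : X) :
    (adjMat u * adjMat v) x y = (cnt u v x y : ℂ) := by
  rw [Matrix.mul_apply, cnt, natCard_setOf]
  apply Finset.sum_congr rfl
  intro z _
  by_cases h1 : (x, z) ∈ u <;> by_cases h2 : (z, y) ∈ v <;> simp [adjMat, h1, h2]

lemma adj_diag : adjMat (diagRel X) = (1 : Matrix X X ℂ) := by
  ext x y
  by_cases h : x = y <;> simp [adjMat, diagRel, h, Matrix.one_apply]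

lemma adj_inj {u v : Set (X × X)} (h : adjMat u = adjMat v) : u = v := by
  ext ⟨x, y⟩
  have := congrFun (congrFun h x) y
  by_cases h1 : (x, y) ∈ u <;> by_cases h2 : (x, y) ∈ v <;>
    simp only [adjMat, h1, h2, if_true, if_false, iff_true, iff_false] at this ⊢
  · simp at this
  · simp at this

variable (hS : IsScheme S) (hT : thinResidue S = T) (he : IsoElemAb S T p e)
include hS hT he

lemma adj_e_mul {s : Set (X × X)} (hs : s ∈ S) (a : ZMod p × ZMod p) :
    adjMat (e a) * adjMat s = adjMat (comp (e a) s) := by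
  ext x y
  rw [adj_mul_apply]
  by_cases h : (x, y) ∈ comp (e a) s
  · obtain ⟨z0, hz1, hz2⟩ := h
    have hset : {z | (x, z) ∈ e a ∧ (z, y) ∈ s} = {z0} := by
      ext z
      simp only [Set.mem_setOf_eq, Set.mem_singleton_iff]
      constructor
      · rintro ⟨ha, -⟩; exact e_succ_unique hS hT he ha hz1
      · rintro rfl; exact ⟨hz1, hz2⟩
    have : cnt (e a) s x y = 1 := by
      rw [cnt, hset]; simp
    rw [this]
    simp [adjMat, show (x,y) ∈ comp (e a) s from ⟨z0, hz1, hz2⟩]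
  · have hset : {z | (x, z) ∈ e a ∧ (z, y) ∈ s} = ∅ := by
      ext z
      simp only [Set.mem_setOf_eq, Set.mem_empty_iff_false, iff_false]
      rintro ⟨h1, h2⟩
      exact h ⟨z, h1, h2⟩
    have : cnt (e a) s x y = 0 := by rw [cnt, hset]; simp
    rw [this]
    simp [adjMat, h]

lemma adj_mul_e {s : Set (X × X)} (hs : s ∈ S) (a : ZMod p × ZMod p) :
    adjMat s * adjMat (e a) = adjMat (comp s (e a)) := by
  ext x y
  rw [adj_mul_apply]
  by_cases h : (x, y) ∈ comp s (e a)
  · obtain ⟨z0, hz1, hz2⟩ := h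
    have hset : {z | (x, z) ∈ s ∧ (z, y) ∈ e a} = {z0} := by
      ext z
      simp only [Set.mem_setOf_eq, Set.mem_singleton_iff]
      constructor
      · rintro ⟨-, ha⟩; exact e_pred_unique hS hT he ha hz2
      · rintro rfl; exact ⟨hz1, hz2⟩
    have : cnt s (e a) x y = 1 := by rw [cnt, hset]; simp
    rw [this]
    simp [adjMat, show (x,y) ∈ comp s (e a) from ⟨z0, hz1, hz2⟩]
  · have hset : {z | (x, z) ∈ s ∧ (z, y) ∈ e a} = ∅ := by
      ext z
      simp only [Set.mem_setOf_eq, Set.mem_empty_iff_false, iff_false]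
      rintro ⟨h1, h2⟩
      exact h ⟨z, h1, h2⟩
    have : cnt s (e a) x y = 0 := by rw [cnt, hset]; simp
    rw [this]
    simp [adjMat, h]

end AS
end mats

section degs
namespace AS
variable {X : Type*} [Fintype X] {S : Set (Set (X × X))} (hS : IsScheme S)
include hS

lemma X_nonempty : Nonempty X := by
  obtain ⟨⟨x, y⟩, -⟩ := hS.2.1 _ hS.2.2.1
  exact ⟨x⟩

/-- the valency of a relation -/
noncomputable def deg (s : Set (X × X)) : ℕ :=
  Nat.card {y | ((X_nonempty hS).some, y) ∈ s}

lemma deg_eq {s : Set (X × X)} (hs : s ∈ S) (x : X) :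
    Nat.card {y | (x, y) ∈ s} = deg hS s := by
  have key : ∀ w : X, Nat.card {y | (w, y) ∈ s} = cnt s (conv s) w w := by
    intro w
    have hset : {y | (w, y) ∈ s} = {z | (w, z) ∈ s ∧ (z, w) ∈ conv s} := by
      ext z
      simp only [Set.mem_setOf_eq, mem_conv]
      tauto
    show Nat.card {y | (w, y) ∈ s} = Nat.card {z | (w, z) ∈ s ∧ (z, w) ∈ conv s}
    rw [hset]
  unfold deg
  rw [key, key]
  exact cnt_const hS hs (hS.2.2.2.1 s hs) hS.2.2.1 rfl rfl

lemma deg_ne_zero {s : Set (X × X)} (hs : s ∈ S) : deg hS s ≠ 0 := by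
  obtain ⟨⟨x, y⟩, hxy⟩ := hS.2.1 s hs
  rw [← deg_eq hS hs x, Nat.card_ne_zero]
  exact ⟨⟨⟨y, hxy⟩⟩, Set.toFinite _⟩

lemma row_sum {s : Set (X × X)} (hs : s ∈ S) (x : X) :
    ∑ y : X, adjMat s x y = (deg hS s : ℂ) := by
  rw [← deg_eq hS hs x, natCard_setOf]
  rfl

lemma col_sum {s : Set (X × X)} (hs : s ∈ S) (y : X) :
    ∑ x : X, adjMat s x y = (deg hS (conv s) : ℂ) := by
  rw [← deg_eq hS (hS.2.2.2.1 s hs) y, natCard_setOf]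
  apply Finset.sum_congr rfl
  intro z _
  simp [adjMat, mem_conv]

lemma deg_conv {s : Set (X × X)} (hs : s ∈ S) : deg hS (conv s) = deg hS s := by
  have h1 : ∑ x : X, ∑ y : X, adjMat s x y = (Fintype.card X : ℂ) * (deg hS s : ℂ) := by
    rw [Finset.sum_congr rfl (fun x _ => row_sum hS hs x)]
    simp [Finset.sum_const, Finset.card_univ, mul_comm]
  have h2 : ∑ y : X, ∑ x : X, adjMat s x y = (Fintype.card X : ℂ) * (deg hS (conv s) : ℂ) := by
    rw [Finset.sum_congr rfl (fun y _ => col_sum hS hs y)]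
    simp [Finset.sum_const, Finset.card_univ, mul_comm]
  rw [show (∑ x : X, ∑ y : X, adjMat s x y) = ∑ y : X, ∑ x : X, adjMat s x y from Finset.sum_comm] at h1
  rw [h1] at h2
  have hXcard : (Fintype.card X : ℂ) ≠ 0 := by
    have := X_nonempty hS
    simp [Fintype.card_ne_zero]
  have := mul_left_cancel₀ hXcard h2
  exact_mod_cast this.symm

lemma prod_row_sum {u v : Set (X × X)} (hu : u ∈ S) (hv : v ∈ S) (x : X) :
    ∑ y : X, (adjMat u * adjMat v) x y = (deg hS u : ℂ) * (deg hS v : ℂ) := by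
  have : ∑ y : X, (adjMat u * adjMat v) x y
      = ∑ z : X, adjMat u x z * ∑ y : X, adjMat v z y := by
    simp only [Matrix.mul_apply, Finset.mul_sum]
    rw [Finset.sum_comm]
  rw [this]
  rw [Finset.sum_congr rfl (fun z _ => by rw [row_sum hS hv z])]
  rw [← Finset.sum_mul, row_sum hS hu x]

end AS
end degs

section wres
namespace AS
variable {X : Type*} [Fintype X]

/-- closed subsets containing all `s* s` -/
def Wgen (S : Set (Set (X × X))) : Set (Set (Set (X × X))) :=
  {V | IsClosedSub S V ∧ ∀ u ∈ S, cprod S {conv u} {u} ⊆ V}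

noncomputable def Wres (S : Set (Set (X × X))) : Set (Set (X × X)) := ⋂₀ Wgen S

variable {S T : Set (Set (X × X))} (hS : IsScheme S)
include hS

lemma S_mem_Wgen : S ∈ Wgen S :=
  ⟨(scheme_SN_self hS).1, fun _ _ => cprod_subset⟩

lemma Wres_sub {V : Set (Set (X × X))} (hV : V ∈ Wgen S) : Wres S ⊆ V :=
  Set.sInter_subset_of_mem hV

lemma Wres_closed : IsClosedSub S (Wres S) := by
  refine ⟨⟨diagRel X, Set.mem_sInter.2 fun V hV => diag_mem_closed hS hV.1⟩,
    fun u hu => Set.mem_sInter.1 hu S (S_mem_Wgen hS), ?_⟩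
  intro u hu
  refine Set.mem_sInter.2 fun V hV => ?_
  exact hV.1.2.2 (cprod_mono (fun w hw => Set.mem_sInter.1 hw V hV)
    (fun w hw => Set.mem_sInter.1 hw V hV) hu)

lemma Wres_gens {u : Set (X × X)} (hu : u ∈ S) : cprod S {conv u} {u} ⊆ Wres S :=
  fun w hw => Set.mem_sInter.2 fun V hV => hV.2 u hu hw

lemma mem_Wres_of_sub {u : Set (X × X)} (hu : u ∈ S) (h : u ⊆ ⋃₀ Wres S) : u ∈ Wres S :=
  eq_of_subset_sUnion hS hu (Wres_closed hS).2.1 h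

lemma UW_comp : comp (⋃₀ Wres S) (⋃₀ Wres S) = (⋃₀ Wres S : Set (X × X)) := by
  apply subset_antisymm
  · rintro ⟨x, y⟩ ⟨z, ⟨t1, ht1, hxz⟩, ⟨t2, ht2, hzy⟩⟩
    exact ⟨relOf hS x y,
      (Wres_closed hS).2.2 (relOf_mem_cprod hS (Wres_closed hS).2.1 (Wres_closed hS).2.1
        ht1 ht2 ⟨z, hxz, hzy⟩), mem_relOf hS⟩
  · rintro ⟨x, y⟩ hxy
    exact ⟨x, ⟨diagRel X, diag_mem_closed hS (Wres_closed hS), rfl⟩, hxy⟩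

lemma pairs_gen {s : Set (X × X)} (hs : s ∈ S) :
    comp (conv s) s ⊆ (⋃₀ Wres S : Set (X × X)) := by
  rintro ⟨x, y⟩ hxy
  exact ⟨relOf hS x y, Wres_gens hS hs
    (relOf_mem_cprod hS (ssub (hS.2.2.2.1 s hs)) (ssub hs) rfl rfl hxy), mem_relOf hS⟩

/-- subsets from cprod membership -/
lemma sub_comp_of_cprod {u a b : Set (X × X)} (ha : a ∈ S) (hb : b ∈ S)
    (hu : u ∈ cprod S {a} {b}) : u ⊆ comp a b := by
  have := (mem_cprod_iff hS (ssub ha) (ssub hb)).1 hu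
  simpa using this.2

lemma Wres_SN : IsStronglyNormal S (Wres S) := by
  refine ⟨Wres_closed hS, ?_⟩
  -- the set of good elements
  set V' : Set (Set (X × X)) :=
    {w | w ∈ Wres S ∧ ∀ s ∈ S, cprod S (cprod S {conv s} {w}) {s} ⊆ Wres S} with hV'def
  have hV'W : V' ⊆ Wres S := fun w hw => hw.1
  have hV'S : V' ⊆ S := fun w hw => (Wres_closed hS).2.1 (hV'W hw)
  -- diag ∈ V'
  have hdiagW : diagRel X ∈ Wres S := diag_mem_closed hS (Wres_closed hS)
  have hdiag : diagRel X ∈ V' := by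
    refine ⟨hdiagW, fun s hs v hv => ?_⟩
    obtain ⟨hvS, pv, hpv, q, hq, hne⟩ := hv
    have hpveq : pv = conv s := by
      have hpvS : pv ∈ S := hpv.1
      have hpsub : pv ⊆ comp (conv s) (diagRel X) :=
        sub_comp_of_cprod hS (hS.2.2.2.1 s hs) hS.2.2.1 hpv
      rw [comp_diag_right] at hpsub
      obtain ⟨⟨x, y⟩, hxy⟩ := hS.2.1 pv hpvS
      exact rel_eq_of_mem hS hpvS (hS.2.2.2.1 s hs) hxy (hpsub hxy)
    cases hq
    apply Wres_gens hS hs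
    refine ⟨hvS, conv s, rfl, s, rfl, ?_⟩
    rw [← hpveq]
    exact hne
  -- generators ∈ V'
  have hgens : ∀ u ∈ S, ∀ w ∈ cprod S {conv u} {u}, w ∈ V' := by
    intro u hu w hw
    refine ⟨Wres_gens hS hu hw, fun s hs v hv => ?_⟩
    obtain ⟨hvS, pv, hpv, q, hq, hne⟩ := hv
    cases hq
    apply mem_Wres_of_sub hS hvS
    have hvsub : v ⊆ comp pv s := sub_comp_of_cprod hS hpv.1 hs ⟨hvS, pv, rfl, s, rfl, hne⟩
    have hpvsub : pv ⊆ comp (conv s) w := sub_comp_of_cprod hS (hS.2.2.2.1 s hs) hw.1 hpv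
    have hwsub : w ⊆ comp (conv u) u := sub_comp_of_cprod hS (hS.2.2.2.1 u hu) hu hw
    rintro ⟨x, y⟩ hxy
    obtain ⟨z3, hxz3, hz3y⟩ := hvsub hxy
    obtain ⟨z1, hxz1, hz1z3⟩ := hpvsub hxz3
    obtain ⟨z2, hz1z2, hz2z3⟩ := hwsub hz1z3
    have hx1 : ((x, z1) : X × X) ∈ conv s := hxz1
    have h21 : ((z2, z1) : X × X) ∈ u := hz1z2
    have h23 : ((z2, z3) : X × X) ∈ u := hz2z3
    have h3y : ((z3, y) : X × X) ∈ s := hz3y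
    -- α = relOf z2 x ∈ {u}{s},  β = relOf z2 y ∈ {u}{s}
    have hα : relOf hS z2 x ∈ cprod S {u} {s} :=
      relOf_mem_cprod hS (ssub hu) (ssub hs) rfl rfl ⟨z1, h21, hx1⟩
    have hβ : relOf hS z2 y ∈ cprod S {u} {s} :=
      relOf_mem_cprod hS (ssub hu) (ssub hs) rfl rfl ⟨z3, h23, h3y⟩
    set α := relOf hS z2 x
    set β := relOf hS z2 y
    have hαS : α ∈ S := relOf_mem hS
    have hβS : β ∈ S := relOf_mem hS
    -- u ⊆ α ∘ conv s
    have hαsub : α ⊆ comp u s := sub_comp_of_cprod hS hu hs hα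
    obtain ⟨⟨a0, b0⟩, hab0⟩ := hS.2.1 α hαS
    obtain ⟨c0, hac0, hcb0⟩ := hαsub hab0
    have husub : u ⊆ comp α (conv s) :=
      subset_comp_of_meets hS hαS (hS.2.2.2.1 s hs) hu hac0 ⟨b0, hab0, hcb0⟩
    -- β ⊆ α ∘ UW
    have hβsub : β ⊆ comp α (⋃₀ Wres S) := by
      have h1 : β ⊆ comp u s := sub_comp_of_cprod hS hu hs hβ
      intro q hq2
      obtain ⟨m, hm1, hm2⟩ := h1 hq2
      obtain ⟨n, hn1, hn2⟩ := husub hm1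
      exact ⟨n, hn1, pairs_gen hS hs ⟨m, hn2, hm2⟩⟩
    -- (x, y) ∈ conv α ∘ β ⊆ UW
    have hxy2 : ((x, y) : X × X) ∈ comp (conv α) β := ⟨z2, mem_relOf hS, mem_relOf hS⟩
    obtain ⟨m, hm1, hm2⟩ := hxy2
    obtain ⟨n, hn1, hn2⟩ := hβsub hm2
    have hxn : ((x, n) : X × X) ∈ (⋃₀ Wres S : Set (X × X)) :=
      pairs_gen hS hαS ⟨m, hm1, hn1⟩
    rw [← UW_comp hS]
    exact ⟨n, hxn, hn2⟩
  -- V' is closed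
  have hV'closed : IsClosedSub S V' := by
    refine ⟨⟨diagRel X, hdiag⟩, hV'S, ?_⟩
    intro u' hu'
    obtain ⟨hu'S, w, hwV, w', hw'V, hne⟩ := hu'
    have hwS : w ∈ S := hV'S hwV
    have hw'S : w' ∈ S := hV'S hw'V
    have hu'W : u' ∈ Wres S :=
      (Wres_closed hS).2.2 (cprod_mono hV'W hV'W ⟨hu'S, w, hwV, w', hw'V, hne⟩)
    refine ⟨hu'W, fun s hs v hv => ?_⟩
    obtain ⟨hvS, pv, hpv, q, hq, hne2⟩ := hv
    cases hq
    apply mem_Wres_of_sub hS hvS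
    have hvsub : v ⊆ comp pv s := sub_comp_of_cprod hS hpv.1 hs ⟨hvS, pv, rfl, s, rfl, hne2⟩
    have hpvsub : pv ⊆ comp (conv s) u' := sub_comp_of_cprod hS (hS.2.2.2.1 s hs) hu'S hpv
    have hu'sub : u' ⊆ comp w w' := sub_comp_of_cprod hS hwS hw'S ⟨hu'S, w, rfl, w', rfl, hne⟩
    rintro ⟨x, y⟩ hxy
    obtain ⟨z2, hxz2, hz2y⟩ := hvsub hxy
    obtain ⟨z1, hxz1, hz1z2⟩ := hpvsub hxz2
    obtain ⟨m, hz1m, hmz2⟩ := hu'sub hz1z2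
    have hx1 : ((x, z1) : X × X) ∈ conv s := hxz1
    have h1m : ((z1, m) : X × X) ∈ w := hz1m
    have hm2 : ((m, z2) : X × X) ∈ w' := hmz2
    have h2y : ((z2, y) : X × X) ∈ s := hz2y
    obtain ⟨n, hmn⟩ := exists_succ hS hs m
    -- (x, n) ∈ conv s ∘ w ∘ s ⊆ UW
    have hγ : relOf hS x m ∈ cprod S {conv s} {w} :=
      relOf_mem_cprod hS (ssub (hS.2.2.2.1 s hs)) (ssub hwS) rfl rfl ⟨z1, hx1, h1m⟩
    have hη : relOf hS x n ∈ cprod S (cprod S {conv s} {w}) {s} :=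
      relOf_mem_cprod hS cprod_subset (ssub hs) hγ rfl ⟨m, mem_relOf hS, hmn⟩
    have hxn : ((x, n) : X × X) ∈ (⋃₀ Wres S : Set (X × X)) :=
      ⟨relOf hS x n, hwV.2 s hs hη, mem_relOf hS⟩
    -- (n, y) ∈ conv s ∘ w' ∘ s ⊆ UW
    have hγ' : relOf hS n z2 ∈ cprod S {conv s} {w'} :=
      relOf_mem_cprod hS (ssub (hS.2.2.2.1 s hs)) (ssub hw'S) rfl rfl ⟨m, hmn, hm2⟩
    have hη' : relOf hS n y ∈ cprod S (cprod S {conv s} {w'}) {s} :=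
      relOf_mem_cprod hS cprod_subset (ssub hs) hγ' rfl ⟨z2, mem_relOf hS, h2y⟩
    have hny : ((n, y) : X × X) ∈ (⋃₀ Wres S : Set (X × X)) :=
      ⟨relOf hS n y, hw'V.2 s hs hη', mem_relOf hS⟩
    rw [← UW_comp hS]
    exact ⟨n, hxn, hny⟩
  have hV'mem : V' ∈ Wgen S := ⟨hV'closed, hgens⟩
  have hWV' : Wres S ⊆ V' := Wres_sub hS hV'mem
  intro s hs v hv
  obtain ⟨hvS, pv, hpv, q, hq, hne⟩ := hv
  cases hq
  obtain ⟨hpvS, p', hp', w, hwW, hne2⟩ := hpv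
  cases hp'
  have hwV' : w ∈ V' := hWV' hwW
  exact hwV'.2 s hs ⟨hvS, pv, ⟨hpvS, conv s, rfl, w, rfl, hne2⟩, s, rfl, hne⟩

lemma T_sub_of_Wgen (hT : thinResidue S = T) {V : Set (Set (X × X))} (hV : V ∈ Wgen S) :
    T ⊆ V := by
  rw [← hT]
  exact le_trans (Set.sInter_subset_of_mem (Wres_SN hS)) (Wres_sub hS hV)

end AS
end wres

section stab
namespace AS
variable {X : Type*} [Fintype X] {S T : Set (Set (X × X))} {p q : ℕ} [NeZero p]
  {e : ZMod p × ZMod p → Set (X × X)}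
  (hS : IsScheme S) (hT : thinResidue S = T) (he : IsoElemAb S T p e)
include hS hT he

lemma comp_e_inv_right (u : Set (X × X)) (a : ZMod p × ZMod p) :
    comp (comp u (e a)) (e (-a)) = u := by
  rw [comp_assoc, comp_e hS hT he, add_neg_cancel, he.2.2.2.1, comp_diag_right]

lemma comp_e_inv_left (u : Set (X × X)) (a : ZMod p × ZMod p) :
    comp (e (-a)) (comp (e a) u) = u := by
  rw [← comp_assoc, comp_e hS hT he, neg_add_cancel, he.2.2.2.1, comp_diag_left]

/-- right stabilizer subgroup of a relation -/
noncomputable def Kgrp (s : Set (X × X)) : AddSubgroup (ZMod p × ZMod p) where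
  carrier := {a | comp s (e a) = s}
  zero_mem' := by
    show comp s (e 0) = s
    rw [he.2.2.2.1, comp_diag_right]
  add_mem' := by
    intro a b ha hb
    show comp s (e (a + b)) = s
    rw [← comp_e hS hT he, ← comp_assoc]
    rw [show comp s (e a) = s from ha, show comp s (e b) = s from hb]
  neg_mem' := by
    intro a ha
    show comp s (e (-a)) = s
    conv_lhs => rw [← (show comp s (e a) = s from ha)]
    rw [comp_e_inv_right hS hT he]

/-- left stabilizer subgroup of a relation -/
noncomputable def Lgrp (s : Set (X × X)) : AddSubgroup (ZMod p × ZMod p) where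
  carrier := {a | comp (e a) s = s}
  zero_mem' := by
    show comp (e 0) s = s
    rw [he.2.2.2.1, comp_diag_left]
  add_mem' := by
    intro a b ha hb
    show comp (e (a + b)) s = s
    rw [← comp_e hS hT he, comp_assoc]
    rw [show comp (e b) s = s from hb, show comp (e a) s = s from ha]
  neg_mem' := by
    intro a ha
    show comp (e (-a)) s = s
    conv_lhs => rw [← (show comp (e a) s = s from ha)]
    rw [comp_e_inv_left hS hT he]

lemma mem_Kgrp {s : Set (X × X)} {a : ZMod p × ZMod p} :
    a ∈ Kgrp hS hT he s ↔ comp s (e a) = s := Iff.rfl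

lemma mem_Lgrp {s : Set (X × X)} {a : ZMod p × ZMod p} :
    a ∈ Lgrp hS hT he s ↔ comp (e a) s = s := Iff.rfl

/-- generators stabilize: if `e b ∈ (conv s) s` then `b` right-stabilizes `s`. -/
lemma stab_of_gen {s : Set (X × X)} (hs : s ∈ S) {b : ZMod p × ZMod p}
    (hb : e b ∈ cprod S {conv s} {s}) : comp s (e b) = s := by
  have hsub : e b ⊆ comp (conv s) s := sub_comp_of_cprod hS (hS.2.2.2.1 s hs) hs hb
  obtain ⟨⟨x0, y0⟩, hxy0⟩ := hS.2.1 s hs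
  obtain ⟨w, hw⟩ := exists_succ hS (e_mem_S hS hT he b) y0
  obtain ⟨n, hn1, hn2⟩ := hsub hw
  have hny0 : (n, y0) ∈ s := hn1
  have hnw : ((n, w) : X × X) ∈ comp s (e b) := ⟨y0, hny0, hw⟩
  exact rel_eq_of_mem hS (comp_e_right_mem hS hT he hs b).1 hs hnw hn2

lemma Kgrp_T {t : Set (X × X)} (ht : t ∈ T) : Kgrp hS hT he t = ⊥ := by
  apply (AddSubgroup.eq_bot_iff_forall _).2
  intro a ha
  rw [mem_Kgrp] at ha
  obtain ⟨b, hb⟩ := he.2.2.1 t ht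
  rw [← hb, comp_e hS hT he] at ha
  have h2 : b + a = b := he.2.1 ha
  exact add_left_cancel (h2.trans (add_zero b).symm)

lemma Kgrp_comp_left {s : Set (X × X)} (b : ZMod p × ZMod p) :
    Kgrp hS hT he (comp (e b) s) = Kgrp hS hT he s := by
  ext a
  rw [mem_Kgrp, mem_Kgrp, comp_assoc]
  constructor
  · intro h
    have := congrArg (comp (e (-b))) h
    rwa [comp_e_inv_left hS hT he, comp_e_inv_left hS hT he] at this
  · intro h; rw [h]

lemma Kgrp_comp_right {s : Set (X × X)} (b : ZMod p × ZMod p) :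
    Kgrp hS hT he (comp s (e b)) = Kgrp hS hT he s := by
  ext a
  rw [mem_Kgrp, mem_Kgrp]
  have key : comp (comp s (e b)) (e a) = comp (comp s (e a)) (e b) := by
    rw [comp_assoc, comp_assoc, comp_e hS hT he, comp_e hS hT he, add_comm]
  rw [key]
  constructor
  · intro h
    have := congrArg (fun A => comp A (e (-b))) h
    simpa [comp_e_inv_right hS hT he] using this
  · intro h; rw [h]

lemma Kgrp_dc {s u' : Set (X × X)} (hs : s ∈ S) (hu' : u' ∈ dc S T s) :
    Kgrp hS hT he u' = Kgrp hS hT he s := by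
  have hu'S : u' ∈ S := dc_sub_S hS hT hu'
  have hsub := ((dc_char hS hT hs).1 hu').2
  obtain ⟨⟨x, y⟩, hxy⟩ := hS.2.1 u' hu'S
  obtain ⟨m, ⟨t1, ht1, hxm⟩, n, hmn, ⟨t2, ht2, hny⟩⟩ := hsub hxy
  obtain ⟨b1, hb1⟩ := he.2.2.1 t1 ht1
  obtain ⟨b2, hb2⟩ := he.2.2.1 t2 ht2
  have hmem : ((x, y) : X × X) ∈ comp (e b1) (comp s (e b2)) := by
    refine ⟨m, ?_, n, hmn, ?_⟩
    · rw [hb1]; exact hxm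
    · rw [hb2]; exact hny
  have hcS : comp (e b1) (comp s (e b2)) ∈ S :=
    (comp_e_left_mem hS hT he (comp_e_right_mem hS hT he hs b2).1 b1).1
  have : u' = comp (e b1) (comp s (e b2)) := rel_eq_of_mem hS hu'S hcS hxy hmem
  rw [this, Kgrp_comp_left hS hT he, Kgrp_comp_right hS hT he]

section comm
variable (hcomm : ∀ u ∈ S, ∀ v ∈ S, adjMat u * adjMat v = adjMat v * adjMat u)
include hcomm

lemma comm_thin {s : Set (X × X)} (hs : s ∈ S) (a : ZMod p × ZMod p) :
    comp (e a) s = comp s (e a) := by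
  apply adj_inj
  rw [← adj_e_mul hS hT he hs a, ← adj_mul_e hS hT he hs a]
  exact hcomm (e a) (e_mem_S hS hT he a) s hs

lemma Kgrp_conv {s : Set (X × X)} (hs : s ∈ S) :
    Kgrp hS hT he (conv s) = Kgrp hS hT he s := by
  ext a
  rw [mem_Kgrp, mem_Kgrp]
  constructor
  · intro h
    have h3 := congrArg conv h
    rw [conv_comp, conv_conv, conv_e hS hT he] at h3
    have h4 : comp s (e (-a)) = s := by
      rw [← comm_thin hS hT he hcomm hs (-a)]
      exact h3
    conv_lhs => rw [← h4]
    rw [comp_assoc, comp_e hS hT he, neg_add_cancel, he.2.2.2.1, comp_diag_right]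
  · intro h
    have h2 : comp s (e (-a)) = s := by
      conv_lhs => rw [← h]
      rw [comp_e_inv_right hS hT he]
    have h3 : comp (e (-a)) s = s := by
      rw [comm_thin hS hT he hcomm hs (-a)]
      exact h2
    have h5 := congrArg conv h3
    rwa [conv_comp, conv_e hS hT he, neg_neg] at h5

lemma Krel {s s' u : Set (X × X)} (hs : s ∈ S) (hs' : s' ∈ S)
    (hu : u ∈ cprod S {s} {s'}) :
    Kgrp hS hT he s ≤ Kgrp hS hT he s' ⊔ Kgrp hS hT he u := by
  intro a ha
  rw [mem_Kgrp] at ha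
  have huS : u ∈ S := hu.1
  have hca : comp (e a) s = s := by rw [comm_thin hS hT he hcomm hs a, ha]
  -- u'' = e a ∘ u ∈ cprod {s}{s'}
  have hu''S : comp (e a) u ∈ S := (comp_e_left_mem hS hT he huS a).1
  have hu''sub : comp (e a) u ⊆ comp s s' := by
    have h1 : u ⊆ comp s s' := sub_comp_of_cprod hS hs hs' hu
    intro q hq
    have h2 := comp_mono (le_refl (e a)) h1 hq
    rw [← comp_assoc, hca] at h2
    exact h2
  -- rotation: s ⊆ u ∘ conv s'
  have hrot : s ⊆ comp u (conv s') := by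
    have husub : u ⊆ comp s s' := sub_comp_of_cprod hS hs hs' hu
    obtain ⟨⟨x0, y0⟩, hxy0⟩ := hS.2.1 u huS
    obtain ⟨z0, hz0, hz0'⟩ := husub hxy0
    exact subset_comp_of_meets hS huS (hS.2.2.2.1 s' hs') hs hz0 ⟨y0, hxy0, hz0'⟩
  -- pick a point of u''
  obtain ⟨⟨x, y⟩, hxy⟩ := hS.2.1 _ hu''S
  obtain ⟨z, hxz, hzy⟩ := hu''sub hxy
  obtain ⟨m, hxm, hmz⟩ := hrot hxz
  have hmy : ((m, y) : X × X) ∈ comp (conv s') s' := ⟨z, hmz, hzy⟩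
  have ht' : relOf hS m y ∈ cprod S {conv s'} {s'} :=
    relOf_mem_cprod hS (ssub (hS.2.2.2.1 s' hs')) (ssub hs') rfl rfl hmy
  have ht'T : relOf hS m y ∈ T := cprod_conv_self_sub_T hS hT hs' ht'
  obtain ⟨b, hb⟩ := he.2.2.1 _ ht'T
  have hbK : b ∈ Kgrp hS hT he s' := by
    rw [mem_Kgrp]
    exact stab_of_gen hS hT he hs' (by rw [hb]; exact ht')
  -- e a ∘ u = u ∘ e b
  have heq : comp (e a) u = comp u (e b) := by
    have h1 : ((x, y) : X × X) ∈ comp u (e b) := ⟨m, hxm, by rw [hb]; exact mem_relOf hS⟩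
    exact rel_eq_of_mem hS hu''S (comp_e_right_mem hS hT he huS b).1 hxy h1
  have heq2 : comp u (e a) = comp u (e b) := by
    rw [← comm_thin hS hT he hcomm huS a, heq]
  have habK : a - b ∈ Kgrp hS hT he u := by
    rw [mem_Kgrp]
    have : comp u (e (a - b)) = comp (comp u (e a)) (e (-b)) := by
      rw [comp_assoc, comp_e hS hT he, sub_eq_add_neg]
    rw [this, heq2, comp_e_inv_right hS hT he]
  have : a = b + (a - b) := by ring
  rw [this]
  exact add_mem (AddSubgroup.mem_sup_left hbK) (AddSubgroup.mem_sup_right habK)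

end comm

lemma dc_eq_self_of_stab {s : Set (X × X)} (hs : s ∈ S)
    (hL : ∀ a, comp (e a) s = s) (hR : ∀ a, comp s (e a) = s) :
    dc S T s = {s} := by
  have h1 : comp s (⋃₀ T) = s := by
    apply subset_antisymm
    · rintro ⟨x, y⟩ ⟨m, hxm, t, ht, hmy⟩
      obtain ⟨b, hb⟩ := he.2.2.1 t ht
      rw [← hR b]
      exact ⟨m, hxm, by rw [hb]; exact hmy⟩
    · rintro ⟨x, y⟩ hxy
      exact ⟨y, hxy, diagRel X, diag_mem_T hS hT, rfl⟩
  have h2 : comp (⋃₀ T) s = s := by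
    apply subset_antisymm
    · rintro ⟨x, y⟩ ⟨m, ⟨t, ht, hxm⟩, hmy⟩
      obtain ⟨b, hb⟩ := he.2.2.1 t ht
      rw [← hL b]
      exact ⟨m, by rw [hb]; exact hxm, hmy⟩
    · rintro ⟨x, y⟩ hxy
      exact ⟨x, ⟨diagRel X, diag_mem_T hS hT, rfl⟩, hxy⟩
  ext w
  rw [dc_char hS hT hs]
  simp only [Set.mem_singleton_iff]
  constructor
  · rintro ⟨hwS, hwsub⟩
    rw [h1, h2] at hwsub
    obtain ⟨⟨x, y⟩, hxy⟩ := hS.2.1 w hwS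
    exact rel_eq_of_mem hS hwS hs hxy (hwsub hxy)
  · rintro rfl
    refine ⟨hs, ?_⟩
    rw [h1, h2]

/-- A ⟹ C : commutativity implies all nontrivial double cosets are singletons -/
lemma thmAC (hq : q.Prime)
    (hquot : Nat.card {C : Set (Set (X × X)) | ∃ s ∈ S, C = cprod S (cprod S T {s}) T} = q)
    (hcomm : ∀ u ∈ S, ∀ v ∈ S, adjMat u * adjMat v = adjMat v * adjMat u) :
    ∀ s ∈ S \ T, cprod S (cprod S T {s}) T = {s} := by
  have main : ∀ s ∈ S \ T, Kgrp hS hT he s = ⊤ := by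
    by_contra hcon
    push_neg at hcon
    obtain ⟨s0, hs0, hK⟩ := hcon
    set M := Kgrp hS hT he s0 with hMdef
    have hs0S : s0 ∈ S := hs0.1
    have hs0T : s0 ∉ T := hs0.2
    letI : Group (QT S T) := qGroup hS hT
    haveI : Fact q.Prime := ⟨hq⟩
    have hcard : Nat.card (QT S T) = q := hquot
    set c : QT S T := qmk hs0S with hcdef
    have hc1 : c ≠ 1 := by
      intro h
      exact hs0T ((qmk_eq_one_iff hS hT hs0S).1 h)
    -- Kq
    have KqmkA : ∀ (u : Set (X × X)) (hu : u ∈ S),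
        Kgrp hS hT he (qrep ((qmk hu) : QT S T)) = Kgrp hS hT he u := by
      intro u hu
      exact Kgrp_dc hS hT he hu (qrep_mem_dc hS hT hu)
    have step : ∀ A B : QT S T,
        Kgrp hS hT he (qrep A) ≤ Kgrp hS hT he (qrep B) ⊔ Kgrp hS hT he (qrep (A * B)) := by
      intro A B
      obtain ⟨u, hu⟩ := cprod_single_ne hS (qrep_mem A) (qrep_mem B)
      have hAB : A * B = qmk hu.1 := by
        have h1 : A * B = qmul hS A B := rfl
        rw [h1]
        conv_lhs => rw [← qmk_rep A, ← qmk_rep B]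
        exact qmul_mk hS hT (qrep_mem A) (qrep_mem B) hu
      have h2 : Kgrp hS hT he (qrep (A * B)) = Kgrp hS hT he u := by
        rw [hAB]
        exact KqmkA u hu.1
      rw [h2]
      exact Krel hS hT he hcomm (qrep_mem A) (qrep_mem B) hu
    have hKone : Kgrp hS hT he (qrep (1 : QT S T)) = ⊥ := by
      have h1 : (1 : QT S T).1 = dc S T (diagRel X) := rfl
      have h2 : dc S T (qrep (1 : QT S T)) = dc S T (diagRel X) := by
        rw [← qrep_dc (1 : QT S T), h1]
      have h3 : qrep (1 : QT S T) ∈ T := by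
        have := mem_dc_self hS hT (qrep_mem (1 : QT S T))
        rw [h2, dc_T hS hT (diag_mem_T hS hT)] at this
        exact this
      exact Kgrp_T hS hT he h3
    have hKinv : Kgrp hS hT he (qrep (c⁻¹)) ≤ M := by
      have h1 : c⁻¹ = qinv hS c := rfl
      have h2 : qinv hS c = qmk (hS.2.2.2.1 s0 hs0S) := qinv_mk hS hT hs0S
      rw [h1, h2, KqmkA _ (hS.2.2.2.1 s0 hs0S), Kgrp_conv hS hT he hcomm hs0S]
    have hpow : ∀ n : ℕ, Kgrp hS hT he (qrep (c ^ n)) ≤ M := by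
      intro n
      induction n with
      | zero =>
        rw [pow_zero, hKone]
        exact bot_le
      | succ n ih =>
        have h1 := step (c ^ (n+1)) (c⁻¹)
        have h2 : c ^ (n+1) * c⁻¹ = c ^ n := by
          rw [pow_succ, mul_inv_cancel_right]
        rw [h2] at h1
        exact le_trans h1 (sup_le hKinv ih)
    have hall : ∀ u ∈ S, Kgrp hS hT he u ≤ M := by
      intro u hu
      obtain ⟨n, hn⟩ := mem_powers_of_prime_card hcard hc1 (g' := (qmk hu : QT S T))
      rw [← KqmkA u hu, ← hn]
      exact hpow n
    -- V = e '' M is in Wgen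
    set V : Set (Set (X × X)) := {t | ∃ a ∈ M, e a = t} with hVdef
    have hVWgen : V ∈ Wgen S := by
      constructor
      · refine ⟨⟨e 0, 0, zero_mem M, rfl⟩, ?_, ?_⟩
        · rintro t ⟨a, ha, rfl⟩
          exact e_mem_S hS hT he a
        · rintro u' ⟨hu'S, p', ⟨a, haM, hpa⟩, q', ⟨b, hbM, hqb⟩, hne⟩
          have : u' ∈ cprod S {e a} {e b} := by
            refine ⟨hu'S, e a, rfl, e b, rfl, ?_⟩
            rw [hpa, hqb]
            exact hne
          rw [he.2.2.2.2 a b] at this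
          cases this
          exact ⟨a + b, add_mem haM hbM, rfl⟩
      · intro u hu w hw
        have hwT : w ∈ T := cprod_conv_self_sub_T hS hT hu hw
        obtain ⟨b, hb⟩ := he.2.2.1 w hwT
        have hbK : b ∈ Kgrp hS hT he u := by
          rw [mem_Kgrp]
          exact stab_of_gen hS hT he hu (by rw [hb]; exact hw)
        exact ⟨b, hall u hu hbK, hb⟩
    have hTV : T ⊆ V := T_sub_of_Wgen hS hT hVWgen
    apply hK
    rw [eq_top_iff]
    intro a _
    obtain ⟨a', ha'M, ha'⟩ := hTV (he.1 a)
    rwa [← he.2.1 ha']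
  intro s hs
  have hKs := main s hs
  have hR : ∀ a, comp s (e a) = s := by
    intro a
    have : a ∈ Kgrp hS hT he s := by rw [hKs]; trivial
    exact this
  have hL : ∀ a, comp (e a) s = s := by
    intro a
    rw [comm_thin hS hT he hcomm hs.1 a]
    exact hR a
  exact dc_eq_self_of_stab hS hT he hs.1 hL hR

end AS
end stab

section final
namespace AS
variable {X : Type*} [Fintype X] [DecidableEq X] {S T : Set (Set (X × X))} {p q : ℕ} [NeZero p]
  {e : ZMod p × ZMod p → Set (X × X)}
  (hS : IsScheme S) (hT : thinResidue S = T) (he : IsoElemAb S T p e)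
include hS hT he

/-- under C, thin elements stabilize every relation outside T -/
lemma stabL_of_C (hC : ∀ s ∈ S \ T, cprod S (cprod S T {s}) T = {s})
    {s : Set (X × X)} (hs : s ∈ S \ T) (a : ZMod p × ZMod p) : comp (e a) s = s := by
  have h1 : comp (e a) s ∈ dc S T s := by
    rw [dc_char hS hT hs.1]
    refine ⟨(comp_e_left_mem hS hT he hs.1 a).1, ?_⟩
    rintro ⟨x, y⟩ ⟨m, hxm, hmy⟩
    exact ⟨m, ⟨e a, he.1 a, hxm⟩, y, hmy, diag_sub_UT hS hT rfl⟩
  have h2 : dc S T s = {s} := hC s hs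
  rw [h2] at h1
  exact h1

lemma stabR_of_C (hC : ∀ s ∈ S \ T, cprod S (cprod S T {s}) T = {s})
    {s : Set (X × X)} (hs : s ∈ S \ T) (a : ZMod p × ZMod p) : comp s (e a) = s := by
  have h1 : comp s (e a) ∈ dc S T s := by
    rw [dc_char hS hT hs.1]
    refine ⟨(comp_e_right_mem hS hT he hs.1 a).1, ?_⟩
    rintro ⟨x, y⟩ ⟨m, hxm, hmy⟩
    exact ⟨x, diag_sub_UT hS hT rfl, m, hxm, ⟨e a, he.1 a, hmy⟩⟩
  have h2 : dc S T s = {s} := hC s hs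
  rw [h2] at h1
  exact h1

lemma conv_notin_T {s : Set (X × X)} (hs : s ∈ S \ T) : conv s ∈ S \ T := by
  refine ⟨hS.2.2.2.1 s hs.1, fun h => hs.2 ?_⟩
  have := conv_mem_T hS hT h
  rwa [conv_conv] at this

omit he in
lemma qcomm (hq : q.Prime)
    (hquot : Nat.card {C : Set (Set (X × X)) | ∃ s ∈ S, C = cprod S (cprod S T {s}) T} = q) :
    ∀ A B : QT S T, qmul hS A B = qmul hS B A := by
  letI : Group (QT S T) := qGroup hS hT
  haveI : Fact q.Prime := ⟨hq⟩
  have hcard : Nat.card (QT S T) = q := hquot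
  haveI : IsCyclic (QT S T) := isCyclic_of_prime_card hcard
  obtain ⟨g, hg⟩ := IsCyclic.exists_generator (α := QT S T)
  intro A B
  obtain ⟨m, hm⟩ := hg A
  obtain ⟨n, hn⟩ := hg B
  show A * B = B * A
  rw [← hm, ← hn, ← zpow_add, ← zpow_add, add_comm]

lemma prod_conv_eq (hC : ∀ s ∈ S \ T, cprod S (cprod S T {s}) T = {s})
    {u : Set (X × X)} (hu : u ∈ S \ T) :
    adjMat u * adjMat (conv u) = (deg hS u : ℂ) • adjMat (⋃₀ T) := by
  ext x y
  rw [adj_mul_apply, Matrix.smul_apply]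
  by_cases hxy : (x, y) ∈ (⋃₀ T : Set (X × X))
  · obtain ⟨t, ht, hxyt⟩ := hxy
    obtain ⟨a0, ha0⟩ := he.2.2.1 t ht
    have hxye : (x, y) ∈ e a0 := by rw [ha0]; exact hxyt
    have hset : {z | (x, z) ∈ u ∧ (z, y) ∈ conv u} = {z | (x, z) ∈ u} := by
      ext z
      simp only [Set.mem_setOf_eq, mem_conv, and_iff_left_iff_imp]
      intro hxz
      have hyx : (y, x) ∈ e (-a0) := by
        rw [← conv_e hS hT he]
        exact hxye
      have : (y, z) ∈ comp (e (-a0)) u := ⟨x, hyx, hxz⟩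
      rwa [stabL_of_C hS hT he hC hu (-a0)] at this
    have h2 : cnt u (conv u) x y = deg hS u := by
      unfold cnt
      rw [hset]
      exact deg_eq hS hu.1 x
    rw [h2]
    have : adjMat (⋃₀ T) x y = 1 := by
      simp [adjMat, show ((x,y) : X × X) ∈ (⋃₀ T : Set (X × X)) from ⟨t, ht, hxyt⟩]
    rw [this, smul_eq_mul, mul_one]
  · have h2 : cnt u (conv u) x y = 0 := by
      unfold cnt
      rw [show {z | (x, z) ∈ u ∧ (z, y) ∈ conv u} = (∅ : Set X) from ?_]
      · simp
      · ext z
        simp only [Set.mem_setOf_eq, Set.mem_empty_iff_false, iff_false, not_and]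
        intro h1 h2
        exact hxy (comp_self_conv_sub_UT hS hT hu.1 ⟨z, h1, h2⟩)
    rw [h2]
    have : adjMat (⋃₀ T) x y = 0 := by simp [adjMat, hxy]
    rw [this, smul_zero]
    simp

omit he in
lemma adj_of_single {u v w0 : Set (X × X)} (hu : u ∈ S) (hv : v ∈ S)
    (hsing : cprod S {u} {v} = {w0}) :
    adjMat u * adjMat v = (inum u v w0 : ℂ) • adjMat w0 := by
  have hw0 : w0 ∈ cprod S {u} {v} := by rw [hsing]; rfl
  have hw0S : w0 ∈ S := hw0.1
  ext x y
  rw [adj_mul_apply, Matrix.smul_apply]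
  by_cases h : (x, y) ∈ w0
  · rw [inum_eq_cnt hS hu hv hw0S h]
    have : adjMat w0 x y = 1 := by simp [adjMat, h]
    rw [this, smul_eq_mul, mul_one]
  · have h2 : cnt u v x y = 0 := by
      by_contra hne
      have hne2 : cnt u v x y ≠ 0 := hne
      rw [cnt_ne_zero_iff] at hne2
      have := relOf_mem_cprod hS (ssub hu) (ssub hv) rfl rfl hne2
      rw [hsing] at this
      cases this
      exact h (mem_relOf hS)
    rw [h2]
    have : adjMat w0 x y = 0 := by simp [adjMat, h]
    rw [this, smul_zero]
    simp

/-- C ⟹ A -/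
lemma thmCA (hq : q.Prime)
    (hquot : Nat.card {C : Set (Set (X × X)) | ∃ s ∈ S, C = cprod S (cprod S T {s}) T} = q)
    (hC : ∀ s ∈ S \ T, cprod S (cprod S T {s}) T = {s}) :
    ∀ u ∈ S, ∀ v ∈ S, adjMat u * adjMat v = adjMat v * adjMat u := by
  intro u hu v hv
  by_cases huT : u ∈ T
  · obtain ⟨a, ha⟩ := he.2.2.1 u huT
    by_cases hvT : v ∈ T
    · obtain ⟨b, hb⟩ := he.2.2.1 v hvT
      rw [← ha, ← hb, adj_e_mul hS hT he (e_mem_S hS hT he b) a,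
        adj_e_mul hS hT he (e_mem_S hS hT he a) b, comp_e hS hT he, comp_e hS hT he, add_comm]
    · rw [← ha, adj_e_mul hS hT he hv a, adj_mul_e hS hT he hv a,
        stabL_of_C hS hT he hC ⟨hv, hvT⟩ a, stabR_of_C hS hT he hC ⟨hv, hvT⟩ a]
  · by_cases hvT : v ∈ T
    · obtain ⟨a, ha⟩ := he.2.2.1 v hvT
      rw [← ha, adj_e_mul hS hT he hu a, adj_mul_e hS hT he hu a,
        stabL_of_C hS hT he hC ⟨hu, huT⟩ a, stabR_of_C hS hT he hC ⟨hu, huT⟩ a]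
    · by_cases hvc : v = conv u
      · subst hvc
        rw [prod_conv_eq hS hT he hC ⟨hu, huT⟩]
        have h2 := prod_conv_eq hS hT he hC (conv_notin_T hS hT he ⟨hu, huT⟩)
        rw [conv_conv] at h2
        rw [h2, deg_conv hS hu]
      · -- singleton supports
        letI : Group (QT S T) := qGroup hS hT
        have hcuT : conv u ∈ S \ T := conv_notin_T hS hT he ⟨hu, huT⟩
        have hcvT : conv v ∈ S \ T := conv_notin_T hS hT he ⟨hv, hvT⟩
        have hsing1 : ∀ w ∈ cprod S {u} {v}, w ∉ T := by
          intro w hw hwT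
          have h1 : qmul hS (qmk hu) (qmk hv) = (qmk hw.1 : QT S T) :=
            qmul_mk hS hT hu hv hw
          have h2 : (qmk hw.1 : QT S T) = qone hS := (qmk_eq_one_iff hS hT hw.1).2 hwT
          have h3 : (qmk hu : QT S T) * (qmk hv) = 1 := by
            show qmul hS (qmk hu) (qmk hv) = qone hS
            rw [h1, h2]
          have h4 : (qmk hv : QT S T) = (qmk hu)⁻¹ := eq_inv_of_mul_eq_one_right h3
          have h5 : (qmk hu : QT S T)⁻¹ = qmk (hS.2.2.2.1 u hu) := qinv_mk hS hT hu
          rw [h5] at h4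
          have h6 : dc S T v = dc S T (conv u) := (qmk_eq_iff hv (hS.2.2.2.1 u hu)).1 h4
          have h7 := mem_dc_self hS hT hv
          have h8 : dc S T (conv u) = {conv u} := hC (conv u) hcuT
          rw [h6, h8] at h7
          exact hvc h7
        have hsing2 : ∀ w ∈ cprod S {v} {u}, w ∉ T := by
          intro w hw hwT
          have h1 : qmul hS (qmk hv) (qmk hu) = (qmk hw.1 : QT S T) :=
            qmul_mk hS hT hv hu hw
          have h2 : (qmk hw.1 : QT S T) = qone hS := (qmk_eq_one_iff hS hT hw.1).2 hwT
          have h3 : (qmk hv : QT S T) * (qmk hu) = 1 := by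
            show qmul hS (qmk hv) (qmk hu) = qone hS
            rw [h1, h2]
          have h4 : (qmk hu : QT S T) = (qmk hv)⁻¹ := eq_inv_of_mul_eq_one_right h3
          have h5 : (qmk hv : QT S T)⁻¹ = qmk (hS.2.2.2.1 v hv) := qinv_mk hS hT hv
          rw [h5] at h4
          have h6 : dc S T u = dc S T (conv v) := (qmk_eq_iff hu (hS.2.2.2.1 v hv)).1 h4
          have h7 := mem_dc_self hS hT hu
          have h8 : dc S T (conv v) = {conv v} := hC (conv v) hcvT
          rw [h6, h8] at h7
          apply hvc
          rw [h7, conv_conv]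
        obtain ⟨w0, hw0⟩ := cprod_single_ne hS hu hv
        have hw0T : w0 ∉ T := hsing1 w0 hw0
        have hkey : ∀ w ∈ cprod S {u} {v}, w = w0 := by
          intro w hw
          have h1 : qmul hS (qmk hu) (qmk hv) = (qmk hw.1 : QT S T) := qmul_mk hS hT hu hv hw
          have h2 : qmul hS (qmk hu) (qmk hv) = (qmk hw0.1 : QT S T) := qmul_mk hS hT hu hv hw0
          have h3 : dc S T w = dc S T w0 := (qmk_eq_iff hw.1 hw0.1).1 (h1.symm.trans h2)
          have h4 := mem_dc_self hS hT hw.1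
          have h9 : dc S T w0 = {w0} := hC w0 ⟨hw0.1, hw0T⟩
          rw [h3, h9] at h4
          exact h4
        have hsingle1 : cprod S {u} {v} = {w0} := by
          apply subset_antisymm
          · intro w hw; exact hkey w hw
          · intro w hw; cases hw; exact hw0
        have hkey2 : ∀ w ∈ cprod S {v} {u}, w = w0 := by
          intro w hw
          have h1 : qmul hS (qmk hv) (qmk hu) = (qmk hw.1 : QT S T) := qmul_mk hS hT hv hu hw
          have h2 : qmul hS (qmk hv) (qmk hu) = qmul hS (qmk hu) (qmk hv) :=
            qcomm hS hT hq hquot _ _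
          have h3 : qmul hS (qmk hu) (qmk hv) = (qmk hw0.1 : QT S T) := qmul_mk hS hT hu hv hw0
          have h4 : dc S T w = dc S T w0 :=
            (qmk_eq_iff hw.1 hw0.1).1 ((h1.symm.trans h2).trans h3)
          have h5 := mem_dc_self hS hT hw.1
          have h9 : dc S T w0 = {w0} := hC w0 ⟨hw0.1, hw0T⟩
          rw [h4, h9] at h5
          exact h5
        obtain ⟨w1, hw1⟩ := cprod_single_ne hS hv hu
        have hw1eq : w1 = w0 := hkey2 w1 hw1
        have hsingle2 : cprod S {v} {u} = {w0} := by
          apply subset_antisymm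
          · intro w hw; exact hkey2 w hw
          · intro w hw; cases hw; rw [← hw1eq]; exact hw1
        rw [adj_of_single hS hT hu hv hsingle1, adj_of_single hS hT hv hu hsingle2]
        -- coefficients agree via valencies
        have hw0S : w0 ∈ S := hw0.1
        obtain ⟨x⟩ := X_nonempty hS
        have h1 : (deg hS u : ℂ) * (deg hS v : ℂ)
            = (inum u v w0 : ℂ) * (deg hS w0 : ℂ) := by
          have := prod_row_sum hS hu hv x
          rw [adj_of_single hS hT hu hv hsingle1] at this
          rw [← this]
          simp only [Matrix.smul_apply, smul_eq_mul, ← Finset.mul_sum]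
          rw [row_sum hS hw0S x]
        have h2 : (deg hS v : ℂ) * (deg hS u : ℂ)
            = (inum v u w0 : ℂ) * (deg hS w0 : ℂ) := by
          have := prod_row_sum hS hv hu x
          rw [adj_of_single hS hT hv hu hsingle2] at this
          rw [← this]
          simp only [Matrix.smul_apply, smul_eq_mul, ← Finset.mul_sum]
          rw [row_sum hS hw0S x]
        have h3 : (inum u v w0 : ℂ) * (deg hS w0 : ℂ) = (inum v u w0 : ℂ) * (deg hS w0 : ℂ) := by
          rw [← h1, ← h2, mul_comm]
        have hdw0 : (deg hS w0 : ℂ) ≠ 0 := by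
          exact_mod_cast deg_ne_zero hS hw0S
        have h4 := mul_right_cancel₀ hdw0 h3
        rw [h4]

/-- the master expansion of `eIdem * adjMat s` -/
lemma eIdem_mul (φ : AddChar (ZMod p × ZMod p) ℂ) {s : Set (X × X)} (hs : s ∈ S) :
    eIdem p φ e * adjMat s
      = ((p : ℂ) ^ 2)⁻¹ • ∑ a : ZMod p × ZMod p, φ (-a) • adjMat (comp (e a) s) := by
  unfold eIdem
  rw [Matrix.smul_mul, Finset.sum_mul]
  congr 1
  apply Finset.sum_congr rfl
  intro a _
  rw [Matrix.smul_mul, adj_e_mul hS hT he hs a]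

/-- C ⟹ B -/
lemma thmCB (hC : ∀ s ∈ S \ T, cprod S (cprod S T {s}) T = {s}) :
    ∀ φ : AddChar (ZMod p × ZMod p) ℂ, φ ≠ 1 →
      ∀ s ∈ S \ T, eIdem p φ e * adjMat s = 0 := by
  intro φ hφ s hs
  rw [eIdem_mul hS hT he φ hs.1]
  have h1 : ∀ a : ZMod p × ZMod p, comp (e a) s = s := stabL_of_C hS hT he hC hs
  have h2 : ∑ a : ZMod p × ZMod p, φ (-a) • adjMat (comp (e a) s)
      = (∑ a : ZMod p × ZMod p, φ (-a)) • adjMat s := by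
    rw [Finset.sum_smul]
    apply Finset.sum_congr rfl
    intro a _
    rw [h1 a]
  rw [h2]
  have h3 : ∑ a : ZMod p × ZMod p, φ (-a) = ∑ a : ZMod p × ZMod p, φ a :=
    Fintype.sum_equiv (Equiv.neg _) _ _ (fun a => rfl)
  have h4 : φ ≠ 0 := by
    intro h
    apply hφ
    rw [h]
    apply DFunLike.ext
    intro a
    simp
  rw [h3, AddChar.sum_eq_zero_iff_ne_zero.2 h4]
  simp

/-- B ⟹ C -/
lemma thmBC (hp : p.Prime)
    (hB : ∀ φ : AddChar (ZMod p × ZMod p) ℂ, φ ≠ 1 →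
      ∀ s ∈ S \ T, eIdem p φ e * adjMat s = 0) :
    ∀ s ∈ S \ T, cprod S (cprod S T {s}) T = {s} := by
  haveI : Fact p.Prime := ⟨hp⟩
  have main : ∀ s ∈ S \ T, ∀ a : ZMod p × ZMod p, comp (e a) s = s := by
    intro s hs
    by_contra hcon
    push_neg at hcon
    have hLne : Lgrp hS hT he s ≠ ⊤ := by
      intro h
      obtain ⟨a, ha⟩ := hcon
      apply ha
      have : a ∈ Lgrp hS hT he s := by rw [h]; trivial
      exact this
    -- construct a character trivial on L and nontrivial
    set L := Lgrp hS hT he s with hLdef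
    set L' : Submodule (ZMod p) (ZMod p × ZMod p) := AddSubgroup.toZModSubmodule p L with hL'def
    have hL'ne : L' ≠ ⊤ := by
      intro h
      apply hLne
      have := (AddSubgroup.toZModSubmodule p (M := ZMod p × ZMod p)).injective
        (a₁ := L) (a₂ := ⊤)
      apply this
      rw [← hL'def, h]
      rfl
    obtain ⟨x0, hx0⟩ : ∃ x0, x0 ∉ L' := by
      by_contra hcon2
      push_neg at hcon2
      exact hL'ne (Submodule.eq_top_iff'.2 hcon2)
    have hv : (Submodule.Quotient.mk x0 : (ZMod p × ZMod p) ⧸ L') ≠ 0 := by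
      rw [Ne, Submodule.Quotient.mk_eq_zero]
      exact hx0
    obtain ⟨f, hf⟩ : ∃ f : Module.Dual (ZMod p) ((ZMod p × ZMod p) ⧸ L'),
        f (Submodule.Quotient.mk x0) ≠ 0 := by
      by_contra hcon2
      push_neg at hcon2
      exact hv ((Module.forall_dual_apply_eq_zero_iff (ZMod p) _).1 hcon2)
    set ℓ : (ZMod p × ZMod p) →+ ZMod p := (f.comp L'.mkQ).toAddMonoidHom with hldef
    have hζ : IsPrimitiveRoot (Complex.exp (2 * Real.pi * Complex.I / p)) p :=
      Complex.isPrimitiveRoot_exp p (NeZero.ne p)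
    set φ0 : AddChar (ZMod p) ℂ := AddChar.zmodChar p hζ.pow_eq_one with hφ0def
    set φ : AddChar (ZMod p × ZMod p) ℂ := φ0.compAddMonoidHom ℓ with hφdef
    have hℓx0 : ℓ x0 ≠ 0 := hf
    have hφ1 : φ ≠ 1 := by
      rw [AddChar.ne_one_iff]
      refine ⟨x0, ?_⟩
      rw [hφdef]
      rw [AddChar.compAddMonoidHom_apply, hφ0def, AddChar.zmodChar_apply]
      apply hζ.pow_ne_one_of_pos_of_lt
      · exact fun h => hℓx0 ((ZMod.val_eq_zero _).1 h)
      · exact ZMod.val_lt _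
    have hφL : ∀ b ∈ L, φ b = 1 := by
      intro b hb
      rw [hφdef, AddChar.compAddMonoidHom_apply]
      have : ℓ b = 0 := by
        rw [hldef]
        simp only [LinearMap.toAddMonoidHom_coe, LinearMap.coe_comp, Function.comp_apply,
          Submodule.mkQ_apply]
        have hbL' : b ∈ L' := hb
        rw [(Submodule.Quotient.mk_eq_zero _).2 hbL']
        simp
      rw [this]
      exact AddChar.map_zero_eq_one φ0
    -- evaluate the vanishing sum at a point of s
    have hzero := hB φ hφ1 s hs
    rw [eIdem_mul hS hT he φ hs.1] at hzero
    have hpne : ((p : ℂ) ^ 2)⁻¹ ≠ 0 := by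
      apply inv_ne_zero
      apply pow_ne_zero
      exact_mod_cast NeZero.ne p
    have hmat : ∑ a : ZMod p × ZMod p, φ (-a) • adjMat (comp (e a) s) = 0 := by
      rcases smul_eq_zero.1 hzero with h | h
      · exact absurd h hpne
      · exact h
    obtain ⟨⟨x, y⟩, hxy⟩ := hS.2.1 s hs.1
    have hentry : ∑ a : ZMod p × ZMod p, φ (-a) * (adjMat (comp (e a) s) x y) = 0 := by
      have := congrFun (congrFun hmat x) y
      rw [Matrix.sum_apply] at this
      simpa [Matrix.smul_apply] using this
    have hiff : ∀ a : ZMod p × ZMod p, (x, y) ∈ comp (e a) s ↔ a ∈ L := by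
      intro a
      constructor
      · intro h
        show comp (e a) s = s
        exact rel_eq_of_mem hS (comp_e_left_mem hS hT he hs.1 a).1 hs.1 h hxy
      · intro h
        have : comp (e a) s = s := h
        rw [this]
        exact hxy
    have hsum2 : ∑ a : ZMod p × ZMod p, φ (-a) * (adjMat (comp (e a) s) x y)
        = ∑ a : ZMod p × ZMod p, (if a ∈ L then (1 : ℂ) else 0) := by
      apply Finset.sum_congr rfl
      intro a _
      by_cases h : a ∈ L
      · have h1 : adjMat (comp (e a) s) x y = 1 := by
          simp [adjMat, (hiff a).2 h]
        have h2 : φ (-a) = 1 := hφL (-a) (neg_mem h)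
        rw [h1, h2, if_pos h, mul_one]
      · have h1 : adjMat (comp (e a) s) x y = 0 := by
          simp only [adjMat]
          rw [if_neg]
          intro hmem
          exact h ((hiff a).1 hmem)
        rw [h1, if_neg h, mul_zero]
    rw [hsum2] at hentry
    rw [Finset.sum_boole] at hentry
    have : (0 : ZMod p × ZMod p) ∈ Finset.univ.filter (fun a => a ∈ L) := by
      simp [zero_mem L]
    have hcard : (Finset.univ.filter (fun a : ZMod p × ZMod p => a ∈ L)).card ≠ 0 := by
      intro h
      rw [Finset.card_eq_zero] at h
      rw [h] at this
      simp at this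
    exact hcard (by exact_mod_cast hentry)
  intro s hs
  have hL : ∀ a, comp (e a) s = s := main s hs
  have hR : ∀ a, comp s (e a) = s := by
    intro a
    have h1 := main (conv s) (conv_notin_T hS hT he hs) (-a)
    have h2 := congrArg conv h1
    rwa [conv_comp, conv_conv, conv_e hS hT he, neg_neg] at h2
  exact dc_eq_self_of_stab hS hT he hs.1 hL hR

end AS
end final



/-- equivalence of commutativity, trivial supports of induced modules, and
`|TsT| = 1` for all `s ∈ S \\ T`. -/
theorem stmt8 {X : Type*} [Fintype X] [DecidableEq X] (p q : ℕ) [NeZero p]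
    (hp : p.Prime) (hq : q.Prime)
    (S T : Set (Set (X × X))) (hS : IsScheme S) (hT : thinResidue S = T)
    (e : ZMod p × ZMod p → Set (X × X)) (he : IsoElemAb S T p e)
    (hquot : Nat.card {C : Set (Set (X × X)) | ∃ s ∈ S, C = cprod S (cprod S T {s}) T} = q) :
    ((∀ u ∈ S, ∀ v ∈ S, adjMat u * adjMat v = adjMat v * adjMat u) ↔
      (∀ φ : AddChar (ZMod p × ZMod p) ℂ, φ ≠ 1 →
        ∀ s ∈ S \ T, eIdem p φ e * adjMat s = 0)) ∧
    ((∀ φ : AddChar (ZMod p × ZMod p) ℂ, φ ≠ 1 →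
        ∀ s ∈ S \ T, eIdem p φ e * adjMat s = 0) ↔
      (∀ s ∈ S \ T, cprod S (cprod S T {s}) T = {s})) := by
  constructor
  · constructor
    · intro hA
      exact AS.thmCB hS hT he (AS.thmAC hS hT he hq hquot hA)
    · intro hB
      exact AS.thmCA hS hT he hq hquot (AS.thmBC hS hT he hp hB)
  · constructor
    · intro hB
      exact AS.thmBC hS hT he hp hB
    · intro hC
      exact AS.thmCB hS hT he hC
end

section
/- Let (X,S) be an association scheme whose thin residue T = O^θ(S) is C_p × C_p and with S//T cyclic of prime order q. For every nonprincipal irreducible character φ of T and every s ∈ S \ T, the following are equivalent: (i) L(s) = Ker φ; (ii) e_φ σ_s ≠ 0 in the adjacency algebra; (iii) ℂe_φ ⊗_{ℂT} ℂ(TsT) ≠ 0. -/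
open scoped Classical

set_option linter.unusedSectionVars false

section Basics
variable {X : Type*} [Fintype X] {S : Set (Set (X × X))} (hS : IsScheme S)

/-- relation composition -/
def rcomp (a b : Set (X × X)) : Set (X × X) := {p | ∃ z, (p.1, z) ∈ a ∧ (z, p.2) ∈ b}

lemma mem_rcomp {a b : Set (X × X)} {x y : X} :
    (x, y) ∈ rcomp a b ↔ ∃ z, (x, z) ∈ a ∧ (z, y) ∈ b := Iff.rfl

lemma rcomp_assoc (a b c : Set (X × X)) : rcomp (rcomp a b) c = rcomp a (rcomp b c) := by
  ext ⟨x, y⟩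
  constructor
  · rintro ⟨z, ⟨w, hw1, hw2⟩, hz⟩; exact ⟨w, hw1, z, hw2, hz⟩
  · rintro ⟨w, hw, z, hz1, hz2⟩; exact ⟨z, ⟨w, hw, hz1⟩, hz2⟩

lemma rcomp_diag (a : Set (X × X)) : rcomp a (diagRel X) = a := by
  ext ⟨x, y⟩
  constructor
  · rintro ⟨z, hz, h⟩; cases h; exact hz
  · intro h; exact ⟨y, h, rfl⟩

lemma diag_rcomp (a : Set (X × X)) : rcomp (diagRel X) a = a := by
  ext ⟨x, y⟩
  constructor
  · rintro ⟨z, h, hz⟩; cases h; exact hz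
  · intro h; exact ⟨x, rfl, h⟩

lemma conv_conv (a : Set (X × X)) : conv (conv a) = a := rfl

lemma conv_rcomp (a b : Set (X × X)) : conv (rcomp a b) = rcomp (conv b) (conv a) := by
  ext ⟨x, y⟩
  constructor
  · rintro ⟨z, hz1, hz2⟩; exact ⟨z, hz2, hz1⟩
  · rintro ⟨z, hz1, hz2⟩; exact ⟨z, hz2, hz1⟩

lemma rcomp_mono_right {a : Set (X × X)} {b c : Set (X × X)} (h : b ⊆ c) :
    rcomp a b ⊆ rcomp a c := by rintro ⟨x, y⟩ ⟨z, h1, h2⟩; exact ⟨z, h1, h h2⟩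

include hS

lemma rel_nonempty {u : Set (X × X)} (hu : u ∈ S) : u.Nonempty := hS.2.1 u hu

lemma rel_unique {u v : Set (X × X)} (hu : u ∈ S) (hv : v ∈ S) {x y : X}
    (hxu : (x, y) ∈ u) (hxv : (x, y) ∈ v) : u = v := by
  obtain ⟨w, -, hw⟩ := hS.1 x y
  rw [hw u ⟨hu, hxu⟩, hw v ⟨hv, hxv⟩]

lemma exists_rel (x y : X) : ∃ u ∈ S, (x, y) ∈ u := by
  obtain ⟨w, hw, -⟩ := hS.1 x y; exact ⟨w, hw.1, hw.2⟩

lemma pt_nonempty : Nonempty X := by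
  obtain ⟨⟨x, y⟩, -⟩ := rel_nonempty hS hS.2.2.1; exact ⟨x⟩

lemma count_const {s t u : Set (X × X)} (hs : s ∈ S) (ht : t ∈ S) (hu : u ∈ S)
    {x y x' y' : X} (h : (x, y) ∈ u) (h' : (x', y') ∈ u) :
    Nat.card {z : X | (x, z) ∈ s ∧ (z, y) ∈ t} = Nat.card {z : X | (x', z) ∈ s ∧ (z, y') ∈ t} :=
  hS.2.2.2.2 s hs t ht u hu (x, y) h (x', y') h'

lemma inum_eq {s t u : Set (X × X)} (hs : s ∈ S) (ht : t ∈ S) (hu : u ∈ S)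
    {x y : X} (h : (x, y) ∈ u) :
    inum s t u = Nat.card {z : X | (x, z) ∈ s ∧ (z, y) ∈ t} := by
  have : {n | ∃ p ∈ u, n = Nat.card {z : X | (p.1, z) ∈ s ∧ (z, p.2) ∈ t}}
      = {Nat.card {z : X | (x, z) ∈ s ∧ (z, y) ∈ t}} := by
    ext n
    constructor
    · rintro ⟨⟨x', y'⟩, hp, rfl⟩
      exact (count_const hS hs ht hu hp h).symm ▸ rfl
    · rintro rfl; exact ⟨(x, y), h, rfl⟩
  rw [inum, this, csSup_singleton]

lemma inum_ne_zero_iff {s t u : Set (X × X)} (hs : s ∈ S) (ht : t ∈ S) (hu : u ∈ S) :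
    inum s t u ≠ 0 ↔ ∃ x y z, (x, y) ∈ u ∧ (x, z) ∈ s ∧ (z, y) ∈ t := by
  obtain ⟨⟨x0, y0⟩, h0⟩ := rel_nonempty hS hu
  rw [inum_eq hS hs ht hu h0]
  constructor
  · intro h
    have : Nonempty {z : X | (x0, z) ∈ s ∧ (z, y0) ∈ t} := Nat.card_ne_zero.mp h |>.1
    obtain ⟨z, hz⟩ := this
    exact ⟨x0, y0, z, h0, hz.1, hz.2⟩
  · rintro ⟨x, y, z, hxy, hz1, hz2⟩
    rw [count_const hS hs ht hu h0 hxy]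
    have : Nonempty {z : X | (x, z) ∈ s ∧ (z, y) ∈ t} := ⟨⟨z, hz1, hz2⟩⟩
    exact Nat.card_ne_zero.mpr ⟨this, Set.toFinite _⟩

lemma mem_cprod_iff {P Q : Set (Set (X × X))} {v : Set (X × X)} :
    v ∈ cprod S P Q ↔ v ∈ S ∧ ∃ p ∈ P, ∃ q ∈ Q, inum p q v ≠ 0 := Iff.rfl

/-- if a relation meets a composition of relations, it is contained in it -/
lemma sub_of_meet {a b r : Set (X × X)} (ha : a ∈ S) (hb : b ∈ S) (hr : r ∈ S)
    (h : (r ∩ rcomp a b).Nonempty) : r ⊆ rcomp a b := by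
  obtain ⟨⟨x0, y0⟩, h0r, z0, hz1, hz2⟩ := h
  rintro ⟨x, y⟩ hxy
  have hc : Nat.card {z : X | (x, z) ∈ a ∧ (z, y) ∈ b}
      = Nat.card {z : X | (x0, z) ∈ a ∧ (z, y0) ∈ b} := count_const hS ha hb hr hxy h0r
  have hne : Nonempty {z : X | (x0, z) ∈ a ∧ (z, y0) ∈ b} := ⟨⟨z0, hz1, hz2⟩⟩
  have : Nat.card {z : X | (x, z) ∈ a ∧ (z, y) ∈ b} ≠ 0 := by
    rw [hc]; exact Nat.card_ne_zero.mpr ⟨hne, Set.toFinite _⟩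
  obtain ⟨⟨z, hz⟩⟩ := Nat.card_ne_zero.mp this |>.1
  exact ⟨z, hz.1, hz.2⟩

lemma nval_eq {t : Set (X × X)} (ht : t ∈ S) (x : X) :
    nval t = Nat.card {y : X | (x, y) ∈ t} := by
  have key : ∀ x' : X, Nat.card {y : X | (x', y) ∈ t} = Nat.card {y : X | (x, y) ∈ t} := by
    intro x'
    have h1 : ∀ w : X, {z : X | (w, z) ∈ t ∧ (z, w) ∈ conv t} = {z : X | (w, z) ∈ t} := by
      intro w; ext z; simp only [Set.mem_setOf_eq, conv, and_iff_left_iff_imp]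
      intro h; exact h
    have := hS.2.2.2.2 t ht (conv t) (hS.2.2.2.1 t ht) (diagRel X) hS.2.2.1
      (x', x') rfl (x, x) rfl
    simpa only [h1] using this
  have : {n | ∃ x' : X, n = Nat.card {y : X | (x', y) ∈ t}}
      = {Nat.card {y : X | (x, y) ∈ t}} := by
    ext n
    constructor
    · rintro ⟨x', rfl⟩; exact (key x') ▸ rfl
    · rintro rfl; exact ⟨x, rfl⟩
  rw [nval, this, csSup_singleton]

lemma nval_pos {t : Set (X × X)} (ht : t ∈ S) : nval t ≠ 0 := by
  obtain ⟨⟨x, y⟩, hxy⟩ := rel_nonempty hS ht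
  rw [nval_eq hS ht x]
  exact Nat.card_ne_zero.mpr ⟨⟨⟨y, hxy⟩⟩, Set.toFinite _⟩

lemma exists_fwd {t : Set (X × X)} (ht : t ∈ S) (x : X) : ∃ y, (x, y) ∈ t := by
  have := nval_pos hS ht
  rw [nval_eq hS ht x] at this
  obtain ⟨⟨y, hy⟩⟩ := Nat.card_ne_zero.mp this |>.1
  exact ⟨y, hy⟩

lemma exists_bwd {t : Set (X × X)} (ht : t ∈ S) (y : X) : ∃ x, (x, y) ∈ t := by
  obtain ⟨x, hx⟩ := exists_fwd hS (hS.2.2.2.1 t ht) y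
  exact ⟨x, hx⟩

end Basics

section Thin
variable {X : Type*} [Fintype X] {S : Set (Set (X × X))} (hS : IsScheme S)

lemma card_set_eq_sum_fibers (t : Set (X × X)) :
    Nat.card t = ∑ x : X, Nat.card {y : X | (x, y) ∈ t} := by
  rw [Nat.card_eq_fintype_card, ← Set.toFinset_card,
    Finset.card_eq_sum_card_fiberwise (f := Prod.fst) (t := Finset.univ)
      (fun p _ => Finset.mem_univ _)]
  refine Finset.sum_congr rfl fun x _ => ?_
  rw [Nat.card_coe_set_eq, Set.ncard_eq_toFinset_card']
  refine Finset.card_bij' (fun p _ => p.2) (fun y _ => (x, y)) ?_ ?_ ?_ ?_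
  · intro p hp
    simp only [Finset.mem_filter, Set.mem_toFinset] at hp ⊢
    obtain ⟨h1, h2⟩ := hp
    rw [← h2]; exact h1
  · intro y hy
    simp only [Set.mem_toFinset] at hy
    exact Finset.mem_filter.mpr ⟨Set.mem_toFinset.mpr hy, rfl⟩
  · rintro ⟨p1, p2⟩ hp
    simp only [Finset.mem_filter, Set.mem_toFinset] at hp
    simp [← hp.2]
  · intro y hy; rfl

lemma card_set_eq_sum_fibers' (t : Set (X × X)) :
    Nat.card t = ∑ y : X, Nat.card {x : X | (x, y) ∈ t} := by
  have h : Nat.card t = Nat.card (conv t) := by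
    refine Nat.card_congr ⟨fun p => ⟨(p.1.2, p.1.1), p.2⟩, fun p => ⟨(p.1.2, p.1.1), p.2⟩,
      fun p => ?_, fun p => ?_⟩ <;> rfl
  rw [h, card_set_eq_sum_fibers (conv t)]
  rfl

include hS

lemma nval_conv {t : Set (X × X)} (ht : t ∈ S) : nval (conv t) = nval t := by
  have hX : (0 : ℕ) < Fintype.card X := Fintype.card_pos_iff.mpr (pt_nonempty hS)
  have h1 : Nat.card t = Fintype.card X * nval t := by
    rw [card_set_eq_sum_fibers t]
    rw [Finset.sum_congr rfl (fun x _ => (nval_eq hS ht x).symm)]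
    simp [Finset.sum_const, mul_comm]
  have h2 : Nat.card t = Fintype.card X * nval (conv t) := by
    rw [card_set_eq_sum_fibers' t]
    have : ∀ y : X, Nat.card {x : X | (x, y) ∈ t} = nval (conv t) := by
      intro y
      rw [nval_eq hS (hS.2.2.2.1 t ht) y]
      rfl
    rw [Finset.sum_congr rfl (fun y _ => this y)]
    simp [Finset.sum_const, mul_comm]
  have := h1.symm.trans h2
  exact (Nat.eq_of_mul_eq_mul_left hX this).symm

lemma thin_fwd {t : Set (X × X)} (ht : t ∈ S) (h1 : nval t = 1) (x : X) :
    ∃! y, (x, y) ∈ t := by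
  have := (nval_eq hS ht x).symm.trans h1
  obtain ⟨h2, h3⟩ := Nat.card_eq_one_iff_unique.mp this
  obtain ⟨⟨y, hy⟩⟩ := h3
  refine ⟨y, hy, fun y' hy' => ?_⟩
  have := h2.elim ⟨y', hy'⟩ ⟨y, hy⟩
  exact congrArg Subtype.val this

lemma thin_bwd {t : Set (X × X)} (ht : t ∈ S) (h1 : nval t = 1) (y : X) :
    ∃! x, (x, y) ∈ t := by
  have h2 : nval (conv t) = 1 := (nval_conv hS ht).trans h1
  exact thin_fwd hS (hS.2.2.2.1 t ht) h2 y

lemma thin_fwd_unique {t : Set (X × X)} (ht : t ∈ S) (h1 : nval t = 1) {x y y' : X}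
    (h : (x, y) ∈ t) (h' : (x, y') ∈ t) : y = y' := by
  obtain ⟨z, -, hz⟩ := thin_fwd hS ht h1 x
  rw [hz y h, hz y' h']

lemma thin_bwd_unique {t : Set (X × X)} (ht : t ∈ S) (h1 : nval t = 1) {x x' y : X}
    (h : (x, y) ∈ t) (h' : (x', y) ∈ t) : x = x' := by
  obtain ⟨z, -, hz⟩ := thin_bwd hS ht h1 y
  rw [hz x h, hz x' h']

lemma thin_cancel_left {t u : Set (X × X)} (ht : t ∈ S) (h1 : nval t = 1) :
    rcomp (conv t) (rcomp t u) = u := by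
  ext ⟨x, y⟩
  constructor
  · rintro ⟨z, hz1, w, hw1, hw2⟩
    have : x = w := thin_fwd_unique hS ht h1 hz1 hw1
    rw [this]; exact hw2
  · intro h
    obtain ⟨z, hz⟩ := exists_bwd hS ht x
    exact ⟨z, hz, x, hz, h⟩

lemma thin_cancel_left' {t u : Set (X × X)} (ht : t ∈ S) (h1 : nval t = 1) :
    rcomp t (rcomp (conv t) u) = u := by
  ext ⟨x, y⟩
  constructor
  · rintro ⟨z, hz1, w, hw1, hw2⟩
    have : w = x := thin_bwd_unique hS ht h1 hw1 hz1
    rw [← this]; exact hw2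
  · intro h
    obtain ⟨z, hz⟩ := exists_fwd hS ht x
    exact ⟨z, hz, x, hz, h⟩

lemma thin_cancel_right {t u : Set (X × X)} (ht : t ∈ S) (h1 : nval t = 1) :
    rcomp (rcomp u t) (conv t) = u := by
  ext ⟨x, y⟩
  constructor
  · rintro ⟨z, ⟨w, hw1, hw2⟩, hz2⟩
    have hz2' : (y, z) ∈ t := hz2
    have : w = y := thin_bwd_unique hS ht h1 hw2 hz2'
    rw [← this]; exact hw1
  · intro h
    obtain ⟨z, hz⟩ := exists_fwd hS ht y
    exact ⟨z, ⟨y, h, hz⟩, hz⟩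

lemma thin_cancel_right' {t u : Set (X × X)} (ht : t ∈ S) (h1 : nval t = 1) :
    rcomp (rcomp u (conv t)) t = u := by
  ext ⟨x, y⟩
  constructor
  · rintro ⟨z, ⟨w, hw1, hw2⟩, hz2⟩
    have hw2' : (z, w) ∈ t := hw2
    have : w = y := thin_fwd_unique hS ht h1 hw2' hz2
    rw [← this]; exact hw1
  · intro h
    obtain ⟨z, hz⟩ := exists_bwd hS ht y
    exact ⟨z, ⟨y, h, hz⟩, hz⟩

lemma rcomp_conv_self {t : Set (X × X)} (ht : t ∈ S) (h1 : nval t = 1) :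
    rcomp (conv t) t = diagRel X := by
  ext ⟨x, y⟩
  constructor
  · rintro ⟨z, hz1, hz2⟩
    exact thin_fwd_unique hS ht h1 hz1 hz2
  · rintro (h : x = y)
    obtain ⟨z, hz⟩ := exists_bwd hS ht x
    exact ⟨z, hz, h ▸ hz⟩

lemma rcomp_self_conv {t : Set (X × X)} (ht : t ∈ S) (h1 : nval t = 1) :
    rcomp t (conv t) = diagRel X := by
  ext ⟨x, y⟩
  constructor
  · rintro ⟨z, hz1, hz2⟩
    exact thin_bwd_unique hS ht h1 hz1 hz2
  · rintro (h : x = y)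
    obtain ⟨z, hz⟩ := exists_fwd hS ht x
    exact ⟨z, hz, h ▸ hz⟩

lemma rcomp_mem_left {t u : Set (X × X)} (ht : t ∈ S) (h1 : nval t = 1) (hu : u ∈ S) :
    rcomp t u ∈ S := by
  have hX := pt_nonempty hS
  obtain ⟨x0⟩ := hX
  obtain ⟨z0, hz0⟩ := exists_fwd hS ht x0
  obtain ⟨y0, hy0⟩ := exists_fwd hS hu z0
  have hm : (x0, y0) ∈ rcomp t u := ⟨z0, hz0, hy0⟩
  obtain ⟨r, hr, hr0⟩ := exists_rel hS x0 y0
  have hsub : r ⊆ rcomp t u := sub_of_meet hS ht hu hr ⟨(x0, y0), hr0, hm⟩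
  have husub : u ⊆ rcomp (conv t) r := by
    obtain ⟨⟨a, b⟩, hab⟩ := rel_nonempty hS hr
    obtain ⟨z', hz1, hz2⟩ := hsub hab
    refine sub_of_meet hS (hS.2.2.2.1 t ht) hr hu ⟨(z', b), hz2, a, hz1, hab⟩
  have : rcomp t u ⊆ r := by
    have := rcomp_mono_right (a := t) husub
    rwa [thin_cancel_left' hS ht h1] at this
  have heq : rcomp t u = r := le_antisymm this hsub
  rw [heq]; exact hr

lemma rcomp_mem_right {t u : Set (X × X)} (hu : u ∈ S) (ht : t ∈ S) (h1 : nval t = 1) :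
    rcomp u t ∈ S := by
  have h2 : nval (conv t) = 1 := (nval_conv hS ht).trans h1
  have := rcomp_mem_left hS (hS.2.2.2.1 t ht) h2 (hS.2.2.2.1 u hu)
  have h3 := hS.2.2.2.1 _ this
  rwa [conv_rcomp, conv_conv, conv_conv] at h3

lemma inum_thin_left {t u v : Set (X × X)} (ht : t ∈ S) (h1 : nval t = 1) (hu : u ∈ S)
    (hv : v ∈ S) : inum t u v ≠ 0 ↔ v = rcomp t u := by
  constructor
  · intro h
    obtain ⟨x, y, z, hxy, hz1, hz2⟩ := (inum_ne_zero_iff hS ht hu hv).mp h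
    exact rel_unique hS hv (rcomp_mem_left hS ht h1 hu) hxy ⟨z, hz1, hz2⟩
  · rintro rfl
    obtain ⟨⟨x, y⟩, z, hz1, hz2⟩ := rel_nonempty hS (rcomp_mem_left hS ht h1 hu)
    exact (inum_ne_zero_iff hS ht hu (rcomp_mem_left hS ht h1 hu)).mpr
      ⟨x, y, z, ⟨z, hz1, hz2⟩, hz1, hz2⟩

lemma inum_thin_right {t u v : Set (X × X)} (hu : u ∈ S) (ht : t ∈ S) (h1 : nval t = 1)
    (hv : v ∈ S) : inum u t v ≠ 0 ↔ v = rcomp u t := by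
  constructor
  · intro h
    obtain ⟨x, y, z, hxy, hz1, hz2⟩ := (inum_ne_zero_iff hS hu ht hv).mp h
    exact rel_unique hS hv (rcomp_mem_right hS hu ht h1) hxy ⟨z, hz1, hz2⟩
  · rintro rfl
    obtain ⟨⟨x, y⟩, z, hz1, hz2⟩ := rel_nonempty hS (rcomp_mem_right hS hu ht h1)
    exact (inum_ne_zero_iff hS hu ht (rcomp_mem_right hS hu ht h1)).mpr
      ⟨x, y, z, ⟨z, hz1, hz2⟩, hz1, hz2⟩

lemma nval_rcomp_thin {t u : Set (X × X)} (ht : t ∈ S) (h1 : nval t = 1) (hu : u ∈ S)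
    (h2 : nval u = 1) : nval (rcomp t u) = 1 := by
  have hm := rcomp_mem_left hS ht h1 hu
  obtain ⟨x0⟩ := pt_nonempty hS
  rw [nval_eq hS hm x0]
  rw [Nat.card_eq_one_iff_unique]
  constructor
  · constructor
    rintro ⟨y, z, hz1, hz2⟩ ⟨y', z', hz1', hz2'⟩
    have hz : z = z' := thin_fwd_unique hS ht h1 hz1 hz1'
    subst hz
    have : y = y' := thin_fwd_unique hS hu h2 hz2 hz2'
    simp [this]
  · obtain ⟨z, hz⟩ := exists_fwd hS ht x0
    obtain ⟨y, hy⟩ := exists_fwd hS hu z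
    exact ⟨⟨y, z, hz, hy⟩⟩

end Thin

section TGroup
variable {X : Type*} [Fintype X] {S T : Set (Set (X × X))} {p : ℕ} [NeZero p]
  {e : ZMod p × ZMod p → Set (X × X)}
  (hS : IsScheme S) (hT : thinResidue S = T) (he : IsoElemAb S T p e)

lemma cprod_mono {P P' Q Q' : Set (Set (X × X))} (hP : P ⊆ P') (hQ : Q ⊆ Q') :
    cprod S P Q ⊆ cprod S P' Q' := by
  rintro v ⟨hv, p', hp, q', hq, h⟩
  exact ⟨hv, p', hP hp, q', hQ hq, h⟩

include hS

lemma SN_self : IsStronglyNormal S S :=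
  ⟨⟨⟨diagRel X, hS.2.2.1⟩, subset_rfl, fun u hu => hu.1⟩, fun _ _ u hu => hu.1⟩

include hT

lemma T_sub_SN {W : Set (Set (X × X))} (hW : IsStronglyNormal S W) : T ⊆ W := by
  rw [← hT]; exact Set.sInter_subset_of_mem hW

lemma T_sub_S : T ⊆ S := T_sub_SN hS hT (SN_self hS)

lemma mem_T_of_SN {v : Set (X × X)} (h : ∀ W, IsStronglyNormal S W → v ∈ W) : v ∈ T := by
  rw [← hT]; exact Set.mem_sInter.mpr fun W hW => h W hW

lemma T_SN (hne : T.Nonempty) : IsStronglyNormal S T := by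
  constructor
  · refine ⟨hne, T_sub_S hS hT, ?_⟩
    · intro v hv
      exact mem_T_of_SN hS hT fun W hW => hW.1.2.2 (cprod_mono (T_sub_SN hS hT hW) (T_sub_SN hS hT hW) hv)
  · intro s hsS v hv
    exact mem_T_of_SN hS hT fun W hW =>
      hW.2 s hsS (cprod_mono (cprod_mono subset_rfl (T_sub_SN hS hT hW)) subset_rfl hv)

include he

lemma e_mem_T (a : ZMod p × ZMod p) : e a ∈ T := he.1 a

lemma e_mem_S (a : ZMod p × ZMod p) : e a ∈ S := T_sub_S hS hT (he.1 a)

lemma diag_mem_T : diagRel X ∈ T := he.2.2.2.1 ▸ he.1 0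

lemma T_nonempty' : T.Nonempty := ⟨e 0, he.1 0⟩

lemma e_pair {a b : ZMod p × ZMod p} {x y z : X} (h1 : (x, y) ∈ e a) (h2 : (y, z) ∈ e b) :
    (x, z) ∈ e (a + b) := by
  obtain ⟨r, hr, hrm⟩ := exists_rel hS x z
  have hmem : r ∈ cprod S {e a} {e b} :=
    ⟨hr, e a, rfl, e b, rfl,
      (inum_ne_zero_iff hS (e_mem_S hS hT he a) (e_mem_S hS hT he b) hr).mpr
        ⟨x, z, y, hrm, h1, h2⟩⟩
  rw [he.2.2.2.2 a b] at hmem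
  exact hmem ▸ hrm

lemma conv_e (a : ZMod p × ZMod p) : conv (e a) = e (-a) := by
  have hd : diagRel X ∈ cprod S {e a} {e (-a)} := by
    rw [he.2.2.2.2 a (-a), add_neg_cancel, he.2.2.2.1]
    rfl
  obtain ⟨-, p', hp, q', hq, hne⟩ := hd
  rw [Set.mem_singleton_iff] at hp hq
  subst hp; subst hq
  obtain ⟨x, y, z, hxy, h1, h2⟩ :=
    (inum_ne_zero_iff hS (e_mem_S hS hT he a) (e_mem_S hS hT he (-a)) hS.2.2.1).mp hne
  have hxy' : x = y := hxy
  subst hxy'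
  have hc : (z, x) ∈ conv (e a) := h1
  exact rel_unique hS (hS.2.2.2.1 _ (e_mem_S hS hT he a)) (e_mem_S hS hT he (-a)) hc h2

lemma e_thin (a : ZMod p × ZMod p) : nval (e a) = 1 := by
  obtain ⟨x0⟩ := pt_nonempty hS
  rw [nval_eq hS (e_mem_S hS hT he a) x0, Nat.card_eq_one_iff_unique]
  constructor
  · constructor
    rintro ⟨y, hy⟩ ⟨y', hy'⟩
    have h1 : (y', x0) ∈ e (-a) := by rw [← conv_e hS hT he a]; exact hy'
    have h2 : (y', y) ∈ e (-a + a) := e_pair hS hT he h1 hy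
    rw [neg_add_cancel, he.2.2.2.1] at h2
    have : y' = y := h2
    simp [this]
  · obtain ⟨y, hy⟩ := exists_fwd hS (e_mem_S hS hT he a) x0
    exact ⟨⟨y, hy⟩⟩

lemma rcomp_e (a b : ZMod p × ZMod p) : rcomp (e a) (e b) = e (a + b) := by
  have hmem : e (a + b) ∈ cprod S {e a} {e b} := by
    rw [he.2.2.2.2 a b]; rfl
  obtain ⟨hv, p', hp, q', hq, hne⟩ := hmem
  rw [Set.mem_singleton_iff] at hp hq
  subst hp; subst hq
  exact ((inum_thin_left hS (e_mem_S hS hT he a) (e_thin hS hT he a) (e_mem_S hS hT he b)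
    (e_mem_S hS hT he (a + b))).mp hne).symm

lemma T_rcomp_mem {t t' : Set (X × X)} (ht : t ∈ T) (ht' : t' ∈ T) : rcomp t t' ∈ T := by
  obtain ⟨a, rfl⟩ := he.2.2.1 t ht
  obtain ⟨b, rfl⟩ := he.2.2.1 t' ht'
  rw [rcomp_e hS hT he]
  exact he.1 _

lemma T_conv_mem {t : Set (X × X)} (ht : t ∈ T) : conv t ∈ T := by
  obtain ⟨a, rfl⟩ := he.2.2.1 t ht
  rw [conv_e hS hT he]
  exact he.1 _

lemma T_thin {t : Set (X × X)} (ht : t ∈ T) : nval t = 1 := by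
  obtain ⟨a, rfl⟩ := he.2.2.1 t ht
  exact e_thin hS hT he a

omit he

lemma ss_conv_T {w v : Set (X × X)} (hw : w ∈ S) (hv : v ∈ S) (hdiag : diagRel X ∈ T)
    (hne : inum (conv w) w v ≠ 0) : v ∈ T := by
  apply (T_SN hS hT ⟨diagRel X, hdiag⟩).2 w hw
  refine ⟨hv, conv w, ⟨hS.2.2.2.1 w hw, conv w, rfl, diagRel X, hdiag, ?_⟩, w, rfl, hne⟩
  obtain ⟨⟨x, y⟩, hxy⟩ := rel_nonempty hS (hS.2.2.2.1 w hw)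
  exact (inum_ne_zero_iff hS (hS.2.2.2.1 w hw) hS.2.2.1 (hS.2.2.2.1 w hw)).mpr
    ⟨x, y, y, hxy, hxy, rfl⟩

lemma s_conv_s_T {w v : Set (X × X)} (hw : w ∈ S) (hv : v ∈ S) (hdiag : diagRel X ∈ T)
    (hne : inum w (conv w) v ≠ 0) : v ∈ T := by
  have := ss_conv_T hS hT (hS.2.2.2.1 w hw) hv hdiag
  rw [conv_conv] at this
  exact this hne

include he

lemma conj_thin_mem_T {w t : Set (X × X)} (hw : w ∈ S) (h1 : nval w = 1) (ht : t ∈ T) :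
    rcomp (rcomp (conv w) t) w ∈ T := by
  have hconv := hS.2.2.2.1 w hw
  have h1' : nval (conv w) = 1 := (nval_conv hS hw).trans h1
  have hr1 : rcomp (conv w) t ∈ S := rcomp_mem_left hS hconv h1' (T_sub_S hS hT ht)
  have hr2 : rcomp (rcomp (conv w) t) w ∈ S := rcomp_mem_right hS hr1 hw h1
  apply (T_SN hS hT ⟨e 0, he.1 0⟩).2 w hw
  refine ⟨hr2, rcomp (conv w) t, ⟨hr1, conv w, rfl, t, ht, ?_⟩, w, rfl, ?_⟩
  · exact (inum_thin_left hS hconv h1' (T_sub_S hS hT ht) hr1).mpr rfl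
  · exact (inum_thin_right hS hr1 hw h1 hr2).mpr rfl

lemma pair_T {u w' : Set (X × X)} (hu : u ∈ S) (hw' : w' ∈ S) {a : ZMod p × ZMod p} {x y : X}
    (hmem : (x, y) ∈ w') (hcomp : (x, y) ∈ rcomp (conv u) (rcomp (e a) u)) : w' ∈ T := by
  obtain ⟨z, hz1, z', hz1', hz2'⟩ := hcomp
  obtain ⟨v'', hv'', hvm⟩ := exists_rel hS x z'
  have hv''T : v'' ∈ cprod S {conv u} T :=
    ⟨hv'', conv u, rfl, e a, he.1 a,
      (inum_ne_zero_iff hS (hS.2.2.2.1 u hu) (e_mem_S hS hT he a) hv'').mpr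
        ⟨x, z', z, hvm, hz1, hz1'⟩⟩
  apply (T_SN hS hT ⟨e 0, he.1 0⟩).2 u hu
  exact ⟨hw', v'', hv''T, u, rfl,
    (inum_ne_zero_iff hS hv'' hu hw').mpr ⟨x, y, z', hmem, hvm, hz2'⟩⟩

end TGroup

noncomputable def clsS {X : Type*} (S T : Set (Set (X × X))) (u : Set (X × X)) :
    Set (Set (X × X)) := cprod S (cprod S T {u}) T

def sPow {X : Type*} (s : Set (X × X)) : ℕ → Set (X × X) :=
  fun k => Nat.rec (diagRel X) (fun _ ih => rcomp ih s) k

section Cls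
variable {X : Type*} [Fintype X] {S T : Set (Set (X × X))} {p : ℕ} [NeZero p]
  {e : ZMod p × ZMod p → Set (X × X)}
  (hS : IsScheme S) (hT : thinResidue S = T) (he : IsoElemAb S T p e)

lemma sPow_zero (s : Set (X × X)) : sPow s 0 = diagRel X := rfl
lemma sPow_succ (s : Set (X × X)) (k : ℕ) : sPow s (k + 1) = rcomp (sPow s k) s := rfl

lemma sPow_add (s : Set (X × X)) (j k : ℕ) :
    sPow s (j + k) = rcomp (sPow s j) (sPow s k) := by
  induction k with
  | zero => rw [Nat.add_zero, sPow_zero, rcomp_diag]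
  | succ n ih =>
    show sPow s ((j + n) + 1) = _
    rw [sPow_succ, ih, sPow_succ, rcomp_assoc]

lemma cls_sub_S {S T : Set (Set (X × X))} {u : Set (X × X)} : clsS S T u ⊆ S := fun _ hv => hv.1

include hS

lemma diag_thin : nval (diagRel X) = 1 := by
  obtain ⟨x0⟩ := pt_nonempty hS
  rw [nval_eq hS hS.2.2.1 x0]
  rw [show {y : X | (x0, y) ∈ diagRel X} = {x0} by ext y; simp [diagRel, eq_comm]]
  simp

lemma sPow_mem {s : Set (X × X)} (hs : s ∈ S) (h1 : nval s = 1) (k : ℕ) :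
    sPow s k ∈ S ∧ nval (sPow s k) = 1 := by
  induction k with
  | zero => exact ⟨hS.2.2.1, diag_thin hS⟩
  | succ n ih =>
    exact ⟨rcomp_mem_right hS ih.1 hs h1, nval_rcomp_thin hS ih.1 ih.2 hs h1⟩

include hT he

lemma mem_cls_iff {u v : Set (X × X)} (hu : u ∈ S) :
    v ∈ clsS S T u ↔ ∃ a b, v = rcomp (rcomp (e a) u) (e b) := by
  constructor
  · rintro ⟨hv, p', hpmem, t', ht', hne⟩
    obtain ⟨hp, t, htT, q2, hq, hne2⟩ := hpmem
    rw [Set.mem_singleton_iff] at hq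
    rw [hq] at hne2
    obtain ⟨a, rfl⟩ := he.2.2.1 t htT
    obtain ⟨b, rfl⟩ := he.2.2.1 t' ht'
    have hpe : p' = rcomp (e a) u :=
      (inum_thin_left hS (e_mem_S hS hT he a) (e_thin hS hT he a) hu hp).mp hne2
    subst hpe
    have hve : v = rcomp (rcomp (e a) u) (e b) :=
      (inum_thin_right hS hp (e_mem_S hS hT he b) (e_thin hS hT he b) hv).mp hne
    exact ⟨a, b, hve⟩
  · rintro ⟨a, b, rfl⟩
    have hp : rcomp (e a) u ∈ S := rcomp_mem_left hS (e_mem_S hS hT he a) (e_thin hS hT he a) hu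
    have hv : rcomp (rcomp (e a) u) (e b) ∈ S :=
      rcomp_mem_right hS hp (e_mem_S hS hT he b) (e_thin hS hT he b)
    refine ⟨hv, rcomp (e a) u, ⟨hp, e a, he.1 a, u, rfl, ?_⟩, e b, he.1 b, ?_⟩
    · exact (inum_thin_left hS (e_mem_S hS hT he a) (e_thin hS hT he a) hu hp).mpr rfl
    · exact (inum_thin_right hS hp (e_mem_S hS hT he b) (e_thin hS hT he b) hv).mpr rfl

lemma self_mem_cls {u : Set (X × X)} (hu : u ∈ S) : u ∈ clsS S T u := by
  rw [mem_cls_iff hS hT he hu]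
  exact ⟨0, 0, by rw [he.2.2.2.1, diag_rcomp, rcomp_diag]⟩

lemma cls_form (a a' b b' : ZMod p × ZMod p) (u : Set (X × X)) :
    rcomp (rcomp (e a') (rcomp (rcomp (e a) u) (e b))) (e b') =
      rcomp (rcomp (e (a' + a)) u) (e (b + b')) := by
  simp only [← rcomp_assoc, rcomp_e hS hT he]
  rw [rcomp_assoc _ (e b) (e b'), rcomp_e hS hT he]

lemma cls_congr {u v : Set (X × X)} (hu : u ∈ S) (hv : v ∈ clsS S T u) :
    clsS S T v = clsS S T u := by
  have hvS : v ∈ S := cls_sub_S hv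
  obtain ⟨a, b, hvf⟩ := (mem_cls_iff hS hT he hu).mp hv
  ext w
  rw [mem_cls_iff hS hT he hvS, mem_cls_iff hS hT he hu]
  constructor
  · rintro ⟨a', b', rfl⟩
    subst hvf
    exact ⟨a' + a, b + b', cls_form hS hT he a a' b b' u⟩
  · rintro ⟨c, d', rfl⟩
    refine ⟨c - a, d' - b, ?_⟩
    subst hvf
    rw [cls_form hS hT he]
    rw [sub_add_cancel, add_sub_cancel]

end Cls

section Count
variable {X : Type*} [Fintype X] {S T : Set (Set (X × X))} {p : ℕ} [NeZero p]
  {e : ZMod p × ZMod p → Set (X × X)}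
  (hS : IsScheme S) (hT : thinResidue S = T) (he : IsoElemAb S T p e)

include hS hT he

lemma no_thin_outside {q : ℕ} (hq : q.Prime) (hp : p.Prime)
    {s : Set (X × X)} (hs : s ∈ S) (h1 : nval s = 1) (hsT : s ∉ T)
    (hquot : Nat.card {C : Set (Set (X × X)) | ∃ u ∈ S, C = clsS S T u} = q) : False := by
  classical
  have hsp : ∀ k, sPow s k ∈ S ∧ nval (sPow s k) = 1 := fun k => sPow_mem hS hs h1 k
  have hex : ∃ k, 0 < k ∧ sPow s k ∈ T := by
    have key : ∀ i j : ℕ, i < j → sPow s i = sPow s j → ∃ k, 0 < k ∧ sPow s k ∈ T := by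
      intro i j hlt hEq
      refine ⟨j - i, Nat.sub_pos_of_lt hlt, ?_⟩
      have h2 : sPow s j = rcomp (sPow s i) (sPow s (j - i)) := by
        rw [← sPow_add, Nat.add_sub_cancel' (le_of_lt hlt)]
      have h3 : sPow s (j - i) = rcomp (conv (sPow s i)) (sPow s j) := by
        rw [h2, thin_cancel_left hS (hsp i).1 (hsp i).2]
      rw [h3, ← hEq, rcomp_conv_self hS (hsp i).1 (hsp i).2]
      exact diag_mem_T hS hT he
    obtain ⟨i, j, hne, hij⟩ := Finite.exists_ne_map_eq_of_infinite (f := fun k : ℕ => sPow s k)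
    rcases lt_trichotomy i j with h | h | h
    · exact key i j h hij
    · exact absurd h hne
    · exact key j i h hij.symm
  set d := Nat.find hex with hdDef
  obtain ⟨hd0, hdT⟩ : 0 < d ∧ sPow s d ∈ T := Nat.find_spec hex
  have hdmin : ∀ m, 0 < m → m < d → sPow s m ∉ T := fun m hm hmd hmem =>
    Nat.find_min hex hmd ⟨hm, hmem⟩
  have hpow_dvd : ∀ m : ℕ, sPow s (d * m) ∈ T := by
    intro m
    induction m with
    | zero => simpa [sPow_zero] using diag_mem_T hS hT he
    | succ n ih =>
      have harith : d * (n + 1) = d * n + d := by ring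
      rw [harith, sPow_add]
      exact T_rcomp_mem hS hT he ih hdT
  have hT_dvd : ∀ k : ℕ, sPow s k ∈ T → d ∣ k := by
    intro k hk
    have h2 : sPow s k = rcomp (sPow s (d * (k / d))) (sPow s (k % d)) := by
      rw [← sPow_add, Nat.div_add_mod]
    have h3 : sPow s (k % d) = rcomp (conv (sPow s (d * (k / d)))) (sPow s k) := by
      rw [h2, thin_cancel_left hS (hsp _).1 (hsp _).2]
    have hdm : sPow s (k % d) ∈ T := by
      rw [h3]
      exact T_rcomp_mem hS hT he (T_conv_mem hS hT he (hpow_dvd _)) hk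
    by_contra hnd
    have hr0 : k % d ≠ 0 := fun h => hnd (Nat.dvd_of_mod_eq_zero h)
    exact hdmin (k % d) (Nat.pos_of_ne_zero hr0) (Nat.mod_lt _ hd0) hdm
  have hClsMem : ∀ (k : ℕ) (u : Set (X × X)), u ∈ S → rcomp u (sPow s k) ∈ S :=
    fun k u hu => rcomp_mem_right hS hu (hsp k).1 (hsp k).2
  have hWD : ∀ u ∈ S, ∀ v ∈ clsS S T u, ∀ k : ℕ,
      clsS S T (rcomp v (sPow s k)) = clsS S T (rcomp u (sPow s k)) := by
    intro u hu v hv k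
    obtain ⟨a, b, hvf⟩ := (mem_cls_iff hS hT he hu).mp hv
    have hwS : sPow s k ∈ S := (hsp k).1
    have hw1 : nval (sPow s k) = 1 := (hsp k).2
    have hconj : rcomp (rcomp (conv (sPow s k)) (e b)) (sPow s k) ∈ T :=
      conj_thin_mem_T hS hT he hwS hw1 (he.1 b)
    obtain ⟨c, hc⟩ := he.2.2.1 _ hconj
    have hkey : rcomp v (sPow s k) = rcomp (rcomp (e a) (rcomp u (sPow s k))) (e c) := by
      rw [hvf, hc]
      rw [rcomp_assoc (rcomp (e a) u) (e b) (sPow s k)]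
      have hbw : rcomp (e b) (sPow s k) =
          rcomp (sPow s k) (rcomp (rcomp (conv (sPow s k)) (e b)) (sPow s k)) := by
        rw [rcomp_assoc (conv (sPow s k)) (e b) (sPow s k), thin_cancel_left' hS hwS hw1]
      rw [hbw, ← rcomp_assoc (rcomp (e a) u) (sPow s k) _, rcomp_assoc (e a) u (sPow s k)]
    have hmem : rcomp v (sPow s k) ∈ clsS S T (rcomp u (sPow s k)) := by
      rw [mem_cls_iff hS hT he (hClsMem k u hu)]
      exact ⟨a, c, hkey⟩
    exact cls_congr hS hT he (hClsMem k u hu) hmem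
  have hCan : ∀ u ∈ S, ∀ k : ℕ, rcomp u (sPow s k) ∈ clsS S T u → sPow s k ∈ T := by
    intro u hu k hmem
    have hwS : sPow s k ∈ S := (hsp k).1
    have hw1 : nval (sPow s k) = 1 := (hsp k).2
    obtain ⟨a, b, hform⟩ := (mem_cls_iff hS hT he hu).mp hmem
    have hw'S : rcomp (sPow s k) (e (-b)) ∈ S :=
      rcomp_mem_right hS hwS (e_mem_S hS hT he (-b)) (e_thin hS hT he (-b))
    have huw' : rcomp u (rcomp (sPow s k) (e (-b))) = rcomp (e a) u := by
      rw [← rcomp_assoc, hform, rcomp_assoc, rcomp_e hS hT he, add_neg_cancel, he.2.2.2.1,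
        rcomp_diag]
    have hw'T : rcomp (sPow s k) (e (-b)) ∈ T := by
      obtain ⟨⟨x, y⟩, hxy⟩ := rel_nonempty hS hw'S
      obtain ⟨z, hz⟩ := exists_bwd hS hu x
      have hzy : (z, y) ∈ rcomp (e a) u := by
        rw [← huw']; exact ⟨x, hz, hxy⟩
      exact pair_T hS hT he hu hw'S hxy ⟨z, hz, hzy⟩
    have hwT : sPow s k = rcomp (rcomp (sPow s k) (e (-b))) (e b) := by
      rw [← conv_e hS hT he b,
        thin_cancel_right' hS (e_mem_S hS hT he b) (e_thin hS hT he b)]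
    rw [hwT]
    exact T_rcomp_mem hS hT he hw'T (he.1 b)
  set act : ℕ → Set (Set (X × X)) → Set (Set (X × X)) :=
    fun k C => ⋃ u ∈ {u | u ∈ S ∧ clsS S T u = C}, clsS S T (rcomp u (sPow s k)) with hact
  have act_cls : ∀ u ∈ S, ∀ k : ℕ, act k (clsS S T u) = clsS S T (rcomp u (sPow s k)) := by
    intro u hu k
    apply subset_antisymm
    · intro w hw
      simp only [hact, Set.mem_iUnion, Set.mem_setOf_eq] at hw
      obtain ⟨v, ⟨hvS, hvcls⟩, hwmem⟩ := hw
      have hvmem : v ∈ clsS S T u := hvcls ▸ self_mem_cls hS hT he hvS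
      rwa [hWD u hu v hvmem k] at hwmem
    · intro w hw
      simp only [hact, Set.mem_iUnion, Set.mem_setOf_eq]
      exact ⟨u, ⟨hu, rfl⟩, hw⟩
  have hper : ∀ u ∈ S, ∀ k m : ℕ,
      clsS S T (rcomp u (sPow s (k + d * m))) = clsS S T (rcomp u (sPow s k)) := by
    intro u hu k m
    obtain ⟨c, hc⟩ := he.2.2.1 _ (hpow_dvd m)
    have hfm : rcomp u (sPow s (k + d * m)) =
        rcomp (rcomp (e 0) (rcomp u (sPow s k))) (e c) := by
      rw [sPow_add, ← rcomp_assoc, he.2.2.2.1, diag_rcomp, hc]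
    apply cls_congr hS hT he (hClsMem k u hu)
    rw [mem_cls_iff hS hT he (hClsMem k u hu)]
    exact ⟨0, c, hfm⟩
  have hcan2 : ∀ u ∈ S, ∀ j k : ℕ, j ≤ k →
      clsS S T (rcomp u (sPow s j)) = clsS S T (rcomp u (sPow s k)) → d ∣ (k - j) := by
    intro u hu j k hjk hEq
    apply hT_dvd
    apply hCan (rcomp u (sPow s j)) (hClsMem j u hu) (k - j)
    have hform : rcomp (rcomp u (sPow s j)) (sPow s (k - j)) = rcomp u (sPow s k) := by
      rw [rcomp_assoc, ← sPow_add, Nat.add_sub_cancel' hjk]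
    rw [hform, hEq]
    exact self_mem_cls hS hT he (hClsMem k u hu)
  set CC : Set (Set (Set (X × X))) := {C | ∃ u ∈ S, C = clsS S T u} with hCC
  have hfin : CC.Finite := Set.toFinite _
  set SC : Finset (Set (Set (X × X))) := hfin.toFinset with hSC
  have hcard : SC.card = q := by
    rw [hSC, ← hquot, Nat.card_coe_set_eq, Set.ncard_eq_toFinset_card _ hfin]
  set g : Set (Set (X × X)) → Set (Set (Set (X × X))) := fun C => {C' | ∃ k : ℕ, C' = act k C}
    with hg
  have hG1 : ∀ u ∈ S, ∀ k : ℕ, g (act k (clsS S T u)) = g (clsS S T u) := by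
    intro u hu k
    ext C'
    simp only [hg, Set.mem_setOf_eq]
    constructor
    · rintro ⟨m, rfl⟩
      refine ⟨k + m, ?_⟩
      rw [act_cls u hu k, act_cls _ (hClsMem k u hu) m, act_cls u hu (k + m), rcomp_assoc,
        ← sPow_add]
    · rintro ⟨m, rfl⟩
      refine ⟨m + k * (d - 1), ?_⟩
      have harith : k + (m + k * (d - 1)) = m + d * k := by
        obtain ⟨n, hn⟩ : ∃ n, d = n + 1 := ⟨d - 1, by omega⟩
        rw [hn, Nat.add_sub_cancel]; ring
      rw [act_cls u hu m, act_cls u hu k, act_cls _ (hClsMem k u hu) (m + k * (d - 1)),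
        rcomp_assoc, ← sPow_add, harith]
      exact (hper u hu m k).symm
  have hfiber : ∀ u₀, u₀ ∈ S → clsS S T u₀ ∈ SC →
      SC.filter (fun C => g C = g (clsS S T u₀)) =
        (Finset.range d).image (fun i => act i (clsS S T u₀)) := by
    intro u₀ hu₀ hC₀
    ext C
    simp only [Finset.mem_filter, Finset.mem_image, Finset.mem_range]
    constructor
    · rintro ⟨hCSC, hgC⟩
      obtain ⟨v, hv, rfl⟩ := by
        have := (Set.Finite.mem_toFinset hfin).mp hCSC
        rw [hCC] at this
        exact this
      have hself : clsS S T v ∈ g (clsS S T v) :=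
        ⟨0, by rw [act_cls v hv 0, sPow_zero, rcomp_diag]⟩
      rw [hgC] at hself
      obtain ⟨m, hm⟩ := hself
      refine ⟨m % d, Nat.mod_lt _ hd0, ?_⟩
      have hper' := hper u₀ hu₀ (m % d) (m / d)
      rw [Nat.mod_add_div m d] at hper'
      rw [hm, act_cls u₀ hu₀ m, act_cls u₀ hu₀ (m % d)]
      exact hper'.symm
    · rintro ⟨i, hi, rfl⟩
      refine ⟨?_, hG1 u₀ hu₀ i⟩
      rw [Set.Finite.mem_toFinset hfin, hCC]
      exact ⟨rcomp u₀ (sPow s i), hClsMem i u₀ hu₀, act_cls u₀ hu₀ i⟩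
  have hinj : ∀ u₀, u₀ ∈ S → Set.InjOn (fun i => act i (clsS S T u₀)) ↑(Finset.range d) := by
    intro u₀ hu₀ i hi j hj hij
    simp only [Finset.coe_range, Set.mem_Iio] at hi hj
    have key : ∀ i j : ℕ, i ≤ j → j < d → act i (clsS S T u₀) = act j (clsS S T u₀) → i = j := by
      intro i j hij' hjd hEq
      rw [act_cls u₀ hu₀ i, act_cls u₀ hu₀ j] at hEq
      have hdvd := hcan2 u₀ hu₀ i j hij' hEq
      rcases Nat.eq_zero_or_pos (j - i) with h0 | h0
      · omega
      · exact absurd (Nat.le_of_dvd h0 hdvd) (by omega)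
    rcases le_total i j with h | h
    · exact key i j h hj hij
    · exact (key j i h hi hij.symm).symm
  have hfibercard : ∀ C₀ ∈ SC, (SC.filter (fun C => g C = g C₀)).card = d := by
    intro C₀ hC₀
    obtain ⟨u₀, hu₀, rfl⟩ := by
      have := (Set.Finite.mem_toFinset hfin).mp hC₀
      rw [hCC] at this
      exact this
    rw [hfiber u₀ hu₀ hC₀, Finset.card_image_of_injOn (hinj u₀ hu₀), Finset.card_range]
  have hsum := Finset.card_eq_sum_card_fiberwise
    (s := SC) (t := SC.image g) (f := g) (fun x hx => Finset.mem_image_of_mem g hx)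
  have hq_eq : q = (SC.image g).card * d := by
    rw [← hcard, hsum]
    exact Finset.sum_const_nat fun b hb => by
      obtain ⟨C₀, hC₀, rfl⟩ := Finset.mem_image.mp hb
      exact hfibercard C₀ hC₀
  have hd_dvd_q : d ∣ q := ⟨(SC.image g).card, by rw [hq_eq, mul_comm]⟩
  have hd1 : d ≠ 1 := by
    intro h
    apply hsT
    have hmem := hdT
    rw [h] at hmem
    rwa [show sPow s 1 = s by rw [sPow_succ, sPow_zero, diag_rcomp]] at hmem
  have hdq : d = q := (hq.eq_one_or_self_of_dvd d hd_dvd_q).resolve_left hd1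
  have hdiagS : diagRel X ∈ S := hS.2.2.1
  have hdiagSC : clsS S T (diagRel X) ∈ SC := by
    rw [Set.Finite.mem_toFinset hfin, hCC]
    exact ⟨diagRel X, hdiagS, rfl⟩
  have hfull : SC.filter (fun C => g C = g (clsS S T (diagRel X))) = SC := by
    apply Finset.eq_of_subset_of_card_le (Finset.filter_subset _ _)
    rw [hfibercard _ hdiagSC, hcard, hdq]
  have hallthin : ∀ u ∈ S, nval u = 1 := by
    intro u hu
    have huSC : clsS S T u ∈ SC := by
      rw [Set.Finite.mem_toFinset hfin, hCC]
      exact ⟨u, hu, rfl⟩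
    have hgu : g (clsS S T u) = g (clsS S T (diagRel X)) := by
      rw [← hfull] at huSC
      exact (Finset.mem_filter.mp huSC).2
    have hselfg : clsS S T u ∈ g (clsS S T u) :=
      ⟨0, by rw [act_cls u hu 0, sPow_zero, rcomp_diag]⟩
    rw [hgu] at hselfg
    obtain ⟨k, hk⟩ := hselfg
    rw [act_cls (diagRel X) hdiagS k, diag_rcomp] at hk
    have humem : u ∈ clsS S T (sPow s k) := hk ▸ self_mem_cls hS hT he hu
    obtain ⟨a, b, rfl⟩ := (mem_cls_iff hS hT he (hsp k).1).mp humem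
    exact nval_rcomp_thin hS
      (rcomp_mem_left hS (e_mem_S hS hT he a) (e_thin hS hT he a) (hsp k).1)
      (nval_rcomp_thin hS (e_mem_S hS hT he a) (e_thin hS hT he a) (hsp k).1 (hsp k).2)
      (e_mem_S hS hT he b) (e_thin hS hT he b)
  have hSNdiag : IsStronglyNormal S {diagRel X} := by
    constructor
    · refine ⟨⟨diagRel X, rfl⟩, Set.singleton_subset_iff.mpr hdiagS, ?_⟩
      rintro v ⟨hv, p', hp, q', hq', hne⟩
      rw [Set.mem_singleton_iff] at hp hq'
      rw [hp, hq'] at hne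
      obtain ⟨x, y, z, hxy, h1', h2'⟩ := (inum_ne_zero_iff hS hdiagS hdiagS hv).mp hne
      have hx : x = z := h1'
      have hz : z = y := h2'
      rw [Set.mem_singleton_iff]
      exact rel_unique hS hv hdiagS hxy (show (x, y) ∈ diagRel X from hx.trans hz)
    · rintro u hu v ⟨hv, p', hpmem, q', hq', hne⟩
      rw [Set.mem_singleton_iff] at hq'
      rw [hq'] at hne
      obtain ⟨hp, t1, ht1, q2, hq2, hne2⟩ := hpmem
      rw [Set.mem_singleton_iff] at ht1 hq2
      rw [ht1] at hne2
      rw [hq2] at hne2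
      obtain ⟨x, y, z, hxy, h1', h2'⟩ :=
        (inum_ne_zero_iff hS (hS.2.2.2.1 u hu) hdiagS hp).mp hne2
      have hzy : z = y := h2'
      rw [hzy] at h1'
      have hp' : p' = conv u := rel_unique hS hp (hS.2.2.2.1 u hu) hxy h1'
      rw [hp'] at hne
      obtain ⟨x', y', z', hxy', h1'', h2''⟩ :=
        (inum_ne_zero_iff hS (hS.2.2.2.1 u hu) hu hv).mp hne
      have h1c : (z', x') ∈ u := h1''
      have hxy'' : x' = y' := thin_fwd_unique hS hu (hallthin u hu) h1c h2''
      rw [Set.mem_singleton_iff]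
      exact rel_unique hS hv hdiagS hxy' hxy''
  have hTd : T ⊆ {diagRel X} := T_sub_SN hS hT hSNdiag
  have h10 : e (1, 0) = diagRel X := hTd (he.1 (1, 0))
  have hcontr : ((1 : ZMod p), (0 : ZMod p)) = 0 := he.2.1 (by rw [h10, he.2.2.2.1])
  haveI : Fact (1 < p) := ⟨hp.one_lt⟩
  exact one_ne_zero (congrArg Prod.fst hcontr)

end Count

section CharSum

variable {p : ℕ} [NeZero p] (φ : AddChar (ZMod p × ZMod p) ℂ)

lemma char_val_ne_zero (a : ZMod p × ZMod p) : φ a ≠ 0 := by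
  intro h
  have h1 : φ a * φ (-a) = 1 := by
    rw [← AddChar.map_add_eq_mul, add_neg_cancel, AddChar.map_zero_eq_one]
  rw [h, zero_mul] at h1
  exact zero_ne_one h1

lemma char_neg_ne_one {a : ZMod p × ZMod p} (h : φ a ≠ 1) : φ (-a) ≠ 1 := by
  intro h'
  have h1 : φ a * φ (-a) = 1 := by
    rw [← AddChar.map_add_eq_mul, add_neg_cancel, AddChar.map_zero_eq_one]
  rw [h', mul_one] at h1
  exact h h1

lemma char_sum_ne_zero_iff (A : Finset (ZMod p × ZMod p)) (h0 : (0 : ZMod p × ZMod p) ∈ A)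
    (hadd : ∀ a ∈ A, ∀ b ∈ A, a + b ∈ A) (hneg : ∀ a ∈ A, -a ∈ A) :
    (∑ c ∈ A, φ (-c)) ≠ 0 ↔ ∀ c ∈ A, φ c = 1 := by
  constructor
  · intro hsum
    by_contra hc
    push_neg at hc
    obtain ⟨c₀, hc₀A, hc₀⟩ := hc
    apply hsum
    have hre : ∑ c ∈ A, φ (-c) = ∑ c ∈ A, φ (-(c + c₀)) := by
      refine Finset.sum_nbij' (fun c => c - c₀) (fun c => c + c₀) ?_ ?_ ?_ ?_ ?_
      · intro a ha
        have := hadd a ha (-c₀) (hneg c₀ hc₀A)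
        simpa [sub_eq_add_neg] using this
      · intro a ha; exact hadd a ha c₀ hc₀A
      · intro a ha; simp
      · intro a ha; simp
      · intro a ha; simp
    have hfac : ∀ c : ZMod p × ZMod p, φ (-(c + c₀)) = φ (-c) * φ (-c₀) := by
      intro c
      rw [neg_add, AddChar.map_add_eq_mul]
    rw [Finset.sum_congr rfl (fun c _ => hfac c), ← Finset.sum_mul] at hre
    have hfin : (∑ c ∈ A, φ (-c)) * (1 - φ (-c₀)) = 0 := by
      rw [mul_sub, mul_one, ← hre, sub_self]
    rcases mul_eq_zero.mp hfin with h | h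
    · exact h
    · exact absurd (eq_of_sub_eq_zero h).symm (char_neg_ne_one φ hc₀)
  · intro hall hzero
    have : ∀ c ∈ A, φ (-c) = 1 := fun c hc => hall (-c) (hneg c hc)
    rw [Finset.sum_congr rfl this, Finset.sum_const, nsmul_eq_mul, mul_one] at hzero
    have hcard : A.card ≠ 0 := Finset.card_ne_zero_of_mem h0
    exact hcard (Nat.cast_injective (hzero.trans (Nat.cast_zero).symm))

end CharSum

section Main
variable {X : Type*} [Fintype X] [DecidableEq X] {S T : Set (Set (X × X))} {p : ℕ} [NeZero p]
  {e : ZMod p × ZMod p → Set (X × X)}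
  (hS : IsScheme S) (hT : thinResidue S = T) (he : IsoElemAb S T p e)

include hS hT he

lemma adj_mul_thin {u : Set (X × X)} (hu : u ∈ S) (a : ZMod p × ZMod p) :
    adjMat (e a) * adjMat u = adjMat (rcomp (e a) u) := by
  ext x y
  rw [Matrix.mul_apply]
  obtain ⟨z0, hz0, huniq⟩ := thin_fwd hS (e_mem_S hS hT he a) (e_thin hS hT he a) x
  rw [Finset.sum_eq_single z0]
  · have hiff : (x, y) ∈ rcomp (e a) u ↔ (z0, y) ∈ u := by
      constructor
      · rintro ⟨z, hz1, hz2⟩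
        rwa [huniq z hz1] at hz2
      · intro h; exact ⟨z0, hz0, h⟩
    by_cases h : (z0, y) ∈ u
    · simp [adjMat, hz0, h, hiff]
    · simp [adjMat, hz0, h, hiff]
  · intro z _ hz
    have : (x, z) ∉ e a := fun hmem => hz (huniq z hmem)
    simp [adjMat, this]
  · intro h
    exact absurd (Finset.mem_univ z0) h

lemma eIdem_mul (u : Set (X × X)) (hu : u ∈ S) (φ : AddChar (ZMod p × ZMod p) ℂ) :
    eIdem p φ e * adjMat u =
      ((p : ℂ) ^ 2)⁻¹ • ∑ a : ZMod p × ZMod p, φ (-a) • adjMat (rcomp (e a) u) := by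
  rw [eIdem, Matrix.smul_mul, Finset.sum_mul]
  congr 1
  refine Finset.sum_congr rfl fun a _ => ?_
  rw [Matrix.smul_mul, adj_mul_thin hS hT he hu a]

lemma stab_iff {u : Set (X × X)} (hu : u ∈ S) {a b : ZMod p × ZMod p} :
    rcomp (e a) u = rcomp (e b) u ↔ rcomp (e (a - b)) u = u := by
  constructor
  · intro h
    have h2 : rcomp (e (-b)) (rcomp (e a) u) = rcomp (e (-b)) (rcomp (e b) u) := by rw [h]
    rw [← rcomp_assoc, ← rcomp_assoc, rcomp_e hS hT he, rcomp_e hS hT he, neg_add_cancel,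
      he.2.2.2.1, diag_rcomp] at h2
    rwa [show -b + a = a - b by ring] at h2
  · intro h
    have : rcomp (e b) (rcomp (e (a - b)) u) = rcomp (e b) u := by rw [h]
    rwa [← rcomp_assoc, rcomp_e hS hT he, show b + (a - b) = a by ring] at this

lemma master {u : Set (X × X)} (hu : u ∈ S) (φ : AddChar (ZMod p × ZMod p) ℂ) :
    eIdem p φ e * adjMat u ≠ 0 ↔ ∀ c, rcomp (e c) u = u → φ c = 1 := by
  classical
  have hscalar : ((p : ℂ) ^ 2)⁻¹ ≠ 0 := by
    apply inv_ne_zero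
    apply pow_ne_zero
    exact_mod_cast (NeZero.ne p)
  set A : Finset (ZMod p × ZMod p) :=
    Finset.univ.filter (fun c => rcomp (e c) u = u) with hA
  have hmemA : ∀ c, c ∈ A ↔ rcomp (e c) u = u := by
    intro c; simp [hA]
  have h0A : (0 : ZMod p × ZMod p) ∈ A := by
    rw [hmemA, he.2.2.2.1, diag_rcomp]
  have haddA : ∀ a ∈ A, ∀ b ∈ A, a + b ∈ A := by
    intro a ha b hb
    rw [hmemA] at ha hb ⊢
    rw [← rcomp_e hS hT he, rcomp_assoc, hb, ha]
  have hnegA : ∀ a ∈ A, -a ∈ A := by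
    intro a ha
    rw [hmemA] at ha ⊢
    conv_lhs => rw [← ha]
    rw [← rcomp_assoc, rcomp_e hS hT he, neg_add_cancel, he.2.2.2.1, diag_rcomp]
  rw [eIdem_mul hS hT he u hu]
  rw [smul_ne_zero_iff, and_iff_right hscalar]
  constructor
  · intro hne
    -- some entry nonzero
    have hentry : ∃ x y, (∑ a : ZMod p × ZMod p, φ (-a) • adjMat (rcomp (e a) u)) x y ≠ 0 := by
      by_contra hall
      push_neg at hall
      apply hne
      ext x y
      exact hall x y
    obtain ⟨x, y, hxy⟩ := hentry
    have hentry_eq : (∑ a : ZMod p × ZMod p, φ (-a) • adjMat (rcomp (e a) u)) x y =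
        ∑ a : ZMod p × ZMod p, if (x, y) ∈ rcomp (e a) u then φ (-a) else 0 := by
      rw [Matrix.sum_apply]
      refine Finset.sum_congr rfl fun a _ => ?_
      by_cases h : (x, y) ∈ rcomp (e a) u <;> simp [adjMat, h]
    rw [hentry_eq] at hxy
    have hex : ∃ a₀, (x, y) ∈ rcomp (e a₀) u := by
      by_contra hnone
      push_neg at hnone
      apply hxy
      refine Finset.sum_eq_zero fun a _ => ?_
      simp [hnone a]
    obtain ⟨a₀, ha₀⟩ := hex
    have hcond : ∀ a, (x, y) ∈ rcomp (e a) u ↔ (a - a₀) ∈ A := by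
      intro a
      rw [hmemA, ← stab_iff hS hT he hu]
      constructor
      · intro h
        exact rel_unique hS
          (rcomp_mem_left hS (e_mem_S hS hT he a) (e_thin hS hT he a) hu)
          (rcomp_mem_left hS (e_mem_S hS hT he a₀) (e_thin hS hT he a₀) hu) h ha₀
      · intro h; rw [h]; exact ha₀
    have hsum_eq : (∑ a : ZMod p × ZMod p, if (x, y) ∈ rcomp (e a) u then φ (-a) else 0) =
        ∑ c ∈ A, φ (-(a₀ + c)) := by
      rw [← Finset.sum_filter]
      refine Finset.sum_nbij' (fun a => a - a₀) (fun c => a₀ + c) ?_ ?_ ?_ ?_ ?_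
      · intro a ha
        simp only [Finset.mem_filter, Finset.mem_univ, true_and] at ha
        exact (hcond a).mp ha
      · intro c hc
        simp only [Finset.mem_filter, Finset.mem_univ, true_and]
        refine (hcond (a₀ + c)).mpr ?_
        simpa using hc
      · intro a _; simp
      · intro c _; simp
      · intro a _
        congr 1
        ring
    rw [hsum_eq] at hxy
    have hfac : ∀ c : ZMod p × ZMod p, φ (-(a₀ + c)) = φ (-a₀) * φ (-c) := by
      intro c; rw [neg_add, AddChar.map_add_eq_mul]
    rw [Finset.sum_congr rfl (fun c _ => hfac c), ← Finset.mul_sum] at hxy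
    have hsumA : (∑ c ∈ A, φ (-c)) ≠ 0 := fun h => hxy (by rw [h, mul_zero])
    have := (char_sum_ne_zero_iff φ A h0A haddA hnegA).mp hsumA
    intro c hc
    exact this c ((hmemA c).mpr hc)
  · intro hall
    have hsumA : (∑ c ∈ A, φ (-c)) ≠ 0 :=
      (char_sum_ne_zero_iff φ A h0A haddA hnegA).mpr fun c hc => hall c ((hmemA c).mp hc)
    obtain ⟨⟨x, y⟩, hxy⟩ := rel_nonempty hS hu
    intro hzero
    apply hsumA
    have hcond : ∀ a, (x, y) ∈ rcomp (e a) u ↔ a ∈ A := by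
      intro a
      rw [hmemA]
      constructor
      · intro h
        exact rel_unique hS
          (rcomp_mem_left hS (e_mem_S hS hT he a) (e_thin hS hT he a) hu) hu h hxy
      · intro h; rw [h]; exact hxy
    have hentry : (∑ a : ZMod p × ZMod p, φ (-a) • adjMat (rcomp (e a) u)) x y = 0 := by
      rw [hzero]; rfl
    rw [Matrix.sum_apply] at hentry
    have hterm : ∀ a : ZMod p × ZMod p,
        (φ (-a) • adjMat (rcomp (e a) u)) x y = if a ∈ A then φ (-a) else 0 := by
      intro a
      by_cases h : a ∈ A
      · have hm := (hcond a).mpr h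
        simp [adjMat, hm, h]
      · have hm : (x, y) ∉ rcomp (e a) u := fun hm => h ((hcond a).mp hm)
        simp [adjMat, hm, h]
    calc ∑ c ∈ A, φ (-c)
        = ∑ a : ZMod p × ZMod p, if a ∈ A then φ (-a) else 0 := by
          rw [Finset.sum_ite_mem, Finset.univ_inter]
      _ = ∑ a : ZMod p × ZMod p, (φ (-a) • adjMat (rcomp (e a) u)) x y :=
          Finset.sum_congr rfl fun a _ => (hterm a).symm
      _ = 0 := hentry

end Main

section Final
variable {X : Type*} [Fintype X] [DecidableEq X] {S T : Set (Set (X × X))} {p : ℕ} [NeZero p]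
  {e : ZMod p × ZMod p → Set (X × X)}
  (hS : IsScheme S) (hT : thinResidue S = T) (he : IsoElemAb S T p e)

include hS hT he

lemma cprod_thin_singleton {t u : Set (X × X)} (ht : t ∈ S) (h1 : nval t = 1) (hu : u ∈ S) :
    cprod S {t} {u} = {rcomp t u} := by
  ext v
  simp only [Set.mem_singleton_iff]
  constructor
  · rintro ⟨hv, p', hp, q', hq, hne⟩
    rw [Set.mem_singleton_iff] at hp hq
    rw [hp, hq] at hne
    exact (inum_thin_left hS ht h1 hu hv).mp hne
  · rintro rfl
    exact ⟨rcomp_mem_left hS ht h1 hu, t, rfl, u, rfl,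
      (inum_thin_left hS ht h1 hu (rcomp_mem_left hS ht h1 hu)).mpr rfl⟩

lemma stab_nontriv {q : ℕ} (hq : q.Prime) (hp : p.Prime) {s : Set (X × X)} (hs : s ∈ S)
    (hsT : s ∉ T)
    (hquot : Nat.card {C : Set (Set (X × X)) | ∃ u ∈ S, C = cprod S (cprod S T {u}) T} = q) :
    ∃ c : ZMod p × ZMod p, c ≠ 0 ∧ rcomp (e c) s = s := by
  have hquot' : Nat.card {C : Set (Set (X × X)) | ∃ u ∈ S, C = clsS S T u} = q := hquot
  have hnval : nval s ≠ 1 := fun h => no_thin_outside hS hT he hq hp hs h hsT hquot'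
  have h2 : 2 ≤ nval s := by
    have := nval_pos hS hs
    omega
  obtain ⟨⟨x, z⟩, hxz⟩ := rel_nonempty hS hs
  have hcardI : Nat.card {w : X | (w, z) ∈ s} = nval s := by
    have ha : nval (conv s) = nval s := nval_conv hS hs
    have hb := nval_eq hS (hS.2.2.2.1 s hs) z
    rw [← ha, hb]
    rfl
  have hx' : ∃ x', (x', z) ∈ s ∧ x' ≠ x := by
    by_contra hno
    push_neg at hno
    have hsub : {w : X | (w, z) ∈ s} ⊆ {x} := fun w hw => hno w hw
    have : Nat.card {w : X | (w, z) ∈ s} ≤ 1 := by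
      rw [Nat.card_coe_set_eq]
      calc Set.ncard {w : X | (w, z) ∈ s} ≤ Set.ncard {x} :=
            Set.ncard_le_ncard hsub (Set.finite_singleton x)
        _ = 1 := Set.ncard_singleton x
    omega
  obtain ⟨x', hx'z, hne⟩ := hx'
  obtain ⟨w, hw, hwm⟩ := exists_rel hS x x'
  have hwT : w ∈ T := by
    apply s_conv_s_T hS hT hs hw (diag_mem_T hS hT he)
    exact (inum_ne_zero_iff hS hs (hS.2.2.2.1 s hs) hw).mpr ⟨x, x', z, hwm, hxz, hx'z⟩
  obtain ⟨c, hc⟩ := he.2.2.1 w hwT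
  refine ⟨c, ?_, ?_⟩
  · rintro rfl
    rw [he.2.2.2.1] at hc
    rw [← hc] at hwm
    exact hne hwm.symm
  · refine rel_unique hS (rcomp_mem_left hS (e_mem_S hS hT he c) (e_thin hS hT he c) hs) hs
      (⟨x', hc.symm ▸ hwm, hx'z⟩ : (x, z) ∈ rcomp (e c) s) hxz

lemma stab_transfer {s u : Set (X × X)} (hs : s ∈ S) (hu : u ∈ clsS S T s)
    (c : ZMod p × ZMod p) : rcomp (e c) u = u ↔ rcomp (e c) s = s := by
  obtain ⟨a, b, rfl⟩ := (mem_cls_iff hS hT he hs).mp hu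
  have hform : rcomp (e c) (rcomp (rcomp (e a) s) (e b)) =
      rcomp (rcomp (e a) (rcomp (e c) s)) (e b) := by
    simp only [← rcomp_assoc, rcomp_e hS hT he]
    rw [add_comm c a]
  constructor
  · intro h
    rw [hform] at h
    have h2 := congrArg (fun Z => rcomp Z (conv (e b))) h
    simp only [thin_cancel_right hS (e_mem_S hS hT he b) (e_thin hS hT he b)] at h2
    have h3 := congrArg (fun Z => rcomp (conv (e a)) Z) h2
    simp only [thin_cancel_left hS (e_mem_S hS hT he a) (e_thin hS hT he a)] at h3
    exact h3
  · intro h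
    rw [hform, h]

lemma stab_eq_ker (hp : p.Prime) {q : ℕ} (hq : q.Prime)
    (φ : AddChar (ZMod p × ZMod p) ℂ) (hφ : φ ≠ 1) {s : Set (X × X)} (hs : s ∈ S)
    (hsT : s ∉ T)
    (hquot : Nat.card {C : Set (Set (X × X)) | ∃ u ∈ S, C = cprod S (cprod S T {u}) T} = q)
    (hsub : ∀ c, rcomp (e c) s = s → φ c = 1) :
    ∀ a, rcomp (e a) s = s ↔ φ a = 1 := by
  classical
  have hmul : ∀ a b : ZMod p × ZMod p, φ (a + b) = φ a * φ b :=
    fun a b => AddChar.map_add_eq_mul φ a b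
  let Ksub : AddSubgroup (ZMod p × ZMod p) :=
    { carrier := {a | φ a = 1}
      add_mem' := by
        intro a b ha hb
        simp only [Set.mem_setOf_eq] at *
        rw [hmul, ha, hb, mul_one]
      zero_mem' := AddChar.map_zero_eq_one φ
      neg_mem' := by
        intro a ha
        simp only [Set.mem_setOf_eq] at *
        have h1 : φ a * φ (-a) = 1 := by rw [← hmul, add_neg_cancel, AddChar.map_zero_eq_one]
        rw [ha, one_mul] at h1
        exact h1 }
  let Asub : AddSubgroup (ZMod p × ZMod p) :=
    { carrier := {a | rcomp (e a) s = s}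
      add_mem' := by
        intro a b ha hb
        simp only [Set.mem_setOf_eq] at *
        rw [← rcomp_e hS hT he, rcomp_assoc, hb, ha]
      zero_mem' := by
        simp only [Set.mem_setOf_eq]
        rw [he.2.2.2.1, diag_rcomp]
      neg_mem' := by
        intro a ha
        simp only [Set.mem_setOf_eq] at *
        conv_lhs => rw [← ha]
        rw [← rcomp_assoc, rcomp_e hS hT he, neg_add_cancel, he.2.2.2.1, diag_rcomp] }
  have hle : Asub ≤ Ksub := fun a ha => hsub a ha
  have hcardG : Nat.card (ZMod p × ZMod p) = p ^ 2 := by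
    rw [Nat.card_eq_fintype_card, Fintype.card_prod, ZMod.card, sq]
  have hKdvd : Nat.card Ksub ∣ p ^ 2 := hcardG ▸ AddSubgroup.card_addSubgroup_dvd_card Ksub
  have hAdvd : Nat.card Asub ∣ p ^ 2 := hcardG ▸ AddSubgroup.card_addSubgroup_dvd_card Asub
  have hKne : Ksub ≠ ⊤ := by
    intro h
    apply hφ
    apply DFunLike.ext
    intro a
    have hmem : a ∈ Ksub := h ▸ AddSubgroup.mem_top a
    have : φ a = 1 := hmem
    rw [this, AddChar.one_apply]
  have hKcard_ne : Nat.card Ksub ≠ p ^ 2 := by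
    intro h
    exact hKne (AddSubgroup.eq_top_of_card_eq Ksub (h.trans hcardG.symm))
  have hKle : Nat.card Ksub ≤ p := by
    obtain ⟨i, hi, hKi⟩ := (Nat.dvd_prime_pow hp).mp hKdvd
    interval_cases i
    · rw [hKi]; simp [hp.one_lt.le]
    · rw [hKi, pow_one]
    · exact absurd hKi hKcard_ne
  have hAne : Nat.card Asub ≠ 1 := by
    obtain ⟨c, hc0, hcs⟩ := stab_nontriv hS hT he hq hp hs hsT hquot
    intro h
    have hbot : Asub = ⊥ := AddSubgroup.eq_bot_of_card_eq Asub h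
    have : c ∈ Asub := hcs
    rw [hbot] at this
    exact hc0 this
  have hAge : p ≤ Nat.card Asub := by
    obtain ⟨i, hi, hAi⟩ := (Nat.dvd_prime_pow hp).mp hAdvd
    interval_cases i
    · rw [pow_zero] at hAi
      exact absurd hAi hAne
    · rw [hAi, pow_one]
    · rw [hAi, sq]
      exact Nat.le_mul_of_pos_left p hp.pos
  have hAK : Asub = Ksub := by
    apply AddSubgroup.eq_of_le_of_card_ge hle
    calc Nat.card Ksub ≤ p := hKle
      _ ≤ Nat.card Asub := hAge
  intro a
  constructor
  · exact hsub a
  · intro ha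
    have : a ∈ Ksub := ha
    rw [← hAK] at this
    exact this

end Final

/-- for nonprincipal `φ ∈ Irr(T)` and `s ∈ S \\ T`:
`L(s) = Ker φ` ⟺ `e_φ σ_s ≠ 0` ⟺ `ℂe_φ ⊗ ℂ(TsT) ≠ 0`. -/
theorem stmt9 {X : Type*} [Fintype X] [DecidableEq X] (p q : ℕ) [NeZero p]
    (hp : p.Prime) (hq : q.Prime)
    (S T : Set (Set (X × X))) (hS : IsScheme S) (hT : thinResidue S = T)
    (e : ZMod p × ZMod p → Set (X × X)) (he : IsoElemAb S T p e)
    (hquot : Nat.card {C : Set (Set (X × X)) | ∃ s ∈ S, C = cprod S (cprod S T {s}) T} = q)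
    (φ : AddChar (ZMod p × ZMod p) ℂ) (hφ : φ ≠ 1)
    (s : Set (X × X)) (hs : s ∈ S \ T) :
    ((∀ a, (cprod S {e a} {s} = {s} ↔ φ a = 1)) ↔ eIdem p φ e * adjMat s ≠ 0) ∧
    (eIdem p φ e * adjMat s ≠ 0 ↔
      ∃ u ∈ cprod S (cprod S T {s}) T, eIdem p φ e * adjMat u ≠ 0) := by
  obtain ⟨hsS, hsT⟩ := hs
  have hcls : ∀ a, (cprod S {e a} {s} = {s} ↔ rcomp (e a) s = s) := by
    intro a
    rw [cprod_thin_singleton hS hT he (e_mem_S hS hT he a) (e_thin hS hT he a) hsS]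
    exact Set.singleton_eq_singleton_iff
  constructor
  · constructor
    · intro hiff
      rw [master hS hT he hsS φ]
      intro c hc
      exact (hiff c).mp ((hcls c).mpr hc)
    · intro hne a
      rw [hcls a]
      exact stab_eq_ker hS hT he hp hq φ hφ hsS hsT hquot
        ((master hS hT he hsS φ).mp hne) a
  · constructor
    · intro hne
      exact ⟨s, self_mem_cls hS hT he hsS, hne⟩
    · rintro ⟨u, hu, hune⟩
      rw [master hS hT he hsS φ]
      have huS : u ∈ S := cls_sub_S hu
      have hm := (master hS hT he huS φ).mp hune
      intro c hc
      exact hm c ((stab_transfer hS hT he hsS hu c).mpr hc)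
end
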